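/- arXiv:1411.3880 — 2 statements merged into one kernel-verified Lean document; each statement's English description precedes it below -/
import Mathlib

section
/- Let G be a POMDP with absorbing target set T, positive costs, and Supp(λ0) ∈ BeliefWin(G,T). For every k ∈ ℕ, the strategy σ*_k satisfies E^{σ*_k}_{λ0}[Total] ≤ E^{σ*_k}_{λ0}[Total_k] + α_k · U_Allow, where α_k = P^{σ*_k}_{λ0}(T is not reached within the first k steps). -/
open Finset Filter
open scoped Classical

set_option linter.unusedSectionVars false

noncomputable section

/-- A finite history of a play: the current state together with the
(reversed) list of past steps; an entry `(a, s')` means: the action `a`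
was taken from the state `s'` (leading to the next recorded state). -/
abbrev Hist (S A : Type) := S × List (A × S)

/-- The observation–action sequence of a history. -/
def obsHist {S A Z : Type} (O : S → Z) (h : Hist S A) : Z × List (A × Z) :=
  (O h.1, h.2.map fun p => (p.1, O p.2))

/-- An observation-based (randomized, history-dependent) strategy. -/
structure Strategy (S A Z : Type) [Fintype A] (O : S → Z) where
  act : Hist S A → A → ℝ
  act_nonneg : ∀ h a, 0 ≤ act h a
  act_sum : ∀ h, ∑ a, act h a = 1
  obsBased : ∀ h h', obsHist O h = obsHist O h' → act h = act h'

/-- A partially observable Markov decision process. -/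
structure POMDP (S A Z : Type) [Fintype S] [Fintype A] [Fintype Z] where
  δ : S → A → S → ℝ
  δ_nonneg : ∀ s a s', 0 ≤ δ s a s'
  δ_sum : ∀ s a, ∑ s', δ s a s' = 1
  obs : S → Z
  init : S → ℝ
  init_nonneg : ∀ s, 0 ≤ init s
  init_sum : ∑ s, init s = 1
  init_obs : ∀ s s', 0 < init s → 0 < init s' → obs s = obs s'

namespace POMDP

variable {S A Z : Type} [Fintype S] [Fintype A] [Fintype Z]

/-- The target set `T` consists of absorbing states. -/
def Absorbing (M : POMDP S A Z) (T : Set S) : Prop :=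
  ∀ t ∈ T, ∀ a, M.δ t a t = 1

/-- Probability that after `n` steps the process has followed exactly the
history `(s, l)` (so `l` has length `n`). -/
def hprobAux (M : POMDP S A Z) (σ : Strategy S A Z M.obs) : ℕ → S → List (A × S) → ℝ
  | 0, s, l => if l = [] then M.init s else 0
  | n+1, s, l =>
    match l with
    | [] => 0
    | (a, s') :: rest => hprobAux M σ n s' rest * σ.act (s', rest) a * M.δ s' a s

def hprob (M : POMDP S A Z) (σ : Strategy S A Z M.obs) (n : ℕ) (h : Hist S A) : ℝ :=
  M.hprobAux σ n h.1 h.2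

/-- The state sequence of a history visits the set `T`. -/
def visitsT (T : Set S) (h : Hist S A) : Prop :=
  h.1 ∈ T ∨ ∃ p ∈ h.2, p.2 ∈ T

/-- Probability of reaching `T` within the first `n` steps. -/
def probReachBy (M : POMDP S A Z) (T : Set S) (σ : Strategy S A Z M.obs) (n : ℕ) : ℝ :=
  ∑' h : Hist S A, if visitsT T h then M.hprob σ n h else 0

/-- Probability of the reachability objective `Reach(T)`. -/
def probReach (M : POMDP S A Z) (T : Set S) (σ : Strategy S A Z M.obs) : ℝ :=
  ⨆ n, M.probReachBy T σ n

/-- The strategy `σ` is almost-sure winning for `Reach(T)`. -/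
def AlmostSure (M : POMDP S A Z) (T : Set S) (σ : Strategy S A Z M.obs) : Prop :=
  M.probReach T σ = 1

/-- Accumulated cost along a history. -/
def totalCostAux (c : S → A → ℝ) : S → List (A × S) → ℝ
  | _, [] => 0
  | _, (a, s') :: rest => totalCostAux c s' rest + c s' a

def totalCostH (c : S → A → ℝ) (h : Hist S A) : ℝ := totalCostAux c h.1 h.2

/-- Expected total cost of the first `n` steps, i.e. `E[Total_{n-1}]`
(in particular `E[Total_k] = expTotalSteps M c σ (k+1)`). -/
def expTotalSteps (M : POMDP S A Z) (c : S → A → ℝ) (σ : Strategy S A Z M.obs) (n : ℕ) : ℝ :=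
  ∑' h : Hist S A, M.hprob σ n h * totalCostH c h

/-- The value `Val(σ) = E[Total]` of a strategy, as the limit (limsup) of the
expected costs of the finite prefixes. -/
def Val (M : POMDP S A Z) (c : S → A → ℝ) (σ : Strategy S A Z M.obs) : EReal :=
  Filter.limsup (fun n => ((M.expTotalSteps c σ n : ℝ) : EReal)) Filter.atTop

/-- `optCost`: the infimum of the values of almost-sure winning strategies. -/
def optCost (M : POMDP S A Z) (T : Set S) (c : S → A → ℝ) : EReal :=
  ⨅ σ : {σ : Strategy S A Z M.obs // M.AlmostSure T σ}, M.Val c σ.1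

end POMDP

namespace POMDP

variable {S A Z : Type} [Fintype S] [Fintype A] [Fintype Z]

/-- Uniform distribution over a finite set of states. -/
def uniformS (U : Finset S) : S → ℝ := fun s => if s ∈ U then ((U.card : ℝ))⁻¹ else 0

lemma uniformS_nonneg (U : Finset S) (s : S) : 0 ≤ uniformS U s := by
  unfold uniformS; split_ifs <;> positivity

lemma uniformS_sum (U : Finset S) (h : U.Nonempty) : ∑ s, uniformS U s = 1 := by
  unfold uniformS
  rw [Finset.sum_ite_mem, Finset.univ_inter, Finset.sum_const, nsmul_eq_mul,
    mul_inv_cancel₀]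
  exact_mod_cast Finset.card_ne_zero.mpr h

lemma uniformS_mem {U : Finset S} {s : S} (h : 0 < uniformS U s) : s ∈ U := by
  by_contra hc; simp [uniformS, hc] at h

/-- The POMDP `M` with the initial distribution replaced by the uniform
distribution over `U`. -/
def reinit (M : POMDP S A Z) (U : Finset S) (hU : U.Nonempty)
    (hobs : ∀ s ∈ U, ∀ s' ∈ U, M.obs s = M.obs s') : POMDP S A Z :=
  { M with
    init := uniformS U
    init_nonneg := uniformS_nonneg U
    init_sum := uniformS_sum U hU
    init_obs := fun s s' hs hs' => hobs s (uniformS_mem hs) s' (uniformS_mem hs') }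

/-- The POMDP `M` with the initial distribution replaced by the Dirac
distribution at `s0`. -/
def resetDirac (M : POMDP S A Z) (s0 : S) : POMDP S A Z :=
  { M with
    init := fun s => if s = s0 then 1 else 0
    init_nonneg := by intro s; split_ifs <;> norm_num
    init_sum := by simp
    init_obs := by
      intro s s' hs hs'
      have h1 : s = s0 := by by_contra hc; simp [hc] at hs
      have h2 : s' = s0 := by by_contra hc; simp [hc] at hs'
      rw [h1, h2] }

/-- The set of almost-sure winning belief-supports: those `U` from which
(with the uniform initial distribution on `U`) some strategy wins
`Reach(T)` almost-surely. -/
def BeliefWin (M : POMDP S A Z) (T : Set S) : Set (Finset S) :=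
  {U | ∃ (hU : U.Nonempty) (hobs : ∀ s ∈ U, ∀ s' ∈ U, M.obs s = M.obs s'),
      ∃ σ : Strategy S A Z M.obs, (M.reinit U hU hobs).AlmostSure T σ}

/-- Belief-support update. -/
def updateF (M : POMDP S A Z) (U : Finset S) (z : Z) (a : A) : Finset S :=
  univ.filter (fun t => M.obs t = z ∧ ∃ s ∈ U, 0 < M.δ s a t)

/-- Allowed actions at a belief-support `U`. -/
def AllowSet (M : POMDP S A Z) (T : Set S) (U : Finset S) : Set A :=
  {a | ∀ z, (M.updateF U z a).Nonempty → M.updateF U z a ∈ M.BeliefWin T}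

def allowFin (M : POMDP S A Z) (T : Set S) (U : Finset S) : Finset A :=
  univ.filter (· ∈ M.AllowSet T U)

/-- The support of the initial distribution, as a belief-support. -/
def suppInitF (M : POMDP S A Z) : Finset S := univ.filter (fun s => 0 < M.init s)

/-- Belief-support after a history, starting from the initial belief-support `U0`. -/
def beliefOfFromAux (M : POMDP S A Z) (U0 : Finset S) : S → List (A × S) → Finset S
  | s, [] => U0.filter (fun t => M.obs t = M.obs s)
  | s, (a, s') :: rest => M.updateF (M.beliefOfFromAux U0 s' rest) (M.obs s) a

def beliefOfFrom (M : POMDP S A Z) (U0 : Finset S) (h : Hist S A) : Finset S :=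
  M.beliefOfFromAux U0 h.1 h.2

/-- Belief-support after a history (with the initial belief-support being
the support of the initial distribution). -/
def beliefOf (M : POMDP S A Z) (h : Hist S A) : Finset S :=
  M.beliefOfFrom M.suppInitF h

lemma beliefOfFromAux_obs (M : POMDP S A Z) (U0 : Finset S) :
    ∀ (l l' : List (A × S)) (s s' : S),
      l.map (fun p => (p.1, M.obs p.2)) = l'.map (fun p => (p.1, M.obs p.2)) →
      M.obs s = M.obs s' →
      M.beliefOfFromAux U0 s l = M.beliefOfFromAux U0 s' l'
  | [], [], s, s', _, hs => by simp [beliefOfFromAux, hs]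
  | [], (_ :: _), _, _, hmap, _ => by simp at hmap
  | (_ :: _), [], _, _, hmap, _ => by simp at hmap
  | ((a, t) :: r), ((a', t') :: r'), s, s', hmap, hs => by
      simp only [List.map_cons, List.cons.injEq, Prod.mk.injEq] at hmap
      obtain ⟨⟨ha, ht⟩, hr⟩ := hmap
      simp only [beliefOfFromAux]
      rw [M.beliefOfFromAux_obs U0 r r' t t' hr ht, hs, ha]

/-- Uniform distribution over a finite set of actions. -/
def uniformA (F : Finset A) : A → ℝ := fun a => if a ∈ F then ((F.card : ℝ))⁻¹ else 0

lemma uniformA_nonneg (F : Finset A) (a : A) : 0 ≤ uniformA F a := by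
  unfold uniformA; split_ifs <;> positivity

lemma uniformA_sum (F : Finset A) (h : F.Nonempty) : ∑ a, uniformA F a = 1 := by
  unfold uniformA
  rw [Finset.sum_ite_mem, Finset.univ_inter, Finset.sum_const, nsmul_eq_mul,
    mul_inv_cancel₀]
  exact_mod_cast Finset.card_ne_zero.mpr h

/-- The action distribution of `σ_Allow` (with initial belief-support `U0`):
uniform over the allowed actions of the current belief-support (with a
uniform fallback where no action is allowed). -/
def actAllowFrom (M : POMDP S A Z) (T : Set S) (U0 : Finset S) (h : Hist S A) : A → ℝ :=
  if (M.allowFin T (M.beliefOfFrom U0 h)).Nonempty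
  then uniformA (M.allowFin T (M.beliefOfFrom U0 h))
  else uniformA (univ : Finset A)

/-- The belief-support based strategy `σ_Allow` (tracking beliefs from `U0`). -/
def stratAllowFrom [Nonempty A] (M : POMDP S A Z) (T : Set S) (U0 : Finset S) :
    Strategy S A Z M.obs where
  act := M.actAllowFrom T U0
  act_nonneg := by
    intro h a; unfold actAllowFrom; split_ifs <;> exact uniformA_nonneg _ _
  act_sum := by
    intro h; unfold actAllowFrom; split_ifs with hne
    · exact uniformA_sum _ hne
    · exact uniformA_sum _ univ_nonempty
  obsBased := by
    intro h h' hobs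
    have : M.beliefOfFrom U0 h = M.beliefOfFrom U0 h' := by
      unfold beliefOfFrom
      exact M.beliefOfFromAux_obs U0 h.2 h'.2 h.1 h'.1
        (congrArg Prod.snd hobs) (congrArg Prod.fst hobs)
    unfold actAllowFrom
    rw [this]

/-- `σ_Allow`. -/
def stratAllow [Nonempty A] (M : POMDP S A Z) (T : Set S) : Strategy S A Z M.obs :=
  M.stratAllowFrom T M.suppInitF

/-- `T_Allow(s, U)`: the expected total cost of `σ_Allow` started in the
state `s` with the initial belief-support `U`. -/
def TAllow [Nonempty A] (M : POMDP S A Z) (T : Set S) (c : S → A → ℝ) (s : S) (U : Finset S) :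
    EReal :=
  (M.resetDirac s).Val c (M.stratAllowFrom T U)

/-- `U_Allow`: the maximal expected total cost of `σ_Allow` over all
almost-sure winning belief-supports `U` and states `s ∈ U`. -/
def UAllow [Nonempty A] (M : POMDP S A Z) (T : Set S) (c : S → A → ℝ) : EReal :=
  ⨆ U ∈ M.BeliefWin T, ⨆ s ∈ U, M.TAllow T c s U

end POMDP

namespace POMDP

variable {S A Z : Type} [Fintype S] [Fintype A] [Fintype Z]

/-- Normalization of a nonnegative function into a distribution. -/
def normalize (f : S → ℝ) : S → ℝ := fun t => f t / ∑ u, f u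

/-- Support of an information state. -/
def suppF (b : S → ℝ) : Finset S := univ.filter (fun s => b s ≠ 0)

/-- The information state (posterior distribution) after a history. -/
def infoOfAux (M : POMDP S A Z) : S → List (A × S) → S → ℝ
  | s, [] => normalize (fun t => if M.obs t = M.obs s then M.init t else 0)
  | s, (a, s') :: rest =>
      normalize (fun t => if M.obs t = M.obs s then ∑ u, M.infoOfAux s' rest u * M.δ u a t else 0)

def infoOf (M : POMDP S A Z) (h : Hist S A) : S → ℝ := M.infoOfAux h.1 h.2

lemma infoOfAux_obs (M : POMDP S A Z) :
    ∀ (l l' : List (A × S)) (s s' : S),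
      l.map (fun p => (p.1, M.obs p.2)) = l'.map (fun p => (p.1, M.obs p.2)) →
      M.obs s = M.obs s' →
      M.infoOfAux s l = M.infoOfAux s' l'
  | [], [], s, s', _, hs => by simp [infoOfAux, hs]
  | [], (_ :: _), _, _, hmap, _ => by simp at hmap
  | (_ :: _), [], _, _, hmap, _ => by simp at hmap
  | ((a, t) :: r), ((a', t') :: r'), s, s', hmap, hs => by
      simp only [List.map_cons, List.cons.injEq, Prod.mk.injEq] at hmap
      obtain ⟨⟨ha, ht⟩, hr⟩ := hmap
      simp only [infoOfAux]
      rw [M.infoOfAux_obs r r' t t' hr ht, hs, ha]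

/-- Expected one-step cost `c'(b,a)` at an information state. -/
def cinfo (c : S → A → ℝ) (b : S → ℝ) (a : A) : ℝ := ∑ s, b s * c s a

/-- Probability of observing `z` after playing `a` at information state `b`. -/
def obsProb (M : POMDP S A Z) (b : S → ℝ) (a : A) (z : Z) : ℝ :=
  ∑ t, if M.obs t = z then ∑ u, b u * M.δ u a t else 0

/-- Bayesian update of the information state `b` under action `a` and
observation `z`. -/
def postInfo (M : POMDP S A Z) (b : S → ℝ) (a : A) (z : Z) : S → ℝ :=
  normalize (fun t => if M.obs t = z then ∑ u, b u * M.δ u a t else 0)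

/-- The allowed-action-restricted finite-horizon value iteration `V*_n`. -/
def Vstar (M : POMDP S A Z) (T : Set S) (c : S → A → ℝ) : ℕ → (S → ℝ) → ℝ
  | 0, _ => 0
  | n+1, b =>
    if h : (M.allowFin T (suppF b)).Nonempty then
      (M.allowFin T (suppF b)).inf' h
        (fun a => cinfo c b a + ∑ z, M.obsProb b a z * M.Vstar T c n (M.postInfo b a z))
    else 0

/-- An allowed action attaining the minimum of the value iteration with
`n` steps remaining at information state `b`. -/
def foAct [Nonempty A] (M : POMDP S A Z) (T : Set S) (c : S → A → ℝ) : ℕ → (S → ℝ) → A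
  | 0, _ => Classical.arbitrary A
  | n+1, b =>
    if h : (M.allowFin T (suppF b)).Nonempty then
      Classical.choose (Finset.exists_mem_eq_inf' h
        (fun a => cinfo c b a + ∑ z, M.obsProb b a z * M.Vstar T c n (M.postInfo b a z)))
    else Classical.arbitrary A

/-- The action distribution of the finite-horizon optimal strategy `σFO_k`. -/
def actFO [Nonempty A] (M : POMDP S A Z) (T : Set S) (c : S → A → ℝ) (k : ℕ) (h : Hist S A) :
    A → ℝ :=
  fun a => if a = M.foAct T c (k - h.2.length) (M.infoOf h) then 1 else 0

lemma length_eq_of_obsHist {h h' : Hist S A} {O : S → Z} (he : obsHist O h = obsHist O h') :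
    h.2.length = h'.2.length := by
  have := congrArg (fun x => (Prod.snd x).length) he
  simpa [obsHist] using this

/-- The (allowed-action-restricted) finite-horizon optimal strategy `σFO_k`. -/
def stratFO [Nonempty A] (M : POMDP S A Z) (T : Set S) (c : S → A → ℝ) (k : ℕ) :
    Strategy S A Z M.obs where
  act := M.actFO T c k
  act_nonneg := by intro h a; unfold actFO; split_ifs <;> norm_num
  act_sum := by intro h; unfold actFO; simp
  obsBased := by
    intro h h' hobs
    have hlen : h.2.length = h'.2.length := length_eq_of_obsHist hobs
    have hinfo : M.infoOf h = M.infoOf h' := by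
      unfold infoOf
      exact M.infoOfAux_obs h.2 h'.2 h.1 h'.1
        (congrArg Prod.snd hobs) (congrArg Prod.fst hobs)
    unfold actFO
    rw [hlen, hinfo]

/-- The strategy `σ*_k`: play `σFO_k` for the first `k` steps, then `σ_Allow`. -/
def stratStar [Nonempty A] (M : POMDP S A Z) (T : Set S) (c : S → A → ℝ) (k : ℕ) :
    Strategy S A Z M.obs where
  act := fun h =>
    if h.2.length < k then M.actFO T c k h else M.actAllowFrom T M.suppInitF h
  act_nonneg := by
    intro h a; split_ifs with hl
    · exact (M.stratFO T c k).act_nonneg h a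
    · exact (M.stratAllowFrom T M.suppInitF).act_nonneg h a
  act_sum := by
    intro h; split_ifs with hl
    · exact (M.stratFO T c k).act_sum h
    · exact (M.stratAllowFrom T M.suppInitF).act_sum h
  obsBased := by
    intro h h' hobs
    have hlen : h.2.length = h'.2.length := length_eq_of_obsHist hobs
    rw [hlen]
    split_ifs with hl
    · exact (M.stratFO T c k).obsBased h h' hobs
    · exact (M.stratAllowFrom T M.suppInitF).obsBased h h' hobs

/-- `α_k`: the probability that `T` is not reached within the first `k`
steps when playing `σ*_k`. -/
def alphaK [Nonempty A] (M : POMDP S A Z) (T : Set S) (c : S → A → ℝ) (k : ℕ) : ℝ :=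
  1 - M.probReachBy T (M.stratStar T c k) k

end POMDP

namespace PF

open Finset

variable {S A Z : Type} [Fintype S] [Fintype A] [Fintype Z]

def diracF (s₀ : S) : S → ℝ := fun s => if s = s₀ then 1 else 0

lemma diracF_nonneg (s₀ s : S) : 0 ≤ diracF s₀ s := by
  unfold diracF; split_ifs <;> norm_num

lemma diracF_sum (s₀ : S) : ∑ s, diracF s₀ s = 1 := by simp [diracF]

/-- raw history probability -/
def hprobGen (d : S → A → S → ℝ) (ini : S → ℝ) (π : Hist S A → A → ℝ) :
    ℕ → S → List (A × S) → ℝ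
  | 0, s, l => if l = [] then ini s else 0
  | n+1, s, l =>
    match l with
    | [] => 0
    | (a, s') :: rest => hprobGen d ini π n s' rest * π (s', rest) a * d s' a s

variable {d : S → A → S → ℝ} {ini : S → ℝ} {π : Hist S A → A → ℝ}

lemma hprobGen_nonneg (hd : ∀ s a s', 0 ≤ d s a s') (hini : ∀ s, 0 ≤ ini s)
    (hπ : ∀ h a, 0 ≤ π h a) : ∀ (n : ℕ) (s : S) (l : List (A × S)),
    0 ≤ hprobGen d ini π n s l
  | 0, s, l => by unfold hprobGen; split_ifs <;> simp [hini]
  | n+1, s, [] => le_of_eq rfl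
  | n+1, s, (a, s') :: rest => by
      have := hprobGen_nonneg hd hini hπ n s' rest
      unfold hprobGen
      have := mul_nonneg (mul_nonneg this (hπ (s', rest) a)) (hd s' a s)
      simpa using this

lemma hprobGen_len : ∀ (n : ℕ) (s : S) (l : List (A × S)),
    hprobGen d ini π n s l ≠ 0 → l.length = n
  | 0, s, l => by
      unfold hprobGen; split_ifs with h <;> simp [h]
  | n+1, s, [] => by simp [hprobGen]
  | n+1, s, (a, s') :: rest => by
      intro h
      unfold hprobGen at h
      have : hprobGen d ini π n s' rest ≠ 0 := by
        intro h0; simp [h0] at h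
      simp [hprobGen_len n s' rest this]

/-- Finset of histories of length `n`. -/
def histLen : ℕ → Finset (Hist S A)
  | 0 => univ.image (fun s => ((s, []) : Hist S A))
  | n+1 => ((univ : Finset (A × S)) ×ˢ histLen n).image
      (fun p => ((p.1.2, (p.1.1, p.2.1) :: p.2.2) : Hist S A))

lemma mem_histLen : ∀ (n : ℕ) (x : Hist S A), x ∈ histLen n ↔ x.2.length = n
  | 0, x => by
      constructor
      · intro hx
        simp only [histLen, mem_image] at hx
        obtain ⟨s, _, rfl⟩ := hx; rfl
      · intro hx
        obtain ⟨s, l⟩ := x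
        have : l = [] := List.length_eq_zero_iff.1 hx
        subst this
        simp [histLen]
  | n+1, x => by
      constructor
      · intro hx
        simp only [histLen, mem_image] at hx
        obtain ⟨p, hp, rfl⟩ := hx
        have := (mem_histLen n p.2).1 (Finset.mem_product.1 hp).2
        simp [this]
      · intro hx
        obtain ⟨s, l⟩ := x
        match l with
        | [] => simp at hx
        | (a, s') :: rest =>
          simp only [histLen, mem_image]
          refine ⟨((a, s), (s', rest)), ?_, rfl⟩
          refine Finset.mem_product.2 ⟨mem_univ _, ?_⟩
          exact (mem_histLen n (s', rest)).2 (by simpa using hx)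

lemma sum_histLen_succ (n : ℕ) (F : Hist S A → ℝ) :
    ∑ x ∈ histLen (n+1), F x
      = ∑ y ∈ histLen n, ∑ a : A, ∑ t : S, F (t, (a, y.1) :: y.2) := by
  have hinj : Set.InjOn (fun p : (A × S) × Hist S A =>
      ((p.1.2, (p.1.1, p.2.1) :: p.2.2) : Hist S A))
      ((((univ : Finset (A × S)) ×ˢ (histLen n : Finset (Hist S A))) : Finset ((A × S) × Hist S A)) : Set ((A × S) × Hist S A)) := by
    rintro ⟨⟨a, t⟩, ⟨s, l⟩⟩ _ ⟨⟨a', t'⟩, ⟨s', l'⟩⟩ _ h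
    simp only [Prod.mk.injEq, List.cons.injEq] at h
    obtain ⟨h1, ⟨h2, h3⟩, h4⟩ := h
    simp [h1, h2, h3, h4, Prod.ext_iff]
  rw [show histLen (n+1) = ((univ : Finset (A × S)) ×ˢ histLen n).image _ from rfl,
    Finset.sum_image (fun x hx y hy h => hinj hx hy h)]
  rw [Finset.sum_product]
  rw [Finset.sum_comm]
  congr 1
  ext y
  rw [← Finset.sum_product']
  rfl

end PF
namespace PF

open Finset

variable {S A Z : Type} [Fintype S] [Fintype A] [Fintype Z]
variable {d : S → A → S → ℝ} {ini : S → ℝ} {π : Hist S A → A → ℝ}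

lemma hprobGen_zero_notmem {n : ℕ} {x : Hist S A} (hx : x ∉ histLen n) :
    hprobGen d ini π n x.1 x.2 = 0 := by
  by_contra h
  exact hx ((mem_histLen n x).2 (hprobGen_len n x.1 x.2 h))

lemma hprobGen_succ_cons (n : ℕ) (t s' : S) (a : A) (rest : List (A × S)) :
    hprobGen d ini π (n+1) t ((a, s') :: rest)
      = hprobGen d ini π n s' rest * π (s', rest) a * d s' a t := rfl

lemma sum_histLen_zero (F : Hist S A → ℝ) :
    ∑ x ∈ histLen 0, F x = ∑ s : S, F (s, []) := by
  rw [show (histLen 0 : Finset (Hist S A)) = univ.image (fun s => (s, [])) from rfl,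
    Finset.sum_image (by intro a _ b _ h; simpa using h)]

/-- total mass -/
lemma sum_hprobGen (hd : ∀ s a, ∑ t, d s a t = 1) (hπ : ∀ h, ∑ a, π h a = 1) :
    ∀ n : ℕ, ∑ x ∈ histLen n, hprobGen d ini π n x.1 x.2 = ∑ s, ini s := by
  intro n
  induction n with
  | zero => rw [sum_histLen_zero]; simp [hprobGen]
  | succ n ih =>
    rw [sum_histLen_succ (n := n) (F := fun x => hprobGen d ini π (n+1) x.1 x.2)]
    rw [← ih]
    refine Finset.sum_congr rfl (fun y _ => ?_)
    simp only [hprobGen_succ_cons, mul_assoc, ← Finset.mul_sum]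
    simp only [hd y.1, mul_one]
    rw [hπ (y.1, y.2), mul_one]

def shiftPi (π : Hist S A → A → ℝ) (l₀ : List (A × S)) : Hist S A → A → ℝ :=
  fun q a => π (q.1, q.2 ++ l₀) a

/-- Decomposition of a sum over histories of length `k + j` into a prefix of
length `k` and a continuation of length `j`. -/
lemma dec (k : ℕ) : ∀ (j : ℕ) (C : Hist S A → ℝ),
    ∑ x ∈ histLen (k+j), hprobGen d ini π (k+j) x.1 x.2 * C x
      = ∑ g ∈ histLen k, hprobGen d ini π k g.1 g.2 *
          ∑ p ∈ histLen j,
            hprobGen d (diracF g.1) (shiftPi π g.2) j p.1 p.2 * C (p.1, p.2 ++ g.2) := by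
  intro j
  induction j with
  | zero =>
    intro C
    refine Finset.sum_congr rfl (fun g _ => ?_)
    rw [sum_histLen_zero (F := fun p => hprobGen d (diracF g.1) (shiftPi π g.2) 0 p.1 p.2
      * C (p.1, p.2 ++ g.2))]
    simp only [hprobGen, diracF, if_true, List.nil_append]
    simp [ite_mul]
  | succ j ih =>
    intro C
    show ∑ x ∈ histLen (k+j+1), hprobGen d ini π (k+j+1) x.1 x.2 * C x
      = ∑ g ∈ histLen k, hprobGen d ini π k g.1 g.2 *
          ∑ p ∈ histLen (j+1),
            hprobGen d (diracF g.1) (shiftPi π g.2) (j+1) p.1 p.2 * C (p.1, p.2 ++ g.2)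
    have LHS1 : ∑ x ∈ histLen (k+j+1), hprobGen d ini π (k+j+1) x.1 x.2 * C x
        = ∑ y ∈ histLen (k+j), hprobGen d ini π (k+j) y.1 y.2 *
            (∑ a : A, ∑ t : S, π (y.1, y.2) a * d y.1 a t * C (t, (a, y.1) :: y.2)) := by
      rw [sum_histLen_succ (n := k+j) (F := fun x => hprobGen d ini π (k+j+1) x.1 x.2 * C x)]
      refine Finset.sum_congr rfl (fun y _ => ?_)
      simp only [hprobGen_succ_cons, Finset.mul_sum]
      exact Finset.sum_congr rfl (fun a _ => Finset.sum_congr rfl (fun t _ => by ring))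
    rw [LHS1, ih]
    refine Finset.sum_congr rfl (fun g _ => ?_)
    congr 1
    rw [sum_histLen_succ (n := j) (F := fun p => hprobGen d (diracF g.1) (shiftPi π g.2) (j+1) p.1 p.2
      * C (p.1, p.2 ++ g.2))]
    refine Finset.sum_congr rfl (fun p _ => ?_)
    simp only [hprobGen_succ_cons, Finset.mul_sum, List.cons_append]
    refine Finset.sum_congr rfl (fun a _ => Finset.sum_congr rfl (fun t _ => ?_))
    simp only [shiftPi]
    ring

end PF
namespace PF

open Finset

variable {S A Z : Type} [Fintype S] [Fintype A] [Fintype Z]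
variable {d : S → A → S → ℝ} {ini : S → ℝ} {π : Hist S A → A → ℝ}
variable {c : S → A → ℝ} {T : Set S}

lemma totalCostAux_nonneg (hc : ∀ s a, 0 ≤ c s a) :
    ∀ (l : List (A × S)) (s : S), 0 ≤ POMDP.totalCostAux c s l
  | [], _ => le_of_eq rfl
  | (a, s') :: rest, s => by
      have := totalCostAux_nonneg hc rest s'
      have := add_nonneg this (hc s' a)
      simpa [POMDP.totalCostAux] using this

/-- cost splitting along a dirac-rooted continuation -/
lemma totalCostAux_append (s₀ : S) (l₀ : List (A × S)) :
    ∀ (m : List (A × S)) (t : S) (n : ℕ),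
      hprobGen d (diracF s₀) π n t m ≠ 0 →
      POMDP.totalCostAux c t (m ++ l₀)
        = POMDP.totalCostAux c s₀ l₀ + POMDP.totalCostAux c t m
  | [], t, n => by
      intro h
      have hn : n = 0 := by
        by_contra hn
        obtain ⟨n', rfl⟩ := Nat.exists_eq_succ_of_ne_zero hn
        simp [hprobGen] at h
      subst hn
      have ht : t = s₀ := by
        by_contra hts
        simp [hprobGen, diracF, hts] at h
      subst ht
      simp [POMDP.totalCostAux]
  | (a, u) :: r, t, n => by
      intro h
      have hn : n ≠ 0 := by
        intro hn; subst hn; simp [hprobGen] at h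
      obtain ⟨n', rfl⟩ := Nat.exists_eq_succ_of_ne_zero hn
      rw [hprobGen_succ_cons] at h
      have hr : hprobGen d (diracF s₀) π n' u r ≠ 0 := by
        intro h0; simp [h0] at h
      have ih := totalCostAux_append s₀ l₀ r u n' hr
      calc POMDP.totalCostAux c t ((a, u) :: r ++ l₀)
          = POMDP.totalCostAux c u (r ++ l₀) + c u a := rfl
        _ = (POMDP.totalCostAux c s₀ l₀ + POMDP.totalCostAux c u r) + c u a := by rw [ih]
        _ = POMDP.totalCostAux c s₀ l₀ + POMDP.totalCostAux c t ((a, u) :: r) := by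
              show _ = POMDP.totalCostAux c s₀ l₀ + (POMDP.totalCostAux c u r + c u a)
              ring

/-- From an absorbing state, positive transitions stay put. -/
lemma absorb_step (M : POMDP S A Z) (habs : M.Absorbing T) {t : S} (ht : t ∈ T) (a : A)
    {t' : S} (h : M.δ t a t' ≠ 0) : t' = t := by
  by_contra hne
  have hsum : ∑ s', M.δ t a s' = 1 := M.δ_sum t a
  have h1 : M.δ t a t = 1 := habs t ht a
  have : ∑ s' ∈ (univ.erase t), M.δ t a s' = 0 := by
    have := Finset.add_sum_erase univ (M.δ t a) (mem_univ t)
    rw [← hsum] at h1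
    linarith [h1, this]
  have hz : M.δ t a t' = 0 := by
    have hnn : ∀ s' ∈ univ.erase t, 0 ≤ M.δ t a s' := fun s' _ => M.δ_nonneg t a s'
    have := (Finset.sum_eq_zero_iff_of_nonneg hnn).1 this t' (by simp [hne])
    exact this
  exact h hz

/-- Once the dirac start is in `T`, every positive-probability continuation
stays in `T` and accumulates zero cost. -/
lemma dirac_in_T (M : POMDP S A Z) (habs : M.Absorbing T)
    (hc0 : ∀ t ∈ T, ∀ a, c t a = 0) {s₀ : S} (hs₀ : s₀ ∈ T) :
    ∀ (m : List (A × S)) (t : S) (n : ℕ),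
      hprobGen M.δ (diracF s₀) π n t m ≠ 0 →
      t ∈ T ∧ POMDP.totalCostAux c t m = 0
  | [], t, n => by
      intro h
      have ht : t = s₀ := by
        by_contra hts
        rcases n with _|n <;> simp [hprobGen, diracF, hts] at h
      subst ht
      exact ⟨hs₀, rfl⟩
  | (a, u) :: r, t, n => by
      intro h
      have hn : n ≠ 0 := by intro hn; subst hn; simp [hprobGen] at h
      obtain ⟨n', rfl⟩ := Nat.exists_eq_succ_of_ne_zero hn
      rw [hprobGen_succ_cons] at h
      have hr : hprobGen M.δ (diracF s₀) π n' u r ≠ 0 := by intro h0; simp [h0] at h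
      have hd : M.δ u a t ≠ 0 := by intro h0; simp [h0] at h
      obtain ⟨hu, hcu⟩ := dirac_in_T M habs hc0 hs₀ r u n' hr
      constructor
      · rw [absorb_step M habs hu a hd]; exact hu
      · show POMDP.totalCostAux c u r + c u a = 0
        rw [hcu, hc0 u hu a, add_zero]

/-- Visiting `T` in the past forces the current state into `T` (on support). -/
lemma visits_current (M : POMDP S A Z) (habs : M.Absorbing T) :
    ∀ (m : List (A × S)) (t : S) (n : ℕ),
      hprobGen M.δ ini π n t m ≠ 0 → (∃ p ∈ m, p.2 ∈ T) → t ∈ T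
  | [], t, n => by intro _ h; simp at h
  | (a, u) :: r, t, n => by
      intro h hex
      have hn : n ≠ 0 := by intro hn; subst hn; simp [hprobGen] at h
      obtain ⟨n', rfl⟩ := Nat.exists_eq_succ_of_ne_zero hn
      rw [hprobGen_succ_cons] at h
      have hr : hprobGen M.δ ini π n' u r ≠ 0 := by intro h0; simp [h0] at h
      have hd : M.δ u a t ≠ 0 := by intro h0; simp [h0] at h
      have hu : u ∈ T := by
        obtain ⟨p, hp, hpT⟩ := hex
        rcases List.mem_cons.1 hp with rfl | hp'
        · exact hpT
        · exact visits_current M habs r u n' hr ⟨p, hp', hpT⟩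
      rw [absorb_step M habs hu a hd]
      exact hu

lemma visitsT_iff_head (M : POMDP S A Z) (habs : M.Absorbing T)
    {n : ℕ} {x : Hist S A} (h : hprobGen M.δ ini π n x.1 x.2 ≠ 0) :
    POMDP.visitsT T x ↔ x.1 ∈ T := by
  constructor
  · rintro (h1 | h2)
    · exact h1
    · exact visits_current M habs x.2 x.1 n h h2
  · intro h1; exact Or.inl h1

end PF
namespace PF

open Finset

variable {S A Z : Type} [Fintype S] [Fintype A] [Fintype Z]
variable {d : S → A → S → ℝ} {ini : S → ℝ} {π : Hist S A → A → ℝ}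
variable {c : S → A → ℝ} {T : Set S}

/-- the state at the beginning of a history -/
def endSt : S → List (A × S) → S
  | t, [] => t
  | _, (_, s) :: r => endSt s r

lemma hprobGen_ini_factor : ∀ (n : ℕ) (t : S) (m : List (A × S)),
    hprobGen d ini π n t m = ini (endSt t m) * hprobGen d (fun _ => 1) π n t m
  | 0, t, [] => by simp [hprobGen, endSt]
  | 0, t, (a, s) :: r => by simp [hprobGen]
  | n+1, t, [] => by simp [hprobGen]
  | n+1, t, (a, s) :: r => by
      rw [hprobGen_succ_cons, hprobGen_succ_cons, hprobGen_ini_factor n s r]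
      show _ = ini (endSt s r) * _
      ring

lemma hprobGen_dirac_eq (s₀ : S) (n : ℕ) (t : S) (m : List (A × S)) :
    hprobGen d (diracF s₀) π n t m
      = (if endSt t m = s₀ then 1 else 0) * hprobGen d (fun _ => 1) π n t m := by
  rw [hprobGen_ini_factor n t m]; rfl

lemma hprobGen_eq_sum_dirac (n : ℕ) (t : S) (m : List (A × S)) :
    hprobGen d ini π n t m = ∑ s, ini s * hprobGen d (diracF s) π n t m := by
  have : ∀ s : S, ini s * hprobGen d (diracF s) π n t m
      = ini s * ((if endSt t m = s then 1 else 0) * hprobGen d (fun _ => 1) π n t m) := by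
    intro s; rw [hprobGen_dirac_eq]
  rw [Finset.sum_congr rfl (fun s _ => this s)]
  rw [hprobGen_ini_factor n t m]
  simp [mul_ite, ite_mul, Finset.sum_ite_eq]

lemma hprobGen_dirac_root {s₀ : S} {n : ℕ} {t : S} {m : List (A × S)}
    (h : hprobGen d (diracF s₀) π n t m ≠ 0) : endSt t m = s₀ := by
  by_contra hne
  rw [hprobGen_dirac_eq, if_neg hne, zero_mul] at h
  exact h rfl

/-- reach-by-`n` probability, raw form -/
def PR (d : S → A → S → ℝ) (ini : S → ℝ) (π : Hist S A → A → ℝ) (T : Set S) (n : ℕ) : ℝ :=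
  ∑ x ∈ histLen n, hprobGen d ini π n x.1 x.2 * (if POMDP.visitsT T x then 1 else 0)

lemma PR_nonneg (hd : ∀ s a s', 0 ≤ d s a s') (hini : ∀ s, 0 ≤ ini s)
    (hπ : ∀ h a, 0 ≤ π h a) (n : ℕ) : 0 ≤ PR d ini π T n := by
  refine Finset.sum_nonneg (fun x _ => mul_nonneg (hprobGen_nonneg hd hini hπ n x.1 x.2) ?_)
  split_ifs <;> norm_num

lemma PR_le_one (hd : ∀ s a s', 0 ≤ d s a s') (hd1 : ∀ s a, ∑ t, d s a t = 1)
    (hini : ∀ s, 0 ≤ ini s) (hini1 : ∑ s, ini s = 1)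
    (hπ : ∀ h a, 0 ≤ π h a) (hπ1 : ∀ h, ∑ a, π h a = 1) (n : ℕ) :
    PR d ini π T n ≤ 1 := by
  have : PR d ini π T n ≤ ∑ x ∈ histLen n, hprobGen d ini π n x.1 x.2 := by
    refine Finset.sum_le_sum (fun x _ => ?_)
    have h0 := hprobGen_nonneg hd hini hπ n x.1 x.2
    split_ifs <;> simp [h0]
  rw [sum_hprobGen hd1 hπ1 n, hini1] at this
  exact this

lemma PR_eq_sum_dirac (n : ℕ) :
    PR d ini π T n = ∑ s, ini s * PR d (diracF s) π T n := by
  unfold PR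
  have h1 : ∀ x ∈ histLen (S := S) (A := A) n,
      hprobGen d ini π n x.1 x.2 * (if POMDP.visitsT T x then 1 else 0)
        = ∑ s, ini s * (hprobGen d (diracF s) π n x.1 x.2 *
            (if POMDP.visitsT T x then 1 else 0)) := by
    intro x _
    rw [hprobGen_eq_sum_dirac, Finset.sum_mul]
    refine Finset.sum_congr rfl (fun s _ => by ring)
  rw [Finset.sum_congr rfl h1, Finset.sum_comm]
  refine Finset.sum_congr rfl (fun s _ => ?_)
  rw [Finset.mul_sum]

end PF
namespace PF

open Finset

variable {S A Z : Type} [Fintype S] [Fintype A] [Fintype Z]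
variable {d : S → A → S → ℝ} {ini : S → ℝ} {π : Hist S A → A → ℝ}
variable {c : S → A → ℝ} {T : Set S}

lemma visits_glue {s₀ : S} {l₀ : List (A × S)} (hvis : POMDP.visitsT T ((s₀, l₀) : Hist S A)) :
    ∀ (m : List (A × S)) (t : S) (n : ℕ),
      hprobGen d (diracF s₀) π n t m ≠ 0 → POMDP.visitsT T ((t, m ++ l₀) : Hist S A)
  | [], t, n => by
      intro h
      have : endSt t ([] : List (A × S)) = s₀ := hprobGen_dirac_root h
      have ht : t = s₀ := this
      subst ht
      simpa using hvis
  | (a, u) :: r, t, n => by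
      intro h
      have hn : n ≠ 0 := by intro hn; subst hn; simp [hprobGen] at h
      obtain ⟨n', rfl⟩ := Nat.exists_eq_succ_of_ne_zero hn
      rw [hprobGen_succ_cons] at h
      have hr : hprobGen d (diracF s₀) π n' u r ≠ 0 := by intro h0; simp [h0] at h
      have ih := visits_glue hvis r u n' hr
      rcases ih with h1 | ⟨q, hq, hqT⟩
      · exact Or.inr ⟨(a, u), by simp, h1⟩
      · exact Or.inr ⟨q, by simp [List.mem_cons]; right; simpa using hq, hqT⟩

lemma sum_shiftPi_one (hπ1 : ∀ h, ∑ a, π h a = 1) (l₀ : List (A × S)) (h : Hist S A) :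
    ∑ a, shiftPi π l₀ h a = 1 := hπ1 _

/-- continuation mass is one -/
lemma sum_hprobGen_dirac (hd1 : ∀ s a, ∑ t, d s a t = 1) (hπ1 : ∀ h, ∑ a, π h a = 1)
    (s₀ : S) (n : ℕ) :
    ∑ p ∈ histLen n, hprobGen d (diracF s₀) π n p.1 p.2 = 1 := by
  rw [sum_hprobGen hd1 hπ1 n, diracF_sum]

lemma PR_mono (hd : ∀ s a s', 0 ≤ d s a s') (hd1 : ∀ s a, ∑ t, d s a t = 1)
    (hini : ∀ s, 0 ≤ ini s) (hπ : ∀ h a, 0 ≤ π h a) (hπ1 : ∀ h, ∑ a, π h a = 1) (n : ℕ) :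
    PR d ini π T n ≤ PR d ini π T (n+1) := by
  unfold PR
  rw [dec (d := d) (ini := ini) (π := π) n 1 (fun x => if POMDP.visitsT T x then 1 else 0)]
  refine Finset.sum_le_sum (fun g hg => ?_)
  have h0 := hprobGen_nonneg hd hini hπ n g.1 g.2
  rcases eq_or_ne (hprobGen d ini π n g.1 g.2) 0 with h | h
  · rw [h, zero_mul, zero_mul]
  refine mul_le_mul_of_nonneg_left ?_ h0
  have hmass := sum_hprobGen_dirac (d := d) (π := shiftPi π g.2)
    hd1 (fun h => hπ1 _) g.1 1
  calc (if POMDP.visitsT T g then 1 else 0)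
      = ∑ p ∈ histLen 1, hprobGen d (diracF g.1) (shiftPi π g.2) 1 p.1 p.2 *
          (if POMDP.visitsT T g then 1 else 0) := by
        rw [← Finset.sum_mul, hmass, one_mul]
    _ ≤ ∑ p ∈ histLen 1, hprobGen d (diracF g.1) (shiftPi π g.2) 1 p.1 p.2 *
          (if POMDP.visitsT T (p.1, p.2 ++ g.2) then 1 else 0) := by
        refine Finset.sum_le_sum (fun p _ => ?_)
        rcases eq_or_ne (hprobGen d (diracF g.1) (shiftPi π g.2) 1 p.1 p.2) 0 with hp | hp
        · rw [hp, zero_mul, zero_mul]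
        refine mul_le_mul_of_nonneg_left ?_
          (hprobGen_nonneg hd (diracF_nonneg g.1) (fun h a => hπ _ _) 1 p.1 p.2)
        split_ifs with hv hv2
        · norm_num
        · exact absurd (visits_glue hv p.2 p.1 1 hp) hv2
        · norm_num
        · norm_num
  -- done

lemma bddAbove_of_le_one {f : ℕ → ℝ} (hb : ∀ n, f n ≤ 1) : BddAbove (Set.range f) :=
  ⟨1, by rintro _ ⟨n, rfl⟩; exact hb n⟩

lemma iSup_eq_one_of {f : ℕ → ℝ} (hb : ∀ n, f n ≤ 1)
    (h : ∀ ε > (0:ℝ), ∃ n, 1 - ε < f n) : (⨆ n, f n) = 1 := by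
  refine le_antisymm (ciSup_le hb) ?_
  by_contra hlt
  push_neg at hlt
  obtain ⟨n, hn⟩ := h (1 - ⨆ n, f n) (by linarith)
  have := le_ciSup (bddAbove_of_le_one hb) n
  linarith

lemma exists_gt_of_iSup_eq_one {f : ℕ → ℝ} (h : (⨆ n, f n) = 1) :
    ∀ ε > (0:ℝ), ∃ n, 1 - ε < f n := by
  intro ε hε
  by_contra hc
  push_neg at hc
  have := ciSup_le hc
  rw [h] at this
  linarith

lemma mix {ι : Type} (I : Finset ι) (w : ι → ℝ) (R : ι → ℕ → ℝ)
    (hw0 : ∀ i ∈ I, 0 ≤ w i) (hw1 : ∑ i ∈ I, w i = 1)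
    (hR1 : ∀ i ∈ I, ∀ n, R i n ≤ 1)
    (h : ∀ ε > (0:ℝ), ∃ n, 1 - ε < ∑ i ∈ I, w i * R i n) :
    ∀ i₀ ∈ I, 0 < w i₀ → (⨆ n, R i₀ n) = 1 := by
  intro i₀ hi₀ hw
  refine iSup_eq_one_of (fun n => hR1 i₀ hi₀ n) ?_
  intro ε hε
  obtain ⟨n, hn⟩ := h (ε * w i₀) (by positivity)
  refine ⟨n, ?_⟩
  have hsplit : ∑ i ∈ I, w i * R i n
      = w i₀ * R i₀ n + ∑ i ∈ I.erase i₀, w i * R i n := by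
    rw [Finset.add_sum_erase I (fun i => w i * R i n) hi₀]
  have hbound : ∑ i ∈ I.erase i₀, w i * R i n ≤ ∑ i ∈ I.erase i₀, w i := by
    refine Finset.sum_le_sum (fun i hi => ?_)
    have hiI := Finset.mem_of_mem_erase hi
    have := hw0 i hiI
    nlinarith [hR1 i hiI n]
  have herase : ∑ i ∈ I.erase i₀, w i = 1 - w i₀ := by
    have h2 := Finset.add_sum_erase I w hi₀
    rw [hw1] at h2
    linarith
  rw [hsplit] at hn
  rw [herase] at hbound
  nlinarith

lemma mix2 {ι : Type} (I : Finset ι) (w : ι → ℝ) (R : ι → ℕ → ℝ)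
    (hw0 : ∀ i ∈ I, 0 ≤ w i) (hw1 : ∑ i ∈ I, w i = 1)
    (hR0 : ∀ i ∈ I, ∀ n, 0 ≤ R i n) (hR1 : ∀ i ∈ I, ∀ n, R i n ≤ 1)
    (hmono : ∀ i ∈ I, Monotone (R i))
    (h : ∀ i ∈ I, 0 < w i → (⨆ n, R i n) = 1) :
    (⨆ n, ∑ i ∈ I, w i * R i n) = 1 := by
  have hble : ∀ n, ∑ i ∈ I, w i * R i n ≤ 1 := by
    intro n
    calc ∑ i ∈ I, w i * R i n ≤ ∑ i ∈ I, w i := by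
          refine Finset.sum_le_sum (fun i hi => ?_)
          nlinarith [hw0 i hi, hR0 i hi n, hR1 i hi n]
      _ = 1 := hw1
  refine iSup_eq_one_of hble ?_
  intro ε hε
  rcases le_or_gt ε 1 with hε1 | hε1
  · set g : ι → ℕ := fun i => if h' : ∃ n, 1 - ε/2 < R i n then h'.choose else 0 with hg
    set N := I.sup g with hN
    refine ⟨N, ?_⟩
    have hterm : ∀ i ∈ I, w i * (1 - ε/2) ≤ w i * R i N := by
      intro i hi
      rcases eq_or_lt_of_le (hw0 i hi) with hw | hw
      · rw [← hw]; simp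
      have hex : ∃ n, 1 - ε/2 < R i n :=
        exists_gt_of_iSup_eq_one (h i hi hw) (ε/2) (by linarith)
      have hgi : 1 - ε/2 < R i (g i) := by
        rw [hg]; simp only [dif_pos hex]; exact hex.choose_spec
      have : R i (g i) ≤ R i N := hmono i hi (Finset.le_sup hi)
      nlinarith
    have : ∑ i ∈ I, w i * (1 - ε/2) ≤ ∑ i ∈ I, w i * R i N :=
      Finset.sum_le_sum hterm
    rw [← Finset.sum_mul, hw1, one_mul] at this
    linarith
  · refine ⟨0, ?_⟩
    have : (0:ℝ) ≤ ∑ i ∈ I, w i * R i 0 :=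
      Finset.sum_nonneg (fun i hi => mul_nonneg (hw0 i hi) (hR0 i hi 0))
    linarith

end PF
namespace PF

open Finset

variable {S A Z : Type} [Fintype S] [Fintype A] [Fintype Z]
variable {c : S → A → ℝ} {T : Set S}

lemma hprobAux_eq (M : POMDP S A Z) (σ : Strategy S A Z M.obs) :
    ∀ (l : List (A × S)) (n : ℕ) (s : S),
      M.hprobAux σ n s l = hprobGen M.δ M.init σ.act n s l
  | l, 0, s => by
      cases l <;> simp [POMDP.hprobAux, hprobGen]
  | [], n+1, s => by simp [POMDP.hprobAux, hprobGen]
  | (a, s') :: r, n+1, s => by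
      show M.hprobAux σ n s' r * σ.act (s', r) a * M.δ s' a s = _
      rw [hprobAux_eq M σ r n s', hprobGen_succ_cons]

lemma hprob_eq (M : POMDP S A Z) (σ : Strategy S A Z M.obs) (n : ℕ) (x : Hist S A) :
    M.hprob σ n x = hprobGen M.δ M.init σ.act n x.1 x.2 :=
  hprobAux_eq M σ x.2 n x.1

lemma totalCostH_nonneg (hc : ∀ s a, 0 ≤ c s a) (x : Hist S A) :
    0 ≤ POMDP.totalCostH c x := totalCostAux_nonneg hc x.2 x.1

lemma expTotalSteps_eq (M : POMDP S A Z) (σ : Strategy S A Z M.obs) (n : ℕ) :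
    M.expTotalSteps c σ n
      = ∑ x ∈ histLen n, hprobGen M.δ M.init σ.act n x.1 x.2 * POMDP.totalCostH c x := by
  unfold POMDP.expTotalSteps
  rw [tsum_eq_sum (s := histLen n)]
  · exact Finset.sum_congr rfl (fun x _ => by rw [hprob_eq])
  · intro x hx
    rw [hprob_eq, hprobGen_zero_notmem hx, zero_mul]

lemma probReachBy_eq (M : POMDP S A Z) (σ : Strategy S A Z M.obs) (n : ℕ) :
    M.probReachBy T σ n = PR M.δ M.init σ.act T n := by
  unfold POMDP.probReachBy PR
  rw [tsum_eq_sum (s := histLen n)]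
  · refine Finset.sum_congr rfl (fun x _ => ?_)
    rw [hprob_eq]
    split_ifs <;> simp
  · intro x hx
    rw [hprob_eq, hprobGen_zero_notmem hx]
    simp

/-- the continuation expected cost after a prefix `g` -/
def contE (M : POMDP S A Z) (σ : Strategy S A Z M.obs) (c : S → A → ℝ) (g : Hist S A)
    (j : ℕ) : ℝ :=
  ∑ p ∈ histLen j, hprobGen M.δ (diracF g.1) (shiftPi σ.act g.2) j p.1 p.2 *
    POMDP.totalCostH c p

lemma contE_nonneg (M : POMDP S A Z) (σ : Strategy S A Z M.obs) (hc : ∀ s a, 0 ≤ c s a)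
    (g : Hist S A) (j : ℕ) : 0 ≤ contE M σ c g j :=
  Finset.sum_nonneg fun p _ => mul_nonneg
    (hprobGen_nonneg M.δ_nonneg (diracF_nonneg g.1) (fun h a => σ.act_nonneg _ _) j p.1 p.2)
    (totalCostH_nonneg hc p)

/-- Expected-cost decomposition at time `k`. -/
lemma expTotalSteps_decomp (M : POMDP S A Z) (σ : Strategy S A Z M.obs) (k j : ℕ) :
    M.expTotalSteps c σ (k + j)
      = M.expTotalSteps c σ k
        + ∑ g ∈ histLen k, hprobGen M.δ M.init σ.act k g.1 g.2 * contE M σ c g j := by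
  rw [expTotalSteps_eq, expTotalSteps_eq,
    dec (d := M.δ) (ini := M.init) (π := σ.act) k j (POMDP.totalCostH c)]
  rw [← Finset.sum_add_distrib]
  refine Finset.sum_congr rfl (fun g _ => ?_)
  rw [← mul_add]
  congr 1
  have hsplit : ∀ p ∈ histLen (S := S) (A := A) j,
      hprobGen M.δ (diracF g.1) (shiftPi σ.act g.2) j p.1 p.2 *
          POMDP.totalCostH c (p.1, p.2 ++ g.2)
        = hprobGen M.δ (diracF g.1) (shiftPi σ.act g.2) j p.1 p.2 *
            (POMDP.totalCostH c g + POMDP.totalCostH c p) := by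
    intro p _
    rcases eq_or_ne (hprobGen M.δ (diracF g.1) (shiftPi σ.act g.2) j p.1 p.2) 0 with h | h
    · rw [h, zero_mul, zero_mul]
    congr 1
    exact totalCostAux_append g.1 g.2 p.2 p.1 j h
  rw [Finset.sum_congr rfl hsplit]
  have : ∀ p ∈ histLen (S := S) (A := A) j,
      hprobGen M.δ (diracF g.1) (shiftPi σ.act g.2) j p.1 p.2 *
          (POMDP.totalCostH c g + POMDP.totalCostH c p)
        = hprobGen M.δ (diracF g.1) (shiftPi σ.act g.2) j p.1 p.2 * POMDP.totalCostH c g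
          + hprobGen M.δ (diracF g.1) (shiftPi σ.act g.2) j p.1 p.2 * POMDP.totalCostH c p := by
    intro p _; ring
  rw [Finset.sum_congr rfl this, Finset.sum_add_distrib]
  unfold contE
  congr 1
  rw [← Finset.sum_mul,
    sum_hprobGen_dirac (π := shiftPi σ.act g.2) M.δ_sum (fun h => σ.act_sum _) g.1 j, one_mul]

lemma expTotalSteps_mono (M : POMDP S A Z) (σ : Strategy S A Z M.obs)
    (hc : ∀ s a, 0 ≤ c s a) : Monotone (fun n => M.expTotalSteps c σ n) := by
  refine monotone_nat_of_le_succ (fun n => ?_)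
  have := expTotalSteps_decomp (c := c) M σ n 1
  have hnn : 0 ≤ ∑ g ∈ histLen n, hprobGen M.δ M.init σ.act n g.1 g.2 * contE M σ c g 1 :=
    Finset.sum_nonneg fun g _ => mul_nonneg
      (hprobGen_nonneg M.δ_nonneg M.init_nonneg (fun h a => σ.act_nonneg _ _) n g.1 g.2)
      (contE_nonneg M σ hc g 1)
  simpa [this] using hnn

lemma expTotalSteps_nonneg (M : POMDP S A Z) (σ : Strategy S A Z M.obs)
    (hc : ∀ s a, 0 ≤ c s a) (n : ℕ) : 0 ≤ M.expTotalSteps c σ n := by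
  rw [expTotalSteps_eq]
  exact Finset.sum_nonneg fun x _ => mul_nonneg
    (hprobGen_nonneg M.δ_nonneg M.init_nonneg (fun h a => σ.act_nonneg _ _) n x.1 x.2)
    (totalCostH_nonneg hc x)

end PF
namespace PF

open Finset

variable {S A Z : Type} [Fintype S] [Fintype A] [Fintype Z]
variable {c : S → A → ℝ} {T : Set S}

lemma vis1 (p : Hist S A) (a : A) (s : S) :
    POMDP.visitsT T ((p.1, p.2 ++ [(a, s)]) : Hist S A)
      ↔ POMDP.visitsT T p ∨ s ∈ T := by
  unfold POMDP.visitsT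
  simp only [List.mem_append, List.mem_singleton]
  constructor
  · rintro (h | ⟨q, (hq | hq), hqT⟩)
    · exact Or.inl (Or.inl h)
    · exact Or.inl (Or.inr ⟨q, hq, hqT⟩)
    · subst hq; exact Or.inr hqT
  · rintro ((h | ⟨q, hq, hqT⟩) | h)
    · exact Or.inl h
    · exact Or.inr ⟨q, Or.inl hq, hqT⟩
    · exact Or.inr ⟨(a, s), Or.inr rfl, h⟩

lemma uniformS_pos {U : Finset S} (hU : U.Nonempty) {s : S} (hs : s ∈ U) :
    0 < POMDP.uniformS U s := by
  unfold POMDP.uniformS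
  rw [if_pos hs]
  have : (0:ℝ) < U.card := by exact_mod_cast Finset.card_pos.2 hU
  positivity

lemma sum_univ_to_subset {U : Finset S} (f : S → ℝ) (h0 : ∀ s ∉ U, f s = 0) :
    ∑ s, f s = ∑ s ∈ U, f s :=
  (Finset.sum_subset (Finset.subset_univ U) (fun x _ hx => h0 x hx)).symm

/-- THE key lemma: a winning belief-support has an allowed action. -/
lemma allowFin_nonempty (M : POMDP S A Z) (habs : M.Absorbing T) {U : Finset S}
    (hU : U ∈ M.BeliefWin T) : (M.allowFin T U).Nonempty := by
  obtain ⟨hUne, hobs, σ, hAS⟩ := hU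
  set s₀ := hUne.choose with hs₀def
  have hs₀ : s₀ ∈ U := hUne.choose_spec
  have hex : ∃ a, σ.act (s₀, []) a ≠ 0 := by
    by_contra hc
    push_neg at hc
    have := σ.act_sum (s₀, [])
    rw [Finset.sum_eq_zero (fun a _ => hc a)] at this
    norm_num at this
  obtain ⟨a, ha0⟩ := hex
  have ha : 0 < σ.act (s₀, []) a := lt_of_le_of_ne (σ.act_nonneg _ a) (Ne.symm ha0)
  refine ⟨a, Finset.mem_filter.2 ⟨mem_univ a, ?_⟩⟩
  intro z hne
  set U' := M.updateF U z a with hU'def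
  have hobs' : ∀ s ∈ U', ∀ s' ∈ U', M.obs s = M.obs s' := by
    intro s hs s' hs'
    have h1 := (Finset.mem_filter.1 hs).2.1
    have h2 := (Finset.mem_filter.1 hs').2.1
    rw [h1, h2]
  set σ' : Strategy S A Z M.obs :=
    { act := fun h b => σ.act (h.1, h.2 ++ [(a, s₀)]) b
      act_nonneg := fun h b => σ.act_nonneg _ b
      act_sum := fun h => σ.act_sum _
      obsBased := by
        intro h h' hh
        have h1 : M.obs h.1 = M.obs h'.1 := congrArg Prod.fst hh
        have h2 : h.2.map (fun p => (p.1, M.obs p.2))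
            = h'.2.map (fun p => (p.1, M.obs p.2)) := congrArg Prod.snd hh
        have hoo : obsHist M.obs ((h.1, h.2 ++ [(a, s₀)]) : Hist S A)
            = obsHist M.obs ((h'.1, h'.2 ++ [(a, s₀)]) : Hist S A) := by
          unfold obsHist
          simp only [List.map_append]
          rw [h1, h2]
        have hacts := σ.obsBased _ _ hoo
        funext b
        exact congrFun hacts b } with hσ'def
  have hactnn : ∀ (h : Hist S A) (b : A), 0 ≤ σ'.act h b := fun h b => σ'.act_nonneg h b
  have hactsum : ∀ h : Hist S A, ∑ b, σ'.act h b = 1 := fun h => σ'.act_sum h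
  have hact_shift : ∀ s ∈ U, shiftPi σ.act [(a, s)] = σ'.act := by
    intro s hs
    funext q b
    show σ.act (q.1, q.2 ++ [(a, s)]) b = σ.act (q.1, q.2 ++ [(a, s₀)]) b
    have heq := σ.obsBased (q.1, q.2 ++ [(a, s)]) (q.1, q.2 ++ [(a, s₀)]) (by
      unfold obsHist
      simp [List.map_append, hobs s hs s₀ hs₀])
    rw [heq]
  -- per-state reachability from the posterior support
  have hkey : ∀ t₀ ∈ U', (⨆ n, PR M.δ (diracF t₀) σ'.act T n) = 1 := by
    intro t₀ ht₀
    have ht₀' := Finset.mem_filter.1 ht₀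
    obtain ⟨s, hsU, hδ⟩ := ht₀'.2.2
    by_cases ht₀T : t₀ ∈ T
    · refine iSup_eq_one_of (fun n => PR_le_one M.δ_nonneg M.δ_sum (diracF_nonneg t₀)
        (diracF_sum t₀) hactnn hactsum n) ?_
      intro ε hε
      refine ⟨0, ?_⟩
      have hPR0 : PR M.δ (diracF t₀) σ'.act T 0 = 1 := by
        unfold PR
        rw [sum_histLen_zero (F := fun x => hprobGen M.δ (diracF t₀) σ'.act 0 x.1 x.2 *
          (if POMDP.visitsT T x then 1 else 0))]
        have hterm : ∀ s' : S, hprobGen M.δ (diracF t₀) σ'.act 0 s' [] *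
            (if POMDP.visitsT T ((s', []) : Hist S A) then 1 else 0)
              = if s' = t₀ then 1 else 0 := by
          intro s'
          show diracF t₀ s' * _ = _
          unfold diracF
          rcases eq_or_ne s' t₀ with rfl | hne'
          · simp [POMDP.visitsT, ht₀T]
          · simp [hne']
        rw [Finset.sum_congr rfl (fun s' _ => hterm s')]
        simp
      rw [hPR0]; linarith
    · -- t₀ ∉ T
      have hsT : s ∉ T := by
        intro hsT
        have hts : t₀ = s := absorb_step M habs hsT a (ne_of_gt hδ)
        exact ht₀T (by rw [hts]; exact hsT)
      -- almost-sure winning from uniform U, in raw form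
      have hsup : (⨆ n, PR M.δ (POMDP.uniformS U) σ.act T n) = 1 := by
        have h1 : (⨆ n, PR M.δ (POMDP.uniformS U) σ.act T n)
            = ⨆ n, (M.reinit U hUne hobs).probReachBy T σ n :=
          iSup_congr (fun n => (probReachBy_eq (M.reinit U hUne hobs) σ n).symm)
        rw [h1]
        exact hAS
      have hPRb : ∀ n, PR M.δ (POMDP.uniformS U) σ.act T n ≤ 1 := fun n =>
        PR_le_one M.δ_nonneg M.δ_sum (POMDP.uniformS_nonneg U) (POMDP.uniformS_sum U hUne)
          (fun h b => σ.act_nonneg h b) (fun h => σ.act_sum h) n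
      have hPRmono : ∀ n, PR M.δ (POMDP.uniformS U) σ.act T n
          ≤ PR M.δ (POMDP.uniformS U) σ.act T (n+1) := fun n =>
        PR_mono M.δ_nonneg M.δ_sum (POMDP.uniformS_nonneg U)
          (fun h b => σ.act_nonneg h b) (fun h => σ.act_sum h) n
      have hmix := mix (histLen 1)
        (fun g => hprobGen M.δ (POMDP.uniformS U) σ.act 1 g.1 g.2)
        (fun g n => ∑ p ∈ histLen n,
          hprobGen M.δ (diracF g.1) (shiftPi σ.act g.2) n p.1 p.2 *
            (if POMDP.visitsT T ((p.1, p.2 ++ g.2) : Hist S A) then 1 else 0))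
        (fun g _ => hprobGen_nonneg M.δ_nonneg (POMDP.uniformS_nonneg U)
          (fun h b => σ.act_nonneg h b) 1 g.1 g.2)
        (by rw [sum_hprobGen M.δ_sum (fun h => σ.act_sum h) 1]
            exact POMDP.uniformS_sum U hUne)
        (by intro g _ n
            calc ∑ p ∈ histLen n,
                hprobGen M.δ (diracF g.1) (shiftPi σ.act g.2) n p.1 p.2 *
                  (if POMDP.visitsT T ((p.1, p.2 ++ g.2) : Hist S A) then 1 else 0)
                ≤ ∑ p ∈ histLen n,
                    hprobGen M.δ (diracF g.1) (shiftPi σ.act g.2) n p.1 p.2 := by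
                  refine Finset.sum_le_sum (fun p _ => ?_)
                  have h0 := hprobGen_nonneg (π := shiftPi σ.act g.2) M.δ_nonneg
                    (diracF_nonneg g.1) (fun h b => σ.act_nonneg _ b) n p.1 p.2
                  rcases Classical.em (POMDP.visitsT T ((p.1, p.2 ++ g.2) : Hist S A))
                    with hv | hv
                  · rw [if_pos hv, mul_one]
                  · rw [if_neg hv, mul_zero]; exact h0
              _ = 1 := sum_hprobGen_dirac (π := shiftPi σ.act g.2) M.δ_sum
                    (fun h => σ.act_sum _) g.1 n)
        (by intro ε hε
            obtain ⟨m, hm⟩ := exists_gt_of_iSup_eq_one hsup ε hε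
            refine ⟨m, ?_⟩
            have hd1 : PR M.δ (POMDP.uniformS U) σ.act T (1+m)
                = ∑ g ∈ histLen 1,
                    hprobGen M.δ (POMDP.uniformS U) σ.act 1 g.1 g.2 *
                      ∑ p ∈ histLen m,
                        hprobGen M.δ (diracF g.1) (shiftPi σ.act g.2) m p.1 p.2 *
                          (if POMDP.visitsT T ((p.1, p.2 ++ g.2) : Hist S A) then 1 else 0) := by
              unfold PR
              exact dec 1 m _
            rw [← hd1]
            have : PR M.δ (POMDP.uniformS U) σ.act T m
                ≤ PR M.δ (POMDP.uniformS U) σ.act T (1+m) := by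
              rw [Nat.add_comm 1 m]
              exact hPRmono m
            linarith)
        ((t₀, [(a, s)]) : Hist S A)
        ((mem_histLen 1 ((t₀, [(a, s)]) : Hist S A)).2 rfl)
        (by
          show 0 < hprobGen M.δ (POMDP.uniformS U) σ.act 1 t₀ [(a, s)]
          rw [hprobGen_succ_cons]
          have h00 : hprobGen M.δ (POMDP.uniformS U) σ.act 0 s [] = POMDP.uniformS U s := by
            simp [hprobGen]
          rw [h00]
          have hacts : σ.act (s, []) a = σ.act (s₀, []) a := by
            have heq := σ.obsBased (s, []) (s₀, []) (by
              unfold obsHist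
              simp [hobs s hsU s₀ hs₀])
            rw [heq]
          rw [hacts]
          exact mul_pos (mul_pos (uniformS_pos hUne hsU) ha) hδ)
      -- rewrite the conclusion of `mix` into the desired form
      have hshift := hact_shift s hsU
      have hindeq : ∀ p : Hist S A,
          (if POMDP.visitsT T ((p.1, p.2 ++ [(a, s)]) : Hist S A) then (1:ℝ) else 0)
            = if POMDP.visitsT T p then 1 else 0 := by
        intro p
        rcases Classical.em (POMDP.visitsT T p) with hv | hv
        · rw [if_pos hv, if_pos ((vis1 p a s).2 (Or.inl hv))]
        · rw [if_neg hv, if_neg (fun hvv => by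
            rcases (vis1 p a s).1 hvv with h | h
            · exact hv h
            · exact hsT h)]
      have hfin : ∀ n, (∑ p ∈ histLen n,
          hprobGen M.δ (diracF t₀) (shiftPi σ.act [(a, s)]) n p.1 p.2 *
            (if POMDP.visitsT T ((p.1, p.2 ++ [(a, s)]) : Hist S A) then 1 else 0))
          = PR M.δ (diracF t₀) σ'.act T n := by
        intro n
        unfold PR
        refine Finset.sum_congr rfl (fun p _ => ?_)
        rw [hshift, hindeq p]
      rw [← iSup_congr hfin]
      exact hmix
  -- conclude: uniform over U' wins with σ'
  refine ⟨hne, hobs', σ', ?_⟩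
  show (M.reinit U' hne hobs').AlmostSure T σ'
  unfold POMDP.AlmostSure POMDP.probReach
  have h1 : ∀ n, (M.reinit U' hne hobs').probReachBy T σ' n
      = ∑ s ∈ U', POMDP.uniformS U' s * PR M.δ (diracF s) σ'.act T n := by
    intro n
    calc (M.reinit U' hne hobs').probReachBy T σ' n
        = PR M.δ (POMDP.uniformS U') σ'.act T n := probReachBy_eq (M.reinit U' hne hobs') σ' n
      _ = ∑ s, POMDP.uniformS U' s * PR M.δ (diracF s) σ'.act T n := PR_eq_sum_dirac n
      _ = ∑ s ∈ U', POMDP.uniformS U' s * PR M.δ (diracF s) σ'.act T n :=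
          sum_univ_to_subset _ (fun s hs => by
            rw [show POMDP.uniformS U' s = 0 from by simp [POMDP.uniformS, hs], zero_mul])
  rw [iSup_congr h1]
  refine mix2 U' (POMDP.uniformS U') (fun s n => PR M.δ (diracF s) σ'.act T n)
    (fun s _ => POMDP.uniformS_nonneg U' s)
    (by rw [← sum_univ_to_subset (POMDP.uniformS U') (fun s hs => by
          simp [POMDP.uniformS, hs])]
        exact POMDP.uniformS_sum U' hne)
    (fun s _ n => PR_nonneg M.δ_nonneg (diracF_nonneg s) hactnn n)
    (fun s _ n => PR_le_one M.δ_nonneg M.δ_sum (diracF_nonneg s) (diracF_sum s)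
      hactnn hactsum n)
    (fun s _ => monotone_nat_of_le_succ (fun n =>
      PR_mono M.δ_nonneg M.δ_sum (diracF_nonneg s) hactnn hactsum n))
    (fun s hs _ => hkey s hs)

end PF
namespace PF

open Finset

variable {S A Z : Type} [Fintype S] [Fintype A] [Fintype Z] [Nonempty A]
variable {c : S → A → ℝ} {T : Set S}

lemma normalize_nonneg {f : S → ℝ} (hf : ∀ t, 0 ≤ f t) (t : S) :
    0 ≤ POMDP.normalize f t :=
  div_nonneg (hf t) (Finset.sum_nonneg (fun u _ => hf u))

lemma normalize_ne_zero_iff {f : S → ℝ} (hpos : 0 < ∑ u, f u) (t : S) :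
    POMDP.normalize f t ≠ 0 ↔ f t ≠ 0 := by
  unfold POMDP.normalize
  rw [div_ne_zero_iff]
  constructor
  · exact fun h => h.1
  · exact fun h => ⟨h, ne_of_gt hpos⟩

lemma uniformA_mem {F : Finset A} {a : A} (h : POMDP.uniformA F a ≠ 0) : a ∈ F := by
  by_contra hc
  simp [POMDP.uniformA, hc] at h

lemma foAct_mem (M : POMDP S A Z) (n : ℕ) (b : S → ℝ)
    (hne : (M.allowFin T (POMDP.suppF b)).Nonempty) :
    M.foAct T c (n+1) b ∈ M.allowFin T (POMDP.suppF b) := by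
  simp only [POMDP.foAct, dif_pos hne]
  exact (Classical.choose_spec (Finset.exists_mem_eq_inf' hne _)).1

lemma allowFin_subset_AllowSet (M : POMDP S A Z) {U : Finset S} {a : A}
    (h : a ∈ M.allowFin T U) : a ∈ M.AllowSet T U :=
  (Finset.mem_filter.1 h).2

/-- The joint invariant: along positive-probability histories of `σ*_k`,
the information state is nonnegative, its support is the belief-support,
the current state belongs to the belief-support, and the belief-support is
almost-sure winning. -/
lemma inv (M : POMDP S A Z) (habs : M.Absorbing T)
    (hinit : M.suppInitF ∈ M.BeliefWin T) (k : ℕ) :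
    ∀ (l : List (A × S)) (s : S),
      hprobGen M.δ M.init (M.stratStar T c k).act l.length s l ≠ 0 →
      (∀ t, 0 ≤ M.infoOfAux s l t)
      ∧ POMDP.suppF (M.infoOfAux s l) = M.beliefOfFromAux M.suppInitF s l
      ∧ s ∈ M.beliefOfFromAux M.suppInitF s l
      ∧ M.beliefOfFromAux M.suppInitF s l ∈ M.BeliefWin T
  | [], s => by
      intro h
      have hs0 : M.init s ≠ 0 := by simpa [hprobGen] using h
      have hs : 0 < M.init s := lt_of_le_of_ne (M.init_nonneg s) (Ne.symm hs0)
      set f : S → ℝ := fun t => if M.obs t = M.obs s then M.init t else 0 with hfdef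
      have hfnn : ∀ t, 0 ≤ f t := by
        intro t; rw [hfdef]; dsimp only; split_ifs
        · exact M.init_nonneg t
        · exact le_refl 0
      have hfs : f s = M.init s := by rw [hfdef]; simp
      have hfpos : 0 < ∑ u, f u := by
        have := Finset.single_le_sum (fun u _ => hfnn u) (mem_univ s)
        rw [hfs] at this
        linarith
      have hinfo : M.infoOfAux s [] = POMDP.normalize f := rfl
      have hsupp : POMDP.suppF (M.infoOfAux s []) = M.beliefOfFromAux M.suppInitF s [] := by
        show POMDP.suppF (POMDP.normalize f) = M.suppInitF.filter (fun t => M.obs t = M.obs s)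
        unfold POMDP.suppF
        ext t
        simp only [Finset.mem_filter, mem_univ, true_and]
        rw [normalize_ne_zero_iff hfpos]
        unfold POMDP.suppInitF
        simp only [Finset.mem_filter, mem_univ, true_and]
        rw [hfdef]
        dsimp only
        constructor
        · intro ht
          rcases Classical.em (M.obs t = M.obs s) with ho | ho
          · rw [if_pos ho] at ht
            exact ⟨lt_of_le_of_ne (M.init_nonneg t) (Ne.symm ht), ho⟩
          · rw [if_neg ho] at ht; exact absurd rfl ht
        · rintro ⟨h1, h2⟩
          rw [if_pos h2]
          exact ne_of_gt h1
      have hflt : M.suppInitF.filter (fun t => M.obs t = M.obs s) = M.suppInitF := by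
        refine Finset.filter_eq_self.2 (fun t ht => ?_)
        have : 0 < M.init t := by
          have := Finset.mem_filter.1 ht
          simpa [POMDP.suppInitF] using this.2
        exact M.init_obs t s this hs
      refine ⟨normalize_nonneg hfnn, hsupp, ?_, ?_⟩
      · show s ∈ M.suppInitF.filter (fun t => M.obs t = M.obs s)
        rw [hflt]
        simp [POMDP.suppInitF, hs]
      · show M.suppInitF.filter (fun t => M.obs t = M.obs s) ∈ M.BeliefWin T
        rw [hflt]
        exact hinit
  | (a, s') :: r, s => by
      intro h
      rw [show ((a, s') :: r).length = r.length + 1 from rfl, hprobGen_succ_cons] at h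
      have hr : hprobGen M.δ M.init (M.stratStar T c k).act r.length s' r ≠ 0 := by
        intro h0; simp [h0] at h
      have hact : (M.stratStar T c k).act (s', r) a ≠ 0 := by
        intro h0; simp [h0] at h
      have hδ0 : M.δ s' a s ≠ 0 := by
        intro h0; simp [h0] at h
      have hδ : 0 < M.δ s' a s := lt_of_le_of_ne (M.δ_nonneg s' a s) (Ne.symm hδ0)
      obtain ⟨hbnn, hsupp, hmem, hWin⟩ := inv M habs hinit k r s' hr
      set U' := M.beliefOfFromAux M.suppInitF s' r with hU'def
      set b' := M.infoOfAux s' r with hb'def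
      -- the action `a` is allowed at `U'`
      have hallow : a ∈ M.AllowSet T U' := by
        have hfin : (M.allowFin T U').Nonempty := allowFin_nonempty M habs hWin
        have hact' : (if r.length < k then M.actFO T c k (s', r)
            else M.actAllowFrom T M.suppInitF (s', r)) a ≠ 0 := hact
        rcases Classical.em (r.length < k) with hlt | hlt
        · rw [if_pos hlt] at hact'
          have ha : a = M.foAct T c (k - r.length) (M.infoOf (s', r)) := by
            by_contra hc
            unfold POMDP.actFO at hact'
            rw [if_neg hc] at hact'
            exact hact' rfl
          obtain ⟨n', hn'⟩ : ∃ n', k - r.length = n' + 1 :=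
            ⟨k - r.length - 1, (Nat.succ_pred_eq_of_pos (Nat.sub_pos_of_lt hlt)).symm⟩
          have hio : M.infoOf (s', r) = b' := rfl
          have hsne : (M.allowFin T (POMDP.suppF b')).Nonempty := by
            rw [hsupp]; exact hfin
          have := foAct_mem (c := c) M n' b' hsne
          rw [← hn'] at this
          rw [ha, hio]
          apply allowFin_subset_AllowSet M
          rw [← hsupp]
          exact this
        · rw [if_neg hlt] at hact'
          have hB : M.beliefOfFrom M.suppInitF ((s', r) : Hist S A) = U' := rfl
          unfold POMDP.actAllowFrom at hact'
          rw [hB, if_pos hfin] at hact'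
          exact allowFin_subset_AllowSet M (uniformA_mem hact')
      -- the new belief-support is the update
      have hbel : M.beliefOfFromAux M.suppInitF s ((a, s') :: r)
          = M.updateF U' (M.obs s) a := rfl
      set f : S → ℝ := fun t => if M.obs t = M.obs s then ∑ u, b' u * M.δ u a t else 0
        with hfdef
      have hfnn : ∀ t, 0 ≤ f t := by
        intro t; rw [hfdef]; dsimp only; split_ifs
        · exact Finset.sum_nonneg (fun u _ => mul_nonneg (hbnn u) (M.δ_nonneg u a t))
        · exact le_refl 0
      have hbs' : 0 < b' s' := by
        have : s' ∈ POMDP.suppF b' := by rw [hsupp]; exact hmem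
        have hne : b' s' ≠ 0 := by simpa [POMDP.suppF] using this
        exact lt_of_le_of_ne (hbnn s') (Ne.symm hne)
      have hfs : 0 < f s := by
        rw [hfdef]; dsimp only
        rw [if_pos rfl]
        have h1 : b' s' * M.δ s' a s
            ≤ ∑ u, b' u * M.δ u a s :=
          Finset.single_le_sum (fun u _ => mul_nonneg (hbnn u) (M.δ_nonneg u a s))
            (mem_univ s')
        nlinarith
      have hfpos : 0 < ∑ u, f u := by
        have := Finset.single_le_sum (fun u _ => hfnn u) (mem_univ s)
        linarith
      have hinfo : M.infoOfAux s ((a, s') :: r) = POMDP.normalize f := rfl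
      have hsum_iff : ∀ t : S, (∑ u, b' u * M.δ u a t) ≠ 0 ↔ ∃ u ∈ U', 0 < M.δ u a t := by
        intro t
        constructor
        · intro hne
          have hex : ∃ u, b' u * M.δ u a t ≠ 0 := by
            by_contra hc
            push_neg at hc
            exact hne (Finset.sum_eq_zero (fun u _ => hc u))
          obtain ⟨u, hu⟩ := hex
          have hb : b' u ≠ 0 := fun h0 => hu (by rw [h0, zero_mul])
          have hd : M.δ u a t ≠ 0 := fun h0 => hu (by rw [h0, mul_zero])
          refine ⟨u, ?_, lt_of_le_of_ne (M.δ_nonneg u a t) (Ne.symm hd)⟩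
          rw [← hsupp]
          simpa [POMDP.suppF] using hb
        · rintro ⟨u, huU, hd⟩
          have hbu : 0 < b' u := by
            have : u ∈ POMDP.suppF b' := by rw [hsupp]; exact huU
            have hne : b' u ≠ 0 := by simpa [POMDP.suppF] using this
            exact lt_of_le_of_ne (hbnn u) (Ne.symm hne)
          have h1 : b' u * M.δ u a t ≤ ∑ v, b' v * M.δ v a t :=
            Finset.single_le_sum (fun v _ => mul_nonneg (hbnn v) (M.δ_nonneg v a t))
              (mem_univ u)
          nlinarith
      have hsuppnew : POMDP.suppF (M.infoOfAux s ((a, s') :: r))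
          = M.updateF U' (M.obs s) a := by
        rw [hinfo]
        unfold POMDP.suppF POMDP.updateF
        ext t
        simp only [Finset.mem_filter, mem_univ, true_and]
        rw [normalize_ne_zero_iff hfpos]
        rw [hfdef]
        dsimp only
        constructor
        · intro ht
          rcases Classical.em (M.obs t = M.obs s) with ho | ho
          · rw [if_pos ho] at ht
            exact ⟨ho, (hsum_iff t).1 ht⟩
          · rw [if_neg ho] at ht; exact absurd rfl ht
        · rintro ⟨h1, h2⟩
          rw [if_pos h1]
          exact (hsum_iff t).2 h2
      have hmemnew : s ∈ M.updateF U' (M.obs s) a :=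
        Finset.mem_filter.2 ⟨mem_univ s, rfl, s', hmem, hδ⟩
      refine ⟨by rw [hinfo]; exact normalize_nonneg hfnn, by rw [hbel]; exact hsuppnew,
        by rw [hbel]; exact hmemnew, ?_⟩
      rw [hbel]
      exact hallow (M.obs s) ⟨s, hmemnew⟩

end PF
namespace PF

open Finset

variable {S A Z : Type} [Fintype S] [Fintype A] [Fintype Z] [Nonempty A]
variable {c : S → A → ℝ} {T : Set S} {d : S → A → S → ℝ}

lemma belief_obs (M : POMDP S A Z) (U0 : Finset S) :
    ∀ (l : List (A × S)) (s t : S), t ∈ M.beliefOfFromAux U0 s l → M.obs t = M.obs s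
  | [], s, t => by
      intro h
      exact (Finset.mem_filter.1 h).2
  | (a, s') :: r, s, t => by
      intro h
      have := Finset.mem_filter.1 h
      exact this.2.1

lemma bshift (M : POMDP S A Z) (s₀ : S) (l₀ : List (A × S)) :
    ∀ (r : List (A × S)) (u : S), endSt u r = s₀ →
      M.beliefOfFromAux M.suppInitF u (r ++ l₀)
        = M.beliefOfFromAux (M.beliefOfFromAux M.suppInitF s₀ l₀) u r
  | [], u => by
      intro h
      have hu : u = s₀ := h
      subst hu
      show M.beliefOfFromAux M.suppInitF u l₀
        = (M.beliefOfFromAux M.suppInitF u l₀).filter (fun t => M.obs t = M.obs u)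
      exact (Finset.filter_eq_self.2 (fun t ht => belief_obs M _ l₀ u t ht)).symm
  | (a, u') :: r', u => by
      intro h
      have hend : endSt u' r' = s₀ := h
      show M.updateF (M.beliefOfFromAux M.suppInitF u' (r' ++ l₀)) (M.obs u) a = _
      rw [bshift M s₀ l₀ r' u' hend]
      rfl

lemma act_match (M : POMDP S A Z) (k : ℕ) (g : Hist S A) (hg : g.2.length = k) :
    ∀ (r : List (A × S)) (u : S), endSt u r = g.1 →
      (M.stratStar T c k).act (u, r ++ g.2)
        = (M.stratAllowFrom T (M.beliefOfFromAux M.suppInitF g.1 g.2)).act (u, r) := by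
  intro r u hend
  have hlen : (r ++ g.2).length = r.length + k := by
    rw [List.length_append, hg]
  have hnlt : ¬ (r ++ g.2).length < k := by
    rw [hlen]
    omega
  show (if (r ++ g.2).length < k then M.actFO T c k (u, r ++ g.2)
      else M.actAllowFrom T M.suppInitF (u, r ++ g.2)) = _
  rw [if_neg hnlt]
  show M.actAllowFrom T M.suppInitF (u, r ++ g.2)
    = M.actAllowFrom T (M.beliefOfFromAux M.suppInitF g.1 g.2) (u, r)
  unfold POMDP.actAllowFrom
  have hb : M.beliefOfFrom M.suppInitF ((u, r ++ g.2) : Hist S A)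
      = M.beliefOfFrom (M.beliefOfFromAux M.suppInitF g.1 g.2) ((u, r) : Hist S A) :=
    bshift M g.1 g.2 r u hend
  rw [hb]

lemma hcong (s₀ : S) (π₁ π₂ : Hist S A → A → ℝ)
    (hagree : ∀ (u : S) (r : List (A × S)), endSt u r = s₀ → π₁ (u, r) = π₂ (u, r)) :
    ∀ (m : List (A × S)) (t : S) (n : ℕ),
      hprobGen d (diracF s₀) π₁ n t m = hprobGen d (diracF s₀) π₂ n t m
  | [], t, n => by cases n <;> rfl
  | (a, u) :: r, t, n => by
      cases n with
      | zero => rfl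
      | succ n' =>
        rw [hprobGen_succ_cons, hprobGen_succ_cons]
        rcases eq_or_ne (hprobGen d (diracF s₀) π₁ n' u r) 0 with h0 | h0
        · rw [hcong s₀ π₁ π₂ hagree r u n'] at h0
          rw [hcong s₀ π₁ π₂ hagree r u n', h0, zero_mul, zero_mul, zero_mul, zero_mul]
        · have hend : endSt u r = s₀ := hprobGen_dirac_root h0
          rw [hcong s₀ π₁ π₂ hagree r u n', hagree u r hend]

/-- The continuation expected cost of `σ*_k` after a length-`k` prefix `g`
equals the expected cost of `σ_Allow` restarted at `g.1` with belief `beliefOf g`. -/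
lemma contE_eq (M : POMDP S A Z) (k : ℕ) (g : Hist S A) (hg : g.2.length = k) (j : ℕ) :
    contE M (M.stratStar T c k) c g j
      = (M.resetDirac g.1).expTotalSteps c
          (M.stratAllowFrom T (M.beliefOfFromAux M.suppInitF g.1 g.2)) j := by
  rw [expTotalSteps_eq (M.resetDirac g.1) (M.stratAllowFrom T (M.beliefOfFromAux M.suppInitF g.1 g.2))]
  unfold contE
  refine Finset.sum_congr rfl (fun p _ => ?_)
  congr 1
  exact hcong g.1 (shiftPi (M.stratStar T c k).act g.2)
    (M.stratAllowFrom T (M.beliefOfFromAux M.suppInitF g.1 g.2)).act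
    (fun u r hend => act_match M k g hg r u hend) p.2 p.1 j

end PF
namespace PF

open Finset Filter

variable {S A Z : Type} [Fintype S] [Fintype A] [Fintype Z] [Nonempty A]
variable {c : S → A → ℝ} {T : Set S}

lemma Val_le_of_forall_le (M : POMDP S A Z) (σ : Strategy S A Z M.obs) {B : ℝ}
    (h : ∀ n, M.expTotalSteps c σ n ≤ B) : M.Val c σ ≤ (B : EReal) := by
  unfold POMDP.Val
  refine limsup_le_of_le (by isBoundedDefault) ?_
  exact Filter.Eventually.of_forall (fun n => EReal.coe_le_coe_iff.2 (h n))

lemma coe_le_Val (M : POMDP S A Z) (σ : Strategy S A Z M.obs) (hc : ∀ s a, 0 ≤ c s a)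
    (j : ℕ) : ((M.expTotalSteps c σ j : ℝ) : EReal) ≤ M.Val c σ := by
  unfold POMDP.Val
  refine le_limsup_of_frequently_le' ?_
  have hev : ∀ᶠ n in Filter.atTop,
      ((M.expTotalSteps c σ j : ℝ) : EReal) ≤ ((M.expTotalSteps c σ n : ℝ) : EReal) := by
    filter_upwards [Filter.eventually_ge_atTop j] with n hn
    exact EReal.coe_le_coe_iff.2 (expTotalSteps_mono M σ hc hn)
  exact hev.frequently

lemma expTotalSteps_zero (M : POMDP S A Z) (σ : Strategy S A Z M.obs) :
    M.expTotalSteps c σ 0 = 0 := by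
  rw [expTotalSteps_eq,
    sum_histLen_zero (F := fun x => hprobGen M.δ M.init σ.act 0 x.1 x.2 *
      POMDP.totalCostH c x)]
  refine Finset.sum_eq_zero (fun s _ => ?_)
  show _ * POMDP.totalCostAux c s [] = 0
  rw [show POMDP.totalCostAux c s [] = 0 from rfl, mul_zero]

lemma TAllow_le_UAllow (M : POMDP S A Z) {U : Finset S} {s : S}
    (hU : U ∈ M.BeliefWin T) (hs : s ∈ U) : M.TAllow T c s U ≤ M.UAllow T c := by
  unfold POMDP.UAllow
  have h1 : M.TAllow T c s U ≤ ⨆ s' ∈ U, M.TAllow T c s' U :=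
    le_iSup₂ (f := fun s' (_ : s' ∈ U) => M.TAllow T c s' U) s hs
  exact h1.trans (le_iSup₂ (f := fun U' (_ : U' ∈ M.BeliefWin T) =>
    ⨆ s' ∈ U', M.TAllow T c s' U') U hU)

lemma coe_contE_le_UAllow (M : POMDP S A Z) (habs : M.Absorbing T)
    (hc : ∀ s a, 0 ≤ c s a) (hinit : M.suppInitF ∈ M.BeliefWin T) (k : ℕ)
    {g : Hist S A} (hg : g ∈ histLen k)
    (hW : hprobGen M.δ M.init (M.stratStar T c k).act k g.1 g.2 ≠ 0) (j : ℕ) :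
    ((contE M (M.stratStar T c k) c g j : ℝ) : EReal) ≤ M.UAllow T c := by
  have hglen : g.2.length = k := (mem_histLen k g).1 hg
  have hW' : hprobGen M.δ M.init (M.stratStar T c k).act g.2.length g.1 g.2 ≠ 0 := by
    rw [hglen]; exact hW
  obtain ⟨_, _, hmem, hWin⟩ := inv (c := c) M habs hinit k g.2 g.1 hW'
  rw [contE_eq M k g hglen j]
  calc ((((M.resetDirac g.1).expTotalSteps c
        (M.stratAllowFrom T (M.beliefOfFromAux M.suppInitF g.1 g.2)) j : ℝ)) : EReal)
      ≤ M.TAllow T c g.1 (M.beliefOfFromAux M.suppInitF g.1 g.2) :=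
        coe_le_Val (M.resetDirac g.1) _ hc j
    _ ≤ M.UAllow T c := TAllow_le_UAllow M hWin hmem

end PF
namespace PF

open Finset Filter

variable {S A Z : Type} [Fintype S] [Fintype A] [Fintype Z] [Nonempty A]
variable {c : S → A → ℝ} {T : Set S}

lemma alpha_eq (M : POMDP S A Z) (habs : M.Absorbing T) (k : ℕ) :
    M.alphaK T c k = ∑ g ∈ (histLen k).filter (fun g : Hist S A => g.1 ∉ T),
      hprobGen M.δ M.init (M.stratStar T c k).act k g.1 g.2 := by
  have hmass : ∑ g ∈ histLen k,
      hprobGen M.δ M.init (M.stratStar T c k).act k g.1 g.2 = 1 := by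
    rw [sum_hprobGen M.δ_sum (fun h => (M.stratStar T c k).act_sum h) k]
    exact M.init_sum
  have hpr : M.probReachBy T (M.stratStar T c k) k
      = ∑ g ∈ histLen k, (if g.1 ∈ T then
          hprobGen M.δ M.init (M.stratStar T c k).act k g.1 g.2 else 0) := by
    rw [probReachBy_eq]
    unfold PR
    refine Finset.sum_congr rfl (fun g _ => ?_)
    rcases eq_or_ne (hprobGen M.δ M.init (M.stratStar T c k).act k g.1 g.2) 0 with h | h
    · simp [h]
    · have hiff := visitsT_iff_head (ini := M.init) (π := (M.stratStar T c k).act)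
        (n := k) (x := g) M habs h
      by_cases hT : g.1 ∈ T
      · rw [if_pos (hiff.2 hT), if_pos hT, mul_one]
      · rw [if_neg (fun hv => hT (hiff.1 hv)), if_neg hT, mul_zero]
  unfold POMDP.alphaK
  rw [hpr, Finset.sum_filter]
  have hsplit : ∀ g ∈ histLen (S := S) (A := A) k,
      (if g.1 ∉ T then hprobGen M.δ M.init (M.stratStar T c k).act k g.1 g.2 else 0)
        = hprobGen M.δ M.init (M.stratStar T c k).act k g.1 g.2
          - (if g.1 ∈ T then hprobGen M.δ M.init (M.stratStar T c k).act k g.1 g.2 else 0) := by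
    intro g _
    by_cases hT : g.1 ∈ T
    · rw [if_neg (fun h => h hT), if_pos hT]; ring
    · rw [if_pos hT, if_neg hT]; ring
  rw [Finset.sum_congr rfl hsplit, Finset.sum_sub_distrib, hmass]

lemma contE_eq_zero_of_mem_T (M : POMDP S A Z) (habs : M.Absorbing T)
    (hc0 : ∀ t ∈ T, ∀ a, c t a = 0) (k : ℕ) {g : Hist S A} (hgT : g.1 ∈ T) (j : ℕ) :
    contE M (M.stratStar T c k) c g j = 0 := by
  unfold contE
  refine Finset.sum_eq_zero (fun p _ => ?_)
  rcases eq_or_ne (hprobGen M.δ (diracF g.1)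
      (shiftPi (M.stratStar T c k).act g.2) j p.1 p.2) 0 with h | h
  · rw [h, zero_mul]
  · obtain ⟨_, hcost⟩ := dirac_in_T M habs hc0 hgT p.2 p.1 j h
    rw [show POMDP.totalCostH c p = POMDP.totalCostAux c p.1 p.2 from rfl, hcost, mul_zero]

lemma sum_contE_le (M : POMDP S A Z) (habs : M.Absorbing T)
    (hc0 : ∀ t ∈ T, ∀ a, c t a = 0) (k j : ℕ) {u : ℝ}
    (hub : ∀ g ∈ histLen k, hprobGen M.δ M.init (M.stratStar T c k).act k g.1 g.2 ≠ 0 →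
      g.1 ∉ T → contE M (M.stratStar T c k) c g j ≤ u) :
    ∑ g ∈ histLen k, hprobGen M.δ M.init (M.stratStar T c k).act k g.1 g.2 *
        contE M (M.stratStar T c k) c g j
      ≤ M.alphaK T c k * u := by
  rw [← Finset.sum_filter_add_sum_filter_not (histLen k) (fun g : Hist S A => g.1 ∉ T)]
  have hT0 : ∑ g ∈ (histLen k).filter (fun g : Hist S A => ¬ g.1 ∉ T),
      hprobGen M.δ M.init (M.stratStar T c k).act k g.1 g.2 *
        contE M (M.stratStar T c k) c g j = 0 := by
    refine Finset.sum_eq_zero (fun g hg => ?_)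
    have hgT : g.1 ∈ T := not_not.1 (Finset.mem_filter.1 hg).2
    rw [contE_eq_zero_of_mem_T M habs hc0 k hgT j, mul_zero]
  rw [hT0, add_zero, alpha_eq M habs k, Finset.sum_mul]
  refine Finset.sum_le_sum (fun g hg => ?_)
  have hgm := Finset.mem_filter.1 hg
  rcases eq_or_ne (hprobGen M.δ M.init (M.stratStar T c k).act k g.1 g.2) 0 with h | h
  · rw [h, zero_mul, zero_mul]
  · have hnn : 0 ≤ hprobGen M.δ M.init (M.stratStar T c k).act k g.1 g.2 :=
      hprobGen_nonneg M.δ_nonneg M.init_nonneg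
        (fun hh b => (M.stratStar T c k).act_nonneg hh b) k g.1 g.2
    exact mul_le_mul_of_nonneg_left (hub g hgm.1 h hgm.2) hnn

lemma alpha_nonneg (M : POMDP S A Z) (habs : M.Absorbing T) (k : ℕ) :
    0 ≤ M.alphaK T c k := by
  rw [alpha_eq (c := c) M habs k]
  exact Finset.sum_nonneg (fun g _ => hprobGen_nonneg M.δ_nonneg M.init_nonneg
    (fun hh b => (M.stratStar T c k).act_nonneg hh b) k g.1 g.2)

lemma suppInitF_nonempty (M : POMDP S A Z) : M.suppInitF.Nonempty := by
  have : ∃ s : S, M.init s ≠ 0 := by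
    by_contra hc
    push_neg at hc
    have := M.init_sum
    rw [Finset.sum_eq_zero (fun s _ => hc s)] at this
    norm_num at this
  obtain ⟨s, hs⟩ := this
  exact ⟨s, by
    unfold POMDP.suppInitF
    simp only [Finset.mem_filter, mem_univ, true_and]
    exact lt_of_le_of_ne (M.init_nonneg s) (Ne.symm hs)⟩

lemma UAllow_nonneg (M : POMDP S A Z) (hc : ∀ s a, 0 ≤ c s a)
    (hinit : M.suppInitF ∈ M.BeliefWin T) : (0 : EReal) ≤ M.UAllow T c := by
  obtain ⟨s, hs⟩ := suppInitF_nonempty M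
  calc (0 : EReal)
      = (((M.resetDirac s).expTotalSteps c (M.stratAllowFrom T M.suppInitF) 0 : ℝ) : EReal) := by
        rw [expTotalSteps_zero (M.resetDirac s) (M.stratAllowFrom T M.suppInitF)]; rfl
    _ ≤ M.TAllow T c s M.suppInitF := coe_le_Val (M.resetDirac s) _ hc 0
    _ ≤ M.UAllow T c := TAllow_le_UAllow M hinit hs

end PF
/-- `E^{σ*_k}[Total] ≤ E^{σ*_k}[Total_k] + α_k · U_Allow`. -/
theorem val_stratStar_le
    {S A Z : Type} [Fintype S] [Fintype A] [Fintype Z] [Nonempty A]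
    (M : POMDP S A Z) (T : Set S) (c : S → A → ℝ)
    (habs : M.Absorbing T)
    (hc0 : ∀ t ∈ T, ∀ a, c t a = 0)
    (hc1 : ∀ s ∉ T, ∀ a, 1 ≤ c s a)
    (hinit : M.suppInitF ∈ M.BeliefWin T)
    (k : ℕ) :
    M.Val c (M.stratStar T c k) ≤
      ((M.expTotalSteps c (M.stratStar T c k) (k + 1) : ℝ) : EReal) +
        ((M.alphaK T c k : ℝ) : EReal) * M.UAllow T c := by
  classical
  have hc : ∀ s a, 0 ≤ c s a := by
    intro s a
    by_cases hs : s ∈ T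
    · rw [hc0 s hs a]
    · linarith [hc1 s hs a]
  have hαnn : 0 ≤ M.alphaK T c k := PF.alpha_nonneg M habs k
  have hUnn : (0 : EReal) ≤ M.UAllow T c := PF.UAllow_nonneg M hc hinit
  by_cases htop : M.UAllow T c = ⊤
  · rcases eq_or_lt_of_le hαnn with hα0 | hαpos
    · -- `α_k = 0` : after step `k` everything is absorbed, no further cost
      have hmaster : ∀ n, M.expTotalSteps c (M.stratStar T c k) n
          ≤ M.expTotalSteps c (M.stratStar T c k) (k + 1) := by
        intro n
        rcases le_or_gt n (k+1) with h | h
        · exact PF.expTotalSteps_mono M _ hc h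
        · have hn : n = k + (n - k) := by omega
          rw [hn, PF.expTotalSteps_decomp M _ k (n - k)]
          have hzero : ∑ g ∈ PF.histLen k,
              PF.hprobGen M.δ M.init (M.stratStar T c k).act k g.1 g.2 *
                PF.contE M (M.stratStar T c k) c g (n - k) = 0 := by
            refine Finset.sum_eq_zero (fun g hg => ?_)
            by_cases hgT : g.1 ∈ T
            · rw [PF.contE_eq_zero_of_mem_T M habs hc0 k hgT, mul_zero]
            · have hW0 : PF.hprobGen M.δ M.init (M.stratStar T c k).act k g.1 g.2 = 0 := by
                have hsum0 : ∑ g ∈ (PF.histLen k).filter (fun g : Hist S A => g.1 ∉ T),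
                    PF.hprobGen M.δ M.init (M.stratStar T c k).act k g.1 g.2 = 0 := by
                  rw [← PF.alpha_eq (c := c) M habs k, ← hα0]
                exact (Finset.sum_eq_zero_iff_of_nonneg (fun g' _ =>
                  PF.hprobGen_nonneg M.δ_nonneg M.init_nonneg
                    (fun hh b => (M.stratStar T c k).act_nonneg hh b) k g'.1 g'.2)).1
                  hsum0 g (Finset.mem_filter.2 ⟨hg, hgT⟩)
              rw [hW0, zero_mul]
          rw [hzero, add_zero]
          exact PF.expTotalSteps_mono M _ hc (by omega : k ≤ k + 1)
      have hval := PF.Val_le_of_forall_le M (M.stratStar T c k) hmaster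
      have hrhs : ((M.alphaK T c k : ℝ) : EReal) * M.UAllow T c = 0 := by
        rw [← hα0]
        exact EReal.zero_mul _
      rw [hrhs, add_zero]
      exact hval
    · -- `α_k > 0` and `U_Allow = ⊤` : the bound is trivially `⊤`
      rw [htop, EReal.coe_mul_top_of_pos hαpos,
        EReal.add_top_of_ne_bot (EReal.coe_ne_bot _)]
      exact le_top
  · -- `U_Allow` is finite
    have hbot : M.UAllow T c ≠ ⊥ := by
      intro h
      rw [h] at hUnn
      exact absurd hUnn EReal.bot_lt_zero.not_ge
    set u := (M.UAllow T c).toReal with hudef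
    have hcoe : (u : EReal) = M.UAllow T c := EReal.coe_toReal htop hbot
    have hu0 : 0 ≤ u := by
      have h := hUnn
      rw [← hcoe] at h
      exact_mod_cast h
    have hub : ∀ j, ∀ g ∈ PF.histLen k,
        PF.hprobGen M.δ M.init (M.stratStar T c k).act k g.1 g.2 ≠ 0 →
        g.1 ∉ T → PF.contE M (M.stratStar T c k) c g j ≤ u := by
      intro j g hg hW _
      have := PF.coe_contE_le_UAllow M habs hc hinit k hg hW j
      rw [← hcoe] at this
      exact_mod_cast this
    have hmaster : ∀ n, M.expTotalSteps c (M.stratStar T c k) n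
        ≤ M.expTotalSteps c (M.stratStar T c k) (k + 1) + M.alphaK T c k * u := by
      intro n
      have hprod : 0 ≤ M.alphaK T c k * u := mul_nonneg hαnn hu0
      rcases le_or_gt n (k+1) with h | h
      · have := PF.expTotalSteps_mono M (M.stratStar T c k) hc h
        linarith
      · have hn : n = k + (n - k) := by omega
        rw [hn, PF.expTotalSteps_decomp M _ k (n - k)]
        have hsum := PF.sum_contE_le M habs hc0 k (n - k) (hub (n - k))
        have hmono := PF.expTotalSteps_mono M (M.stratStar T c k) hc
          (by omega : k ≤ k + 1)
        linarith
    calc M.Val c (M.stratStar T c k)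
        ≤ ((M.expTotalSteps c (M.stratStar T c k) (k + 1) + M.alphaK T c k * u : ℝ) : EReal) :=
          PF.Val_le_of_forall_le M _ hmaster
      _ = ((M.expTotalSteps c (M.stratStar T c k) (k + 1) : ℝ) : EReal) +
            ((M.alphaK T c k : ℝ) : EReal) * (u : EReal) := by
          rw [EReal.coe_add, EReal.coe_mul]
      _ = ((M.expTotalSteps c (M.stratStar T c k) (k + 1) : ℝ) : EReal) +
            ((M.alphaK T c k : ℝ) : EReal) * M.UAllow T c := by rw [hcoe]
end
end

section
/- Let G be a POMDP with absorbing target set T, positive costs, and Supp(λ0) ∈ BeliefWin(G,T). For every k ≥ 1, the probability α_k = P^{σ*_k}_{λ0}(T is not reached within the first k steps) satisfies α_k ≤ optCost / k. -/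
open Finset Filter
open scoped Classical

set_option linter.unusedSectionVars false

noncomputable section

namespace POMDP

variable {S A Z : Type} [Fintype S] [Fintype A] [Fintype Z]

/-- initial state of a history -/
def initSt : S → List (A × S) → S
  | s, [] => s
  | _, (_, s') :: r => initSt s' r

@[simp] lemma initSt_nil (s : S) : initSt s ([] : List (A × S)) = s := rfl

@[simp] lemma initSt_cons (s : S) (a : A) (s' : S) (r : List (A × S)) :
    initSt s ((a, s') :: r) = initSt s' r := rfl

lemma initSt_append (t : S) (l : List (A × S)) (a : A) (s : S) :
    initSt t (l ++ [(a, s)]) = s := by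
  induction l generalizing t with
  | nil => rfl
  | cons p r ih => rw [List.cons_append, show p = (p.1, p.2) from rfl, initSt_cons, ih]

/-- the initial state of a history is one of its recorded states -/
lemma initSt_mem (t : S) (l : List (A × S)) :
    initSt t l = t ∨ ∃ p ∈ l, p.2 = initSt t l := by
  induction l generalizing t with
  | nil => exact Or.inl rfl
  | cons p r ih =>
    rcases ih p.2 with h | ⟨q, hq, hq2⟩
    · exact Or.inr ⟨p, List.mem_cons_self, by
        rw [show p = (p.1, p.2) from rfl, initSt_cons]; exact h.symm⟩
    · exact Or.inr ⟨q, List.mem_cons_of_mem _ hq, by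
        rw [show p = (p.1, p.2) from rfl, initSt_cons]; exact hq2⟩

def dirac (t : S) : S → ℝ := fun u => if u = t then 1 else 0

lemma dirac_nonneg (t u : S) : 0 ≤ dirac t u := by unfold dirac; split_ifs <;> norm_num

@[simp] lemma dirac_sum (t : S) : ∑ u, dirac t u = 1 := by simp [dirac]

@[simp] lemma dirac_self (t : S) : dirac t t = 1 := by simp [dirac]

/-- the kernel part (without the initial distribution) of the probability of a history -/
def kern (d : S → A → S → ℝ) (act : Hist S A → A → ℝ) : ℕ → S → List (A × S) → ℝ
  | 0, _, l => if l = [] then 1 else 0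
  | _+1, _, [] => 0
  | n+1, s, (a, s') :: rest => kern d act n s' rest * act (s', rest) a * d s' a s

@[simp] lemma kern_zero_nil (d : S → A → S → ℝ) (act : Hist S A → A → ℝ) (s : S) :
    kern d act 0 s [] = 1 := rfl

@[simp] lemma kern_zero_cons (d : S → A → S → ℝ) (act : Hist S A → A → ℝ) (s : S)
    (p : A × S) (r : List (A × S)) : kern d act 0 s (p :: r) = 0 := rfl

@[simp] lemma kern_succ_nil (d : S → A → S → ℝ) (act : Hist S A → A → ℝ) (n : ℕ) (s : S) :
    kern d act (n+1) s [] = 0 := rfl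

@[simp] lemma kern_succ_cons (d : S → A → S → ℝ) (act : Hist S A → A → ℝ) (n : ℕ) (s : S)
    (a : A) (s' : S) (rest : List (A × S)) :
    kern d act (n+1) s ((a, s') :: rest)
      = kern d act n s' rest * act (s', rest) a * d s' a s := rfl

lemma kern_eq_zero_of_len (d : S → A → S → ℝ) (act : Hist S A → A → ℝ) :
    ∀ (n : ℕ) (s : S) (l : List (A × S)), l.length ≠ n → kern d act n s l = 0 := by
  intro n
  induction n with
  | zero =>
    intro s l h
    cases l with
    | nil => simp at h
    | cons p r => rfl
  | succ n ih =>
    intro s l h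
    cases l with
    | nil => rfl
    | cons p r =>
      rcases p with ⟨a, s'⟩
      rw [kern_succ_cons, ih s' r (by simpa using h)]
      ring

lemma kern_nonneg (d : S → A → S → ℝ) (hd : ∀ s a s', 0 ≤ d s a s')
    (act : Hist S A → A → ℝ) (ha : ∀ h a, 0 ≤ act h a) :
    ∀ (n : ℕ) (s : S) (l : List (A × S)), 0 ≤ kern d act n s l := by
  intro n
  induction n with
  | zero => intro s l; cases l <;> simp
  | succ n ih =>
    intro s l
    cases l with
    | nil => simp
    | cons p r =>
      rcases p with ⟨a, s'⟩
      rw [kern_succ_cons]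
      exact mul_nonneg (mul_nonneg (ih s' r) (ha _ _)) (hd _ _ _)

/-- congruence for `kern` for act functions agreeing on histories with a
given initial state -/
lemma kern_congOn (d : S → A → S → ℝ) (act₁ act₂ : Hist S A → A → ℝ) (t : S)
    (hagree : ∀ h : Hist S A, initSt h.1 h.2 = t → act₁ h = act₂ h) :
    ∀ (n : ℕ) (s : S) (l : List (A × S)), initSt s l = t →
      kern d act₁ n s l = kern d act₂ n s l := by
  intro n
  induction n with
  | zero => intro s l _; cases l <;> rfl
  | succ n ih =>
    intro s l hin
    cases l with
    | nil => rfl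
    | cons p r =>
      rcases p with ⟨a, s'⟩
      rw [initSt_cons] at hin
      rw [kern_succ_cons, kern_succ_cons, ih s' r hin, hagree (s', r) hin]

/-- congruence for `kern` for equal act functions (up to horizon) -/
lemma kern_congLt (d : S → A → S → ℝ) (act₁ act₂ : Hist S A → A → ℝ) (m : ℕ)
    (hagree : ∀ h : Hist S A, h.2.length < m → act₁ h = act₂ h) :
    ∀ (n : ℕ), n ≤ m → ∀ (s : S) (l : List (A × S)),
      kern d act₁ n s l = kern d act₂ n s l := by
  intro n
  induction n with
  | zero => intro _ s l; cases l <;> rfl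
  | succ n ih =>
    intro hn s l
    cases l with
    | nil => rfl
    | cons p r =>
      rcases p with ⟨a, s'⟩
      by_cases hlen : r.length = n
      · rw [kern_succ_cons, kern_succ_cons, ih (Nat.le_of_succ_le hn) s' r,
          hagree (s', r) (by simp [hlen]; omega)]
      · rw [kern_succ_cons, kern_succ_cons, kern_eq_zero_of_len d act₁ n s' r hlen,
          kern_eq_zero_of_len d act₂ n s' r hlen]
        simp

/-- the set of histories of length `n` -/
def Hset (S A : Type) [Fintype S] [Fintype A] : ℕ → Finset (Hist S A)
  | 0 => Finset.univ.image fun s => (s, [])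
  | n+1 => ((Finset.univ : Finset (A × S)) ×ˢ Hset S A n).image
      fun p => (p.1.2, (p.1.1, p.2.1) :: p.2.2)

lemma mem_Hset {n : ℕ} {h : Hist S A} : h ∈ Hset S A n ↔ h.2.length = n := by
  induction n generalizing h with
  | zero =>
    rcases h with ⟨s, l⟩
    simp only [Hset, Finset.mem_image, Finset.mem_univ, true_and, Prod.mk.injEq]
    constructor
    · rintro ⟨t, ht, hl⟩; rw [← hl]; rfl
    · intro hl
      cases l with
      | nil => exact ⟨s, rfl, rfl⟩
      | cons p r => simp at hl
  | succ n ih =>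
    rcases h with ⟨t, l⟩
    simp only [Hset, Finset.mem_image, Finset.mem_product, Finset.mem_univ, true_and,
      Prod.mk.injEq]
    constructor
    · rintro ⟨⟨⟨a, u⟩, ⟨s, r⟩⟩, hmem, h1, h2⟩
      rw [← h2]
      have := ih.mp hmem
      simpa using this
    · intro hl
      cases l with
      | nil => simp at hl
      | cons p r =>
        exact ⟨⟨⟨p.1, t⟩, ⟨p.2, r⟩⟩, ih.mpr (by simpa using hl), rfl, rfl⟩

lemma sum_Hset_zero (f : Hist S A → ℝ) :
    ∑ h ∈ Hset S A 0, f h = ∑ s, f (s, []) := by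
  rw [show Hset S A 0 = Finset.univ.image (fun s => ((s, []) : Hist S A)) from rfl,
    Finset.sum_image]
  intro a _ b _ hab
  exact congrArg Prod.fst hab

lemma sum_Hset_head (n : ℕ) (f : Hist S A → ℝ) :
    ∑ h ∈ Hset S A (n+1), f h
      = ∑ h ∈ Hset S A n, ∑ a, ∑ t, f (t, (a, h.1) :: h.2) := by
  rw [show Hset S A (n+1) = ((Finset.univ : Finset (A × S)) ×ˢ Hset S A n).image
      (fun p => ((p.1.2, (p.1.1, p.2.1) :: p.2.2) : Hist S A)) from rfl, Finset.sum_image]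
  · rw [Finset.sum_product, Finset.sum_comm]
    refine Finset.sum_congr rfl fun h _ => ?_
    rw [Fintype.sum_prod_type]
  · rintro ⟨⟨a, t⟩, ⟨s, l⟩⟩ _ ⟨⟨a', t'⟩, ⟨s', l'⟩⟩ _ hab
    simp only [Prod.mk.injEq, List.cons.injEq] at hab
    obtain ⟨h1, ⟨h2, h3⟩, h4⟩ := hab
    simp_all

lemma sum_Hset_tail (n : ℕ) (f : Hist S A → ℝ) :
    ∑ h ∈ Hset S A (n+1), f h
      = ∑ s, ∑ a, ∑ h ∈ Hset S A n, f (h.1, h.2 ++ [(a, s)]) := by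
  induction n generalizing f with
  | zero =>
    rw [sum_Hset_head, sum_Hset_zero]
    simp only [sum_Hset_zero]
    rfl
  | succ n ih =>
    rw [sum_Hset_head, ih]
    refine Finset.sum_congr rfl fun s _ => Finset.sum_congr rfl fun b _ => ?_
    rw [sum_Hset_head (f := fun h => f (h.1, h.2 ++ [(b, s)]))]
    rfl

end POMDP
namespace POMDP

variable {S A Z : Type} [Fintype S] [Fintype A] [Fintype Z]

/-- a valid action kernel -/
structure IsAct (act : Hist S A → A → ℝ) : Prop where
  nonneg : ∀ h a, 0 ≤ act h a
  sum_one : ∀ h, ∑ a, act h a = 1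

lemma _root_.Strategy.isAct {O : S → Z} (σ : Strategy S A Z O) : IsAct σ.act :=
  ⟨σ.act_nonneg, σ.act_sum⟩

def shiftAct (act : Hist S A → A → ℝ) (a : A) (s : S) : Hist S A → A → ℝ :=
  fun h => act (h.1, h.2 ++ [(a, s)])

lemma IsAct.shift {act : Hist S A → A → ℝ} (h : IsAct act) (a : A) (s : S) :
    IsAct (shiftAct act a s) :=
  ⟨fun h' b => h.nonneg _ b, fun h' => h.sum_one _⟩

lemma sum_act_delta (x : ℝ) (g : A → ℝ) (hg : ∑ a, g a = 1) (dd : A → S → ℝ)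
    (hdd : ∀ a, ∑ t, dd a t = 1) : ∑ a, ∑ t, x * g a * dd a t = x := by
  simp only [← Finset.mul_sum, hdd, mul_one]
  rw [hg, mul_one]

lemma kern_shift (d : S → A → S → ℝ) (act : Hist S A → A → ℝ) (a : A) (s : S) :
    ∀ (l : List (A × S)) (n : ℕ) (t : S),
      kern d act (n+1) t (l ++ [(a, s)])
        = act (s, []) a * d s a (initSt t l) * kern d (shiftAct act a s) n t l := by
  intro l
  induction l with
  | nil =>
    intro n t
    cases n with
    | zero => simp [shiftAct]
    | succ n => simp [shiftAct]
  | cons p r ih =>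
    rcases p with ⟨b, u⟩
    intro n t
    cases n with
    | zero =>
      simp only [List.cons_append, kern_succ_cons, kern_zero_cons]
      rw [kern_eq_zero_of_len d act 0 u (r ++ [(a, s)]) (by simp)]
      ring
    | succ n =>
      simp only [List.cons_append, kern_succ_cons, initSt_cons]
      rw [ih n u]
      have hsh : act (u, r ++ [(a, s)]) b = shiftAct act a s (u, r) b := rfl
      rw [hsh]
      ring

lemma totalCostAux_append (c : S → A → ℝ) (a : A) (s : S) :
    ∀ (l : List (A × S)) (t : S),
      totalCostAux c t (l ++ [(a, s)]) = totalCostAux c t l + c s a := by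
  intro l
  induction l with
  | nil => intro t; simp [totalCostAux]
  | cons p r ih =>
    rcases p with ⟨b, u⟩
    intro t
    show totalCostAux c u (r ++ [(a,s)]) + c u b = (totalCostAux c u r + c u b) + c s a
    rw [ih u]; ring

lemma totalCostAux_nonneg (c : S → A → ℝ) (hc : ∀ s a, 0 ≤ c s a) :
    ∀ (l : List (A × S)) (t : S), 0 ≤ totalCostAux c t l := by
  intro l
  induction l with
  | nil => intro t; exact le_refl 0
  | cons p r ih =>
    rcases p with ⟨b, u⟩
    intro t
    show 0 ≤ totalCostAux c u r + c u b
    exact add_nonneg (ih u) (hc u b)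

lemma visitsT_cons (T : Set S) (t : S) (a : A) (s : S) (l : List (A × S)) :
    visitsT T ((t, (a, s) :: l) : Hist S A) ↔ t ∈ T ∨ visitsT T ((s, l) : Hist S A) := by
  simp only [visitsT, List.mem_cons]
  constructor
  · rintro (h | ⟨p, (rfl | hp), h2⟩)
    · exact Or.inl h
    · exact Or.inr (Or.inl h2)
    · exact Or.inr (Or.inr ⟨p, hp, h2⟩)
  · rintro (h | h | ⟨p, hp, h2⟩)
    · exact Or.inl h
    · exact Or.inr ⟨(a, s), Or.inl rfl, h⟩
    · exact Or.inr ⟨p, Or.inr hp, h2⟩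

lemma visitsT_append (T : Set S) (t : S) (a : A) (s : S) (l : List (A × S)) :
    visitsT T ((t, l ++ [(a, s)]) : Hist S A)
      ↔ visitsT T ((t, l) : Hist S A) ∨ s ∈ T := by
  simp only [visitsT, List.mem_append, List.mem_singleton]
  constructor
  · rintro (h | ⟨p, (hp | rfl), h2⟩)
    · exact Or.inl (Or.inl h)
    · exact Or.inl (Or.inr ⟨p, hp, h2⟩)
    · exact Or.inr h2
  · rintro ((h | ⟨p, hp, h2⟩) | h)
    · exact Or.inl h
    · exact Or.inr ⟨p, Or.inl hp, h2⟩
    · exact Or.inr ⟨(a, s), Or.inr rfl, h⟩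

lemma visitsT_initSt (T : Set S) (t : S) (l : List (A × S))
    (h : initSt t l ∈ T) : visitsT T ((t, l) : Hist S A) := by
  rcases initSt_mem t l with he | ⟨p, hp, hp2⟩
  · exact Or.inl (he ▸ h)
  · exact Or.inr ⟨p, hp, hp2 ▸ h⟩

lemma totalCostAux_ge_len (T : Set S) (c : S → A → ℝ) (hc1 : ∀ s ∉ T, ∀ a, 1 ≤ c s a)
    (hc0 : ∀ s a, 0 ≤ c s a) :
    ∀ (l : List (A × S)) (t : S), ¬ visitsT T ((t, l) : Hist S A) →
      (l.length : ℝ) ≤ totalCostAux c t l := by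
  intro l
  induction l with
  | nil => intro t _; simp [totalCostAux]
  | cons p r ih =>
    rcases p with ⟨b, u⟩
    intro t hnv
    rw [visitsT_cons] at hnv
    push_neg at hnv
    have hu : u ∉ T := fun hu => hnv.2 (Or.inl hu)
    show ((r.length + 1 : ℕ) : ℝ) ≤ totalCostAux c u r + c u b
    push_cast
    have := ih u hnv.2
    have := hc1 u hu b
    linarith

section MTc

variable (M : POMDP S A Z) (T : Set S) (c : S → A → ℝ)

/-- expected total cost over `n` steps, initial distribution `ν`, action kernel `act` -/
def ETf (ν : S → ℝ) (act : Hist S A → A → ℝ) (n : ℕ) : ℝ :=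
  ∑ h ∈ Hset S A n, ν (initSt h.1 h.2) * kern M.δ act n h.1 h.2 * totalCostH c h

/-- probability of visiting `T` within `n` steps -/
def PRf (ν : S → ℝ) (act : Hist S A → A → ℝ) (n : ℕ) : ℝ :=
  ∑ h ∈ Hset S A n, ν (initSt h.1 h.2) * kern M.δ act n h.1 h.2
    * (if visitsT T h then 1 else 0)

lemma mass_eq (ν : S → ℝ) (act : Hist S A → A → ℝ) (hact : IsAct act) :
    ∀ n, ∑ h ∈ Hset S A n, ν (initSt h.1 h.2) * kern M.δ act n h.1 h.2 = ∑ s, ν s := by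
  intro n
  induction n with
  | zero => rw [sum_Hset_zero]; simp
  | succ n ih =>
    rw [sum_Hset_head, ← ih]
    refine Finset.sum_congr rfl fun h _ => ?_
    have key := sum_act_delta (ν (initSt h.1 h.2) * kern M.δ act n h.1 h.2)
      (act (h.1, h.2)) (hact.sum_one _) (fun a t => M.δ h.1 a t) (fun a => M.δ_sum h.1 a)
    rw [← key]
    exact Finset.sum_congr rfl fun a _ => Finset.sum_congr rfl fun t _ => by
      simp only [initSt_cons, kern_succ_cons]; ring

lemma sum_initSt (g : S → ℝ) (F : Hist S A → ℝ) (n : ℕ) :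
    ∑ h ∈ Hset S A n, g (initSt h.1 h.2) * F h
      = ∑ t, g t * ∑ h ∈ Hset S A n, dirac t (initSt h.1 h.2) * F h := by
  simp only [Finset.mul_sum]
  rw [Finset.sum_comm]
  refine Finset.sum_congr rfl fun h _ => ?_
  simp only [show ∀ t, g t * (dirac t (initSt h.1 h.2) * F h)
      = if initSt h.1 h.2 = t then g t * F h else 0 from fun t => by
    unfold dirac; split_ifs <;> ring]
  rw [Finset.sum_ite_eq]
  simp

end MTc

end POMDP
namespace POMDP

variable {S A Z : Type} [Fintype S] [Fintype A] [Fintype Z]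

section MTc

variable (M : POMDP S A Z) (T : Set S) (c : S → A → ℝ)

lemma ETf_linear (ν : S → ℝ) (act : Hist S A → A → ℝ) (n : ℕ) :
    ETf M c ν act n = ∑ t, ν t * ETf M c (dirac t) act n := by
  unfold ETf
  have e1 : ∀ h ∈ Hset S A n, ν (initSt h.1 h.2) * kern M.δ act n h.1 h.2 * totalCostH c h
      = ν (initSt h.1 h.2) * (kern M.δ act n h.1 h.2 * totalCostH c h) := fun h _ => by ring
  rw [Finset.sum_congr rfl e1, sum_initSt ν _ n]
  refine Finset.sum_congr rfl fun t _ => ?_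
  congr 1
  exact Finset.sum_congr rfl fun h _ => by ring

lemma PRf_linear (ν : S → ℝ) (act : Hist S A → A → ℝ) (n : ℕ) :
    PRf M T ν act n = ∑ t, ν t * PRf M T (dirac t) act n := by
  unfold PRf
  have e1 : ∀ h ∈ Hset S A n, ν (initSt h.1 h.2) * kern M.δ act n h.1 h.2
        * (if visitsT T h then 1 else 0)
      = ν (initSt h.1 h.2) * (kern M.δ act n h.1 h.2 * (if visitsT T h then 1 else 0)) :=
    fun h _ => by ring
  rw [Finset.sum_congr rfl e1, sum_initSt ν _ n]
  refine Finset.sum_congr rfl fun t _ => ?_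
  congr 1
  exact Finset.sum_congr rfl fun h _ => by ring

lemma ETf_smul (ν : S → ℝ) (r : ℝ) (act : Hist S A → A → ℝ) (n : ℕ) :
    ETf M c (fun t => r * ν t) act n = r * ETf M c ν act n := by
  unfold ETf
  rw [Finset.mul_sum]
  exact Finset.sum_congr rfl fun h _ => by ring

lemma ETf_nonneg (ν : S → ℝ) (hν : ∀ s, 0 ≤ ν s) (act : Hist S A → A → ℝ)
    (hact : IsAct act) (hc : ∀ s a, 0 ≤ c s a) (n : ℕ) : 0 ≤ ETf M c ν act n := by
  refine Finset.sum_nonneg fun h _ => ?_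
  exact mul_nonneg (mul_nonneg (hν _) (kern_nonneg _ M.δ_nonneg _ hact.nonneg _ _ _))
    (totalCostAux_nonneg c hc _ _)

lemma PRf_nonneg (ν : S → ℝ) (hν : ∀ s, 0 ≤ ν s) (act : Hist S A → A → ℝ)
    (hact : IsAct act) (n : ℕ) : 0 ≤ PRf M T ν act n := by
  refine Finset.sum_nonneg fun h _ => ?_
  refine mul_nonneg (mul_nonneg (hν _) (kern_nonneg _ M.δ_nonneg _ hact.nonneg _ _ _)) ?_
  split_ifs <;> norm_num

lemma PRf_le_mass (ν : S → ℝ) (hν : ∀ s, 0 ≤ ν s) (act : Hist S A → A → ℝ)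
    (hact : IsAct act) (n : ℕ) : PRf M T ν act n ≤ ∑ s, ν s := by
  rw [← mass_eq M ν act hact n]
  refine Finset.sum_le_sum fun h _ => ?_
  have h0 : 0 ≤ ν (initSt h.1 h.2) * kern M.δ act n h.1 h.2 :=
    mul_nonneg (hν _) (kern_nonneg _ M.δ_nonneg _ hact.nonneg _ _ _)
  nth_rewrite 2 [show ν (initSt h.1 h.2) * kern M.δ act n h.1 h.2
    = ν (initSt h.1 h.2) * kern M.δ act n h.1 h.2 * 1 from (mul_one _).symm]
  refine mul_le_mul_of_nonneg_left ?_ h0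
  split_ifs <;> norm_num

lemma PRf_mono (ν : S → ℝ) (hν : ∀ s, 0 ≤ ν s) (act : Hist S A → A → ℝ)
    (hact : IsAct act) (n : ℕ) : PRf M T ν act n ≤ PRf M T ν act (n+1) := by
  unfold PRf
  rw [sum_Hset_head]
  refine Finset.sum_le_sum fun h _ => ?_
  have key := sum_act_delta
    (ν (initSt h.1 h.2) * kern M.δ act n h.1 h.2 * (if visitsT T h then 1 else 0))
    (act (h.1, h.2)) (hact.sum_one _) (fun a t => M.δ h.1 a t) (fun a => M.δ_sum h.1 a)
  rw [← key]
  refine Finset.sum_le_sum fun a _ => Finset.sum_le_sum fun t _ => ?_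
  simp only [initSt_cons, kern_succ_cons]
  have hx : 0 ≤ ν (initSt h.1 h.2) * kern M.δ act n h.1 h.2 * act (h.1, h.2) a
      * M.δ h.1 a t :=
    mul_nonneg (mul_nonneg (mul_nonneg (hν _)
      (kern_nonneg _ M.δ_nonneg _ hact.nonneg _ _ _)) (hact.nonneg _ _)) (M.δ_nonneg _ _ _)
  have hind : (if visitsT T h then (1:ℝ) else 0)
      ≤ (if visitsT T ((t, (a, h.1) :: h.2) : Hist S A) then (1:ℝ) else 0) := by
    by_cases hv : visitsT T h
    · rw [if_pos hv, if_pos ((visitsT_cons T t a h.1 h.2).mpr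
        (Or.inr (show visitsT T ((h.1, h.2) : Hist S A) from hv)))]
    · rw [if_neg hv]
      split_ifs <;> norm_num
  calc ν (initSt h.1 h.2) * kern M.δ act n h.1 h.2 * (if visitsT T h then (1:ℝ) else 0)
        * act (h.1, h.2) a * M.δ h.1 a t
      = (ν (initSt h.1 h.2) * kern M.δ act n h.1 h.2 * act (h.1, h.2) a * M.δ h.1 a t)
        * (if visitsT T h then (1:ℝ) else 0) := by ring
    _ ≤ (ν (initSt h.1 h.2) * kern M.δ act n h.1 h.2 * act (h.1, h.2) a * M.δ h.1 a t)
        * (if visitsT T ((t, (a, h.1) :: h.2) : Hist S A) then (1:ℝ) else 0) :=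
        mul_le_mul_of_nonneg_left hind hx
    _ = ν (initSt h.1 h.2) * (kern M.δ act n h.1 h.2 * act (h.1, h.2) a * M.δ h.1 a t)
        * (if visitsT T ((t, (a, h.1) :: h.2) : Hist S A) then (1:ℝ) else 0) := by ring

lemma ETf_mono (ν : S → ℝ) (hν : ∀ s, 0 ≤ ν s) (act : Hist S A → A → ℝ)
    (hact : IsAct act) (hc : ∀ s a, 0 ≤ c s a) (n : ℕ) :
    ETf M c ν act n ≤ ETf M c ν act (n+1) := by
  unfold ETf
  rw [sum_Hset_head]
  refine Finset.sum_le_sum fun h _ => ?_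
  have key := sum_act_delta
    (ν (initSt h.1 h.2) * kern M.δ act n h.1 h.2 * totalCostH c h)
    (act (h.1, h.2)) (hact.sum_one _) (fun a t => M.δ h.1 a t) (fun a => M.δ_sum h.1 a)
  rw [← key]
  refine Finset.sum_le_sum fun a _ => Finset.sum_le_sum fun t _ => ?_
  simp only [initSt_cons, kern_succ_cons]
  have hx : 0 ≤ ν (initSt h.1 h.2) * kern M.δ act n h.1 h.2 * act (h.1, h.2) a
      * M.δ h.1 a t :=
    mul_nonneg (mul_nonneg (mul_nonneg (hν _)
      (kern_nonneg _ M.δ_nonneg _ hact.nonneg _ _ _)) (hact.nonneg _ _)) (M.δ_nonneg _ _ _)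
  have hcost : totalCostH c h ≤ totalCostH c ((t, (a, h.1) :: h.2) : Hist S A) := by
    show totalCostH c h ≤ totalCostAux c h.1 h.2 + c h.1 a
    have := hc h.1 a
    unfold totalCostH
    linarith
  calc ν (initSt h.1 h.2) * kern M.δ act n h.1 h.2 * totalCostH c h
        * act (h.1, h.2) a * M.δ h.1 a t
      = (ν (initSt h.1 h.2) * kern M.δ act n h.1 h.2 * act (h.1, h.2) a * M.δ h.1 a t)
        * totalCostH c h := by ring
    _ ≤ (ν (initSt h.1 h.2) * kern M.δ act n h.1 h.2 * act (h.1, h.2) a * M.δ h.1 a t)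
        * totalCostH c ((t, (a, h.1) :: h.2) : Hist S A) :=
        mul_le_mul_of_nonneg_left hcost hx
    _ = ν (initSt h.1 h.2) * (kern M.δ act n h.1 h.2 * act (h.1, h.2) a * M.δ h.1 a t)
        * totalCostH c ((t, (a, h.1) :: h.2) : Hist S A) := by ring

lemma ETf_ge_n_mul (ν : S → ℝ) (hν : ∀ s, 0 ≤ ν s) (hν1 : ∑ s, ν s = 1)
    (act : Hist S A → A → ℝ) (hact : IsAct act) (hc : ∀ s a, 0 ≤ c s a)
    (hc1 : ∀ s ∉ T, ∀ a, 1 ≤ c s a) (n : ℕ) :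
    (n : ℝ) * (1 - PRf M T ν act n) ≤ ETf M c ν act n := by
  have hm : ∑ h ∈ Hset S A n, ν (initSt h.1 h.2) * kern M.δ act n h.1 h.2 = 1 := by
    rw [mass_eq M ν act hact n, hν1]
  have e : (n : ℝ) * (1 - PRf M T ν act n)
      = ∑ h ∈ Hset S A n, ν (initSt h.1 h.2) * kern M.δ act n h.1 h.2
          * ((n : ℝ) * (1 - (if visitsT T h then 1 else 0))) := by
    have e2 : ∑ h ∈ Hset S A n, ν (initSt h.1 h.2) * kern M.δ act n h.1 h.2
          * ((n : ℝ) * (1 - (if visitsT T h then 1 else 0)))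
        = (n : ℝ) * ((∑ h ∈ Hset S A n, ν (initSt h.1 h.2) * kern M.δ act n h.1 h.2)
            - ∑ h ∈ Hset S A n, ν (initSt h.1 h.2) * kern M.δ act n h.1 h.2
              * (if visitsT T h then 1 else 0)) := by
      rw [← Finset.sum_sub_distrib, Finset.mul_sum]
      exact Finset.sum_congr rfl fun h _ => by ring
    rw [e2, hm, PRf]
  rw [e]
  refine Finset.sum_le_sum fun h hmem => ?_
  have h0 : 0 ≤ ν (initSt h.1 h.2) * kern M.δ act n h.1 h.2 :=
    mul_nonneg (hν _) (kern_nonneg _ M.δ_nonneg _ hact.nonneg _ _ _)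
  rw [mul_assoc, mul_assoc]
  refine mul_le_mul_of_nonneg_left ?_ (hν _)
  refine mul_le_mul_of_nonneg_left ?_ (kern_nonneg _ M.δ_nonneg _ hact.nonneg _ _ _)
  by_cases hv : visitsT T h
  · rw [if_pos hv]
    simpa [totalCostH] using totalCostAux_nonneg c hc h.2 h.1
  · rw [if_neg hv]
    have hlen : (h.2.length : ℝ) = (n : ℝ) := by exact_mod_cast mem_Hset.mp hmem
    have := totalCostAux_ge_len T c hc1 hc h.2 h.1 (by rcases h with ⟨t, l⟩; exact hv)
    rw [hlen] at this
    unfold totalCostH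
    linarith

end MTc

end POMDP
namespace POMDP

variable {S A Z : Type} [Fintype S] [Fintype A] [Fintype Z]

section MTc

variable (M : POMDP S A Z) (T : Set S) (c : S → A → ℝ)

lemma ETf_succ (ν : S → ℝ) (act : Hist S A → A → ℝ) (hact : IsAct act) (n : ℕ) :
    ETf M c ν act (n+1) = ∑ s, ∑ a, ν s * act (s, []) a *
      (c s a + ∑ t, M.δ s a t * ETf M c (dirac t) (shiftAct act a s) n) := by
  unfold ETf
  rw [sum_Hset_tail]
  refine Finset.sum_congr rfl fun s _ => Finset.sum_congr rfl fun a _ => ?_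
  have e1 : ∀ h ∈ Hset S A n,
      ν (initSt h.1 (h.2 ++ [(a, s)])) * kern M.δ act (n+1) h.1 (h.2 ++ [(a, s)])
        * totalCostH c (h.1, h.2 ++ [(a, s)])
      = ν s * act (s, []) a * (M.δ s a (initSt h.1 h.2) *
          (kern M.δ (shiftAct act a s) n h.1 h.2 * (totalCostH c h + c s a))) := by
    intro h _
    rw [initSt_append, kern_shift,
      show totalCostH c ((h.1, h.2 ++ [(a, s)]) : Hist S A)
        = totalCostAux c h.1 h.2 + c s a from totalCostAux_append c a s h.2 h.1]
    unfold totalCostH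
    ring
  rw [Finset.sum_congr rfl e1, ← Finset.mul_sum]
  congr 1
  have esplit : ∑ h ∈ Hset S A n, M.δ s a (initSt h.1 h.2)
        * (kern M.δ (shiftAct act a s) n h.1 h.2 * (totalCostH c h + c s a))
      = (∑ h ∈ Hset S A n, M.δ s a (initSt h.1 h.2)
          * (kern M.δ (shiftAct act a s) n h.1 h.2 * totalCostH c h))
        + (∑ h ∈ Hset S A n, M.δ s a (initSt h.1 h.2)
            * kern M.δ (shiftAct act a s) n h.1 h.2) * c s a := by
    rw [Finset.sum_mul, ← Finset.sum_add_distrib]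
    exact Finset.sum_congr rfl fun h _ => by ring
  rw [esplit]
  rw [show ∑ h ∈ Hset S A n, M.δ s a (initSt h.1 h.2)
        * kern M.δ (shiftAct act a s) n h.1 h.2 = ∑ u, M.δ s a u from
    mass_eq M (fun t => M.δ s a t) _ (hact.shift a s) n, M.δ_sum, one_mul]
  rw [sum_initSt (fun t => M.δ s a t) _ n, add_comm]
  congr 1
  refine Finset.sum_congr rfl fun t _ => ?_
  congr 1
  exact Finset.sum_congr rfl fun h _ => by ring

lemma PRf_succ (ν : S → ℝ) (act : Hist S A → A → ℝ) (hact : IsAct act) (n : ℕ) :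
    PRf M T ν act (n+1) = ∑ s, ∑ a, ν s * act (s, []) a *
      (if s ∈ T then 1 else
        ∑ t, M.δ s a t * PRf M T (dirac t) (shiftAct act a s) n) := by
  unfold PRf
  rw [sum_Hset_tail]
  refine Finset.sum_congr rfl fun s _ => Finset.sum_congr rfl fun a _ => ?_
  have e1 : ∀ h ∈ Hset S A n,
      ν (initSt h.1 (h.2 ++ [(a, s)])) * kern M.δ act (n+1) h.1 (h.2 ++ [(a, s)])
        * (if visitsT T ((h.1, h.2 ++ [(a, s)]) : Hist S A) then 1 else 0)
      = ν s * act (s, []) a * (M.δ s a (initSt h.1 h.2) *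
          (kern M.δ (shiftAct act a s) n h.1 h.2 *
            (if (visitsT T ((h.1, h.2) : Hist S A) ∨ s ∈ T) then 1 else 0))) := by
    intro h _
    rw [initSt_append, kern_shift,
      show (if visitsT T ((h.1, h.2 ++ [(a, s)]) : Hist S A) then (1:ℝ) else 0)
        = (if (visitsT T ((h.1, h.2) : Hist S A) ∨ s ∈ T) then (1:ℝ) else 0) from by
        rw [if_congr (visitsT_append T h.1 a s h.2) rfl rfl]]
    ring
  rw [Finset.sum_congr rfl e1, ← Finset.mul_sum]
  congr 1
  by_cases hsT : s ∈ T
  · rw [if_pos hsT]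
    have e2 : ∀ h ∈ Hset S A n, M.δ s a (initSt h.1 h.2) *
          (kern M.δ (shiftAct act a s) n h.1 h.2 *
            (if (visitsT T ((h.1, h.2) : Hist S A) ∨ s ∈ T) then 1 else 0))
        = M.δ s a (initSt h.1 h.2) * kern M.δ (shiftAct act a s) n h.1 h.2 := by
      intro h _
      rw [if_pos (Or.inr hsT), mul_one]
    rw [Finset.sum_congr rfl e2,
      mass_eq M (fun t => M.δ s a t) _ (hact.shift a s) n, M.δ_sum]
  · rw [if_neg hsT]
    have e2 : ∀ h ∈ Hset S A n, M.δ s a (initSt h.1 h.2) *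
          (kern M.δ (shiftAct act a s) n h.1 h.2 *
            (if (visitsT T ((h.1, h.2) : Hist S A) ∨ s ∈ T) then 1 else 0))
        = M.δ s a (initSt h.1 h.2) * (kern M.δ (shiftAct act a s) n h.1 h.2 *
            (if visitsT T ((h.1, h.2) : Hist S A) then 1 else 0)) := by
      intro h _
      congr 2
      rw [if_congr (or_iff_left hsT) rfl rfl]
    rw [Finset.sum_congr rfl e2, sum_initSt (fun t => M.δ s a t) _ n]
    refine Finset.sum_congr rfl fun t _ => ?_
    congr 1
    exact Finset.sum_congr rfl fun h _ => by simp only [Prod.mk.eta]; ring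

lemma hprobAux_eq_kern (M' : POMDP S A Z) (σ : Strategy S A Z M'.obs) :
    ∀ (n : ℕ) (s : S) (l : List (A × S)),
      M'.hprobAux σ n s l = M'.init (initSt s l) * kern M'.δ σ.act n s l := by
  intro n
  induction n with
  | zero =>
    intro s l
    cases l with
    | nil => simp [hprobAux]
    | cons p r => simp [hprobAux]
  | succ n ih =>
    intro s l
    cases l with
    | nil => simp [hprobAux]
    | cons p r =>
      rcases p with ⟨a, s'⟩
      show M'.hprobAux σ n s' r * σ.act (s', r) a * M'.δ s' a s = _
      rw [ih s' r, initSt_cons, kern_succ_cons]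
      ring

lemma probReachBy_eq_PRf (M' : POMDP S A Z) (hδ : M'.δ = M.δ)
    (σ : Strategy S A Z M'.obs) (n : ℕ) :
    M'.probReachBy T σ n = PRf M T M'.init σ.act n := by
  unfold probReachBy PRf
  rw [tsum_eq_sum (s := Hset S A n)
    (f := fun h => if visitsT T h then M'.hprob σ n h else 0)]
  · refine Finset.sum_congr rfl fun h _ => ?_
    rw [hprob, hprobAux_eq_kern, hδ]
    by_cases hv : visitsT T h
    · rw [if_pos hv, if_pos hv, mul_one]
    · rw [if_neg hv, if_neg hv, mul_zero]
  · intro h hh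
    have : h.2.length ≠ n := fun e => hh (mem_Hset.mpr e)
    rw [hprob, hprobAux_eq_kern, kern_eq_zero_of_len _ _ _ _ _ this, mul_zero]
    simp

lemma expTotalSteps_eq_ETf (M' : POMDP S A Z) (hδ : M'.δ = M.δ)
    (σ : Strategy S A Z M'.obs) (n : ℕ) :
    M'.expTotalSteps c σ n = ETf M c M'.init σ.act n := by
  unfold expTotalSteps ETf
  rw [tsum_eq_sum (s := Hset S A n) (f := fun h => M'.hprob σ n h * totalCostH c h)]
  · refine Finset.sum_congr rfl fun h _ => ?_
    rw [hprob, hprobAux_eq_kern, hδ]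
  · intro h hh
    have : h.2.length ≠ n := fun e => hh (mem_Hset.mpr e)
    rw [hprob, hprobAux_eq_kern, kern_eq_zero_of_len _ _ _ _ _ this, mul_zero, zero_mul]

lemma probReach_eq_iSup_PRf (M' : POMDP S A Z) (hδ : M'.δ = M.δ)
    (σ : Strategy S A Z M'.obs) :
    M'.probReach T σ = ⨆ n, PRf M T M'.init σ.act n := by
  unfold probReach
  exact iSup_congr (probReachBy_eq_PRf M T M' hδ σ)

end MTc

end POMDP
namespace POMDP

variable {S A Z : Type} [Fintype S] [Fintype A] [Fintype Z]

lemma sup_combo {ι : Type} [Fintype ι] (w : ι → ℝ) (v : ι → ℕ → ℝ)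
    (hw0 : ∀ i, 0 ≤ w i) (hw1 : ∑ i, w i = 1) (hv1 : ∀ i n, v i n ≤ 1)
    (hsup : ⨆ n, ∑ i, w i * v i n = 1) (i0 : ι) (hpos : 0 < w i0) :
    ⨆ n, v i0 n = 1 := by
  have hbdd : ∀ i, BddAbove (Set.range (v i)) :=
    fun i => ⟨1, by rintro x ⟨n, rfl⟩; exact hv1 i n⟩
  have hL1 : ∀ i, (⨆ n, v i n) ≤ 1 := fun i => ciSup_le (hv1 i)
  have hge : 1 ≤ ∑ i, w i * (⨆ n, v i n) := by
    rw [← hsup]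
    exact ciSup_le fun n => Finset.sum_le_sum fun i _ =>
      mul_le_mul_of_nonneg_left (le_ciSup (hbdd i) n) (hw0 i)
  by_contra hne
  have hlt : (⨆ n, v i0 n) < 1 := lt_of_le_of_ne (hL1 i0) hne
  have hstrict : ∑ i, w i * (⨆ n, v i n) < ∑ i, w i * 1 := by
    refine Finset.sum_lt_sum (fun i _ => mul_le_mul_of_nonneg_left (hL1 i) (hw0 i))
      ⟨i0, Finset.mem_univ _, mul_lt_mul_of_pos_left hlt hpos⟩
  simp only [mul_one] at hstrict
  rw [hw1] at hstrict
  linarith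

lemma sup_mix {ι : Type} [Fintype ι] (w : ι → ℝ) (v : ι → ℕ → ℝ)
    (hw0 : ∀ i, 0 ≤ w i) (hw1 : ∑ i, w i = 1)
    (hv1 : ∀ i n, v i n ≤ 1) (hmono : ∀ i, Monotone (v i))
    (hwin : ∀ i, 0 < w i → ⨆ n, v i n = 1) :
    ⨆ n, ∑ i, w i * v i n = 1 := by
  have hub : ∀ n, ∑ i, w i * v i n ≤ 1 := fun n => by
    calc ∑ i, w i * v i n ≤ ∑ i, w i * 1 :=
          Finset.sum_le_sum fun i _ => mul_le_mul_of_nonneg_left (hv1 i n) (hw0 i)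
      _ = 1 := by simp [hw1]
  refine le_antisymm (ciSup_le hub) ?_
  refine le_of_forall_pos_le_add fun ε hε => ?_
  have hex : ∀ i, ∃ n, 0 < w i → 1 - ε < v i n := fun i => by
    by_cases hwi : 0 < w i
    · have h1 : 1 - ε < ⨆ n, v i n := by rw [hwin i hwi]; linarith
      obtain ⟨n, hn⟩ := exists_lt_of_lt_ciSup h1
      exact ⟨n, fun _ => hn⟩
    · exact ⟨0, fun hcon => absurd hcon hwi⟩
  choose nf hnf using hex
  set N := Finset.univ.sup nf with hN
  have key : ∀ i, 0 < w i → 1 - ε < v i N := fun i hwi =>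
    lt_of_lt_of_le (hnf i hwi) (hmono i (Finset.le_sup (Finset.mem_univ i)))
  have hstep : 1 - ε ≤ ∑ i, w i * v i N := by
    calc 1 - ε = ∑ i, w i * (1 - ε) := by rw [← Finset.sum_mul, hw1, one_mul]
      _ ≤ ∑ i, w i * v i N := by
          refine Finset.sum_le_sum fun i _ => ?_
          rcases lt_or_eq_of_le (hw0 i) with hwi | hwi
          · exact mul_le_mul_of_nonneg_left (le_of_lt (key i hwi)) (hw0 i)
          · rw [← hwi]; simp
  have hbB : BddAbove (Set.range fun n => ∑ i, w i * v i n) :=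
    ⟨1, by rintro x ⟨n, rfl⟩; exact hub n⟩
  have hsup' : ∑ i, w i * v i N ≤ ⨆ n, ∑ i, w i * v i n := le_ciSup hbB N
  linarith

lemma sup_shift (f : ℕ → ℝ) (hmono : Monotone f) (hub : ∀ n, f n ≤ 1) :
    ⨆ n, f (n+1) = ⨆ n, f n := by
  have hb : BddAbove (Set.range f) := ⟨1, by rintro x ⟨n, rfl⟩; exact hub n⟩
  have hb' : BddAbove (Set.range fun n => f (n+1)) :=
    ⟨1, by rintro x ⟨n, rfl⟩; exact hub (n+1)⟩
  refine le_antisymm (ciSup_le fun n => le_ciSup hb (n+1)) (ciSup_le fun n => ?_)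
  exact le_trans (hmono (Nat.le_succ n)) (le_ciSup hb' n)

section MTc

variable (M : POMDP S A Z) (T : Set S) (c : S → A → ℝ)

lemma absorb_eq (habs : M.Absorbing T) {s : S} (hs : s ∈ T) {a : A} {t : S}
    (h : 0 < M.δ s a t) : t = s := by
  by_contra hne
  have h1 := M.δ_sum s a
  have h2 : M.δ s a s = 1 := habs s hs a
  have h3 : M.δ s a s + M.δ s a t ≤ ∑ t', M.δ s a t' := by
    rw [show M.δ s a s + M.δ s a t = ∑ x ∈ ({s, t} : Finset S), M.δ s a x from
      (Finset.sum_pair (fun he => hne he.symm)).symm]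
    exact Finset.sum_le_sum_of_subset_of_nonneg (Finset.subset_univ _)
      (fun i _ _ => M.δ_nonneg _ _ _)
  rw [h1, h2] at h3
  linarith

lemma win_T {t : S} (ht : t ∈ T) (act : Hist S A → A → ℝ) (hact : IsAct act) (n : ℕ) :
    PRf M T (dirac t) act n = 1 := by
  unfold PRf
  have e : ∀ h ∈ Hset S A n,
      dirac t (initSt h.1 h.2) * kern M.δ act n h.1 h.2 * (if visitsT T h then 1 else 0)
        = dirac t (initSt h.1 h.2) * kern M.δ act n h.1 h.2 := by
    intro h _
    by_cases he : initSt h.1 h.2 = t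
    · rw [if_pos (show visitsT T h from by
        have := visitsT_initSt T h.1 h.2 (he ▸ ht)
        simpa using this), mul_one]
    · rw [show dirac t (initSt h.1 h.2) = 0 from by unfold dirac; rw [if_neg he]]
      ring
  rw [Finset.sum_congr rfl e, mass_eq M (dirac t) act hact n, dirac_sum]

lemma PRf_monotone (ν : S → ℝ) (hν : ∀ s, 0 ≤ ν s) (act : Hist S A → A → ℝ)
    (hact : IsAct act) : Monotone (fun n => PRf M T ν act n) :=
  monotone_nat_of_le_succ (fun n => PRf_mono M T ν hν act hact n)

lemma win_mix (act : Hist S A → A → ℝ) (hact : IsAct act) (ν : S → ℝ)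
    (hν0 : ∀ s, 0 ≤ ν s) (hν1 : ∑ s, ν s = 1)
    (hwin : ∀ t, 0 < ν t → ⨆ n, PRf M T (dirac t) act n = 1) :
    ⨆ n, PRf M T ν act n = 1 := by
  have e : (fun n => PRf M T ν act n) = fun n => ∑ t, ν t * PRf M T (dirac t) act n :=
    funext fun n => PRf_linear M T ν act n
  rw [e]
  refine sup_mix ν _ hν0 hν1 (fun t n => ?_) (fun t => ?_) hwin
  · calc PRf M T (dirac t) act n ≤ ∑ u, dirac t u :=
        PRf_le_mass M T (dirac t) (dirac_nonneg t) act hact n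
      _ = 1 := dirac_sum t
  · exact PRf_monotone M T (dirac t) (dirac_nonneg t) act hact

lemma win_step (σ : Strategy S A Z M.obs) (ν : S → ℝ) (hν0 : ∀ s, 0 ≤ ν s)
    (hν1 : ∑ s, ν s = 1) (hwin : ⨆ n, PRf M T ν σ.act n = 1)
    {s : S} (hs : 0 < ν s) (hsT : s ∉ T) {a : A} (ha : 0 < σ.act (s, []) a)
    {t : S} (ht : 0 < M.δ s a t) :
    ⨆ n, PRf M T (dirac t) (shiftAct σ.act a s) n = 1 := by
  have hdec : ∀ n, PRf M T ν σ.act (n+1)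
      = ∑ i : S × A × S, (ν i.1 * σ.act (i.1, []) i.2.1 * M.δ i.1 i.2.1 i.2.2)
        * (if i.1 ∈ T then 1
            else PRf M T (dirac i.2.2) (shiftAct σ.act i.2.1 i.1) n) := by
    intro n
    rw [PRf_succ M T ν σ.act σ.isAct n, Fintype.sum_prod_type]
    refine Finset.sum_congr rfl fun s' _ => ?_
    rw [Fintype.sum_prod_type]
    refine Finset.sum_congr rfl fun a' _ => ?_
    by_cases hT : s' ∈ T
    · simp only [if_pos hT, mul_one]
      rw [← Finset.mul_sum, M.δ_sum, mul_one]
    · simp only [if_neg hT]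
      rw [Finset.mul_sum]
      exact Finset.sum_congr rfl fun t' _ => by ring
  have hsup : ⨆ n, ∑ i : S × A × S,
      (ν i.1 * σ.act (i.1, []) i.2.1 * M.δ i.1 i.2.1 i.2.2)
        * (if i.1 ∈ T then 1
            else PRf M T (dirac i.2.2) (shiftAct σ.act i.2.1 i.1) n) = 1 := by
    have e : (fun n => ∑ i : S × A × S,
        (ν i.1 * σ.act (i.1, []) i.2.1 * M.δ i.1 i.2.1 i.2.2)
          * (if i.1 ∈ T then 1
              else PRf M T (dirac i.2.2) (shiftAct σ.act i.2.1 i.1) n))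
        = fun n => PRf M T ν σ.act (n+1) := funext fun n => (hdec n).symm
    rw [e, sup_shift _ (PRf_monotone M T ν hν0 σ.act σ.isAct)
      (fun n => le_of_le_of_eq (PRf_le_mass M T ν hν0 σ.act σ.isAct n) hν1), hwin]
  have hres := sup_combo
    (fun i : S × A × S => ν i.1 * σ.act (i.1, []) i.2.1 * M.δ i.1 i.2.1 i.2.2)
    (fun i n => if i.1 ∈ T then 1
        else PRf M T (dirac i.2.2) (shiftAct σ.act i.2.1 i.1) n)
    (fun i => mul_nonneg (mul_nonneg (hν0 _) (σ.act_nonneg _ _)) (M.δ_nonneg _ _ _))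
    (by
      rw [Fintype.sum_prod_type]
      have e : ∀ s', ∑ p : A × S, ν s' * σ.act (s', []) p.1 * M.δ s' p.1 p.2 = ν s' := by
        intro s'
        rw [Fintype.sum_prod_type]
        exact sum_act_delta (ν s') (σ.act (s', [])) (σ.act_sum _)
          (fun a' t' => M.δ s' a' t') (fun a' => M.δ_sum s' a')
      rw [Finset.sum_congr rfl (fun s' _ => e s'), hν1])
    (fun i n => by
      show (if i.1 ∈ T then (1:ℝ)
        else PRf M T (dirac i.2.2) (shiftAct σ.act i.2.1 i.1) n) ≤ 1
      split_ifs
      · exact le_refl 1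
      · calc PRf M T (dirac i.2.2) (shiftAct σ.act i.2.1 i.1) n
            ≤ ∑ u, dirac i.2.2 u := PRf_le_mass M T _ (dirac_nonneg _)
              _ (σ.isAct.shift _ _) n
          _ = 1 := dirac_sum _)
    hsup (s, a, t)
    (show (0:ℝ) < ν s * σ.act (s, []) a * M.δ s a t from mul_pos (mul_pos hs ha) ht)
  simpa only [if_neg hsT] using hres

end MTc

end POMDP
namespace POMDP

variable {S A Z : Type} [Fintype S] [Fintype A] [Fintype Z]

section MTc

variable (M : POMDP S A Z) (T : Set S) (c : S → A → ℝ)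

lemma act_empty_eq (σ : Strategy S A Z M.obs) {s s' : S} (hobs : M.obs s = M.obs s') :
    σ.act (s, []) = σ.act (s', []) :=
  σ.obsBased _ _ (by simp [obsHist, hobs])

lemma shiftAct_obs_eq (σ : Strategy S A Z M.obs) {s s' : S} (hobs : M.obs s = M.obs s')
    (a : A) : shiftAct σ.act a s = shiftAct σ.act a s' := by
  funext h
  exact σ.obsBased (h.1, h.2 ++ [(a, s)]) (h.1, h.2 ++ [(a, s')])
    (by simp [obsHist, hobs])

def shiftStrat (σ : Strategy S A Z M.obs) (a : A) (s : S) : Strategy S A Z M.obs where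
  act := shiftAct σ.act a s
  act_nonneg := fun h b => σ.act_nonneg _ b
  act_sum := fun h => σ.act_sum _
  obsBased := fun h h' he => σ.obsBased _ _ (by
    simp only [obsHist, Prod.mk.injEq] at he ⊢
    exact ⟨he.1, by rw [List.map_append, List.map_append, he.2]⟩)

@[simp] lemma shiftStrat_act (σ : Strategy S A Z M.obs) (a : A) (s : S) :
    (M.shiftStrat σ a s).act = shiftAct σ.act a s := rfl

lemma suppF_pos {ν : S → ℝ} (hν : ∀ s, 0 ≤ ν s) {s : S} : s ∈ suppF ν ↔ 0 < ν s := by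
  simp only [suppF, Finset.mem_filter, Finset.mem_univ, true_and]
  exact ⟨fun h => lt_of_le_of_ne (hν s) (Ne.symm h), fun h => ne_of_gt h⟩

lemma uniformS_pos {U : Finset S} (hU : U.Nonempty) {s : S} (hs : s ∈ U) :
    0 < uniformS U s := by
  unfold uniformS
  rw [if_pos hs]
  exact inv_pos.mpr (by exact_mod_cast Finset.card_pos.mpr hU)

lemma suppF_uniformS (U : Finset S) (hU : U.Nonempty) : suppF (uniformS U) = U := by
  ext s
  simp only [suppF, Finset.mem_filter, Finset.mem_univ, true_and]
  by_cases h : s ∈ U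
  · exact iff_of_true (ne_of_gt (uniformS_pos hU h)) h
  · refine iff_of_false ?_ h
    simp only [uniformS, if_neg h, ne_eq, not_not]

lemma mem_updateF {U : Finset S} {z : Z} {a : A} {t : S} :
    t ∈ M.updateF U z a ↔ M.obs t = z ∧ ∃ s ∈ U, 0 < M.δ s a t := by
  simp [updateF]

lemma beliefWin_of (U : Finset S) (hU : U.Nonempty)
    (hobs : ∀ s ∈ U, ∀ s' ∈ U, M.obs s = M.obs s') (σ : Strategy S A Z M.obs)
    (hw : ⨆ n, PRf M T (uniformS U) σ.act n = 1) : U ∈ M.BeliefWin T := by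
  refine ⟨hU, hobs, σ, ?_⟩
  show (M.reinit U hU hobs).probReach T σ = 1
  rw [probReach_eq_iSup_PRf M T (M.reinit U hU hobs) rfl σ]
  exact hw

lemma beliefWin_elim {U : Finset S} (hUW : U ∈ M.BeliefWin T) :
    ∃ (_ : U.Nonempty) (_ : ∀ s ∈ U, ∀ s' ∈ U, M.obs s = M.obs s'),
      ∃ σ : Strategy S A Z M.obs, ⨆ n, PRf M T (uniformS U) σ.act n = 1 := by
  obtain ⟨hUne, hobs, σ, hAS⟩ := hUW
  refine ⟨hUne, hobs, σ, ?_⟩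
  have hAS' := hAS
  unfold AlmostSure at hAS'
  rw [probReach_eq_iSup_PRf M T (M.reinit U hUne hobs) rfl σ] at hAS'
  exact hAS'

lemma win_dirac_update (habs : M.Absorbing T) (σ : Strategy S A Z M.obs) (ν : S → ℝ)
    (hν0 : ∀ s, 0 ≤ ν s) (hν1 : ∑ s, ν s = 1)
    (hso : ∀ s s', ν s ≠ 0 → ν s' ≠ 0 → M.obs s = M.obs s')
    (hwin : ⨆ n, PRf M T ν σ.act n = 1)
    {s0 : S} (hs0 : 0 < ν s0) {a : A} (ha : 0 < σ.act (s0, []) a)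
    {z : Z} {t : S} (ht : t ∈ M.updateF (suppF ν) z a) :
    ⨆ n, PRf M T (dirac t) (shiftAct σ.act a s0) n = 1 := by
  obtain ⟨hobz, s, hsF, hδ⟩ := (mem_updateF M).mp ht
  have hνs : 0 < ν s := (suppF_pos hν0).mp hsF
  by_cases hsT : s ∈ T
  · have hts : t = s := absorb_eq M T habs hsT hδ
    have htT : t ∈ T := hts ▸ hsT
    have hall : ∀ n, PRf M T (dirac t) (shiftAct σ.act a s0) n = 1 :=
      fun n => win_T M T htT _ (σ.isAct.shift a s0) n
    simp only [hall]
    exact ciSup_const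
  · have hobs_ss0 : M.obs s = M.obs s0 := hso s s0 (ne_of_gt hνs) (ne_of_gt hs0)
    have ha' : 0 < σ.act (s, []) a := by rw [act_empty_eq M σ hobs_ss0]; exact ha
    have hw := win_step M T σ ν hν0 hν1 hwin hνs hsT ha' hδ
    rwa [shiftAct_obs_eq M σ hobs_ss0 a] at hw

lemma allow_of_win (habs : M.Absorbing T) (σ : Strategy S A Z M.obs) (ν : S → ℝ)
    (hν0 : ∀ s, 0 ≤ ν s) (hν1 : ∑ s, ν s = 1)
    (hso : ∀ s s', ν s ≠ 0 → ν s' ≠ 0 → M.obs s = M.obs s')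
    (hwin : ⨆ n, PRf M T ν σ.act n = 1)
    {s0 : S} (hs0 : 0 < ν s0) {a : A} (ha : 0 < σ.act (s0, []) a) :
    a ∈ M.AllowSet T (suppF ν) := by
  intro z hzne
  have hobs' : ∀ x ∈ M.updateF (suppF ν) z a, ∀ y ∈ M.updateF (suppF ν) z a,
      M.obs x = M.obs y := by
    intro x hx y hy
    rw [((mem_updateF M).mp hx).1, ((mem_updateF M).mp hy).1]
  refine beliefWin_of M T _ hzne hobs' (M.shiftStrat σ a s0) ?_
  rw [shiftStrat_act]
  refine win_mix M T _ (σ.isAct.shift a s0) _ (uniformS_nonneg _)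
    (uniformS_sum _ hzne) ?_
  intro t htpos
  exact win_dirac_update M T habs σ ν hν0 hν1 hso hwin hs0 ha (uniformS_mem htpos)

lemma exists_pos_act (σ : Strategy S A Z M.obs) (h : Hist S A) :
    ∃ a, 0 < σ.act h a := by
  by_contra hno
  push_neg at hno
  have h0 : ∀ a ∈ Finset.univ, σ.act h a = 0 :=
    fun a _ => le_antisymm (hno a) (σ.act_nonneg h a)
  have := σ.act_sum h
  rw [Finset.sum_eq_zero h0] at this
  norm_num at this

lemma allowFin_nonempty (habs : M.Absorbing T) {U : Finset S}
    (hUW : U ∈ M.BeliefWin T) : (M.allowFin T U).Nonempty := by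
  obtain ⟨hUne, hobs, σ, hwin⟩ := beliefWin_elim M T hUW
  obtain ⟨s0, hs0U⟩ := hUne
  obtain ⟨a, ha⟩ := exists_pos_act M σ (s0, [])
  have hne : U.Nonempty := ⟨s0, hs0U⟩
  have hso : ∀ s s', uniformS U s ≠ 0 → uniformS U s' ≠ 0 → M.obs s = M.obs s' := by
    intro s s' hs hs'
    exact hobs s (uniformS_mem (lt_of_le_of_ne (uniformS_nonneg U s) (Ne.symm hs)))
      s' (uniformS_mem (lt_of_le_of_ne (uniformS_nonneg U s') (Ne.symm hs')))
  have hmem := allow_of_win M T habs σ (uniformS U) (uniformS_nonneg U)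
    (uniformS_sum U hne) hso hwin (uniformS_pos hne hs0U) ha
  rw [suppF_uniformS U hne] at hmem
  exact ⟨a, Finset.mem_filter.mpr ⟨Finset.mem_univ a, hmem⟩⟩

end MTc

end POMDP
namespace POMDP

variable {S A Z : Type} [Fintype S] [Fintype A] [Fintype Z]

lemma normalize_nonneg' {f : S → ℝ} (hf : ∀ s, 0 ≤ f s) (t : S) : 0 ≤ normalize f t :=
  div_nonneg (hf t) (Finset.sum_nonneg fun u _ => hf u)

lemma normalize_sum_one {f : S → ℝ} (h : ∑ u, f u ≠ 0) : ∑ t, normalize f t = 1 := by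
  unfold normalize
  rw [← Finset.sum_div, div_self h]

lemma normalize_of_sum_one {f : S → ℝ} (h : ∑ u, f u = 1) : normalize f = f :=
  funext fun t => by unfold normalize; rw [h, div_one]

lemma normalize_zero_of {f : S → ℝ} (h : ∑ u, f u = 0) : normalize f = fun _ => 0 :=
  funext fun t => by unfold normalize; rw [h, div_zero]

lemma normalize_idem (f : S → ℝ) : normalize (normalize f) = normalize f := by
  by_cases h : ∑ u, f u = 0
  · rw [normalize_zero_of h, normalize_zero_of (show ∑ _u : S, (0:ℝ) = 0 by simp)]
  · exact normalize_of_sum_one (normalize_sum_one h)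

section MTc

variable (M : POMDP S A Z) (T : Set S) (c : S → A → ℝ)

lemma obsProb_apply (ν : S → ℝ) (a : A) (z : Z) :
    M.obsProb ν a z = ∑ u, if M.obs u = z then ∑ v, ν v * M.δ v a u else 0 := rfl

lemma postInfo_apply (ν : S → ℝ) (a : A) (z : Z) (t : S) :
    M.postInfo ν a z t
      = (if M.obs t = z then ∑ v, ν v * M.δ v a t else 0) / M.obsProb ν a z := rfl

lemma postInfo_nonneg (ν : S → ℝ) (hν0 : ∀ s, 0 ≤ ν s) (a : A) (z : Z) (t : S) :
    0 ≤ M.postInfo ν a z t := by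
  rw [postInfo_apply, obsProb_apply]
  have hg : ∀ u, 0 ≤ (if M.obs u = z then ∑ v, ν v * M.δ v a u else 0) := by
    intro u
    split_ifs
    · exact Finset.sum_nonneg fun v _ => mul_nonneg (hν0 v) (M.δ_nonneg v a u)
    · exact le_refl 0
  exact div_nonneg (hg t) (Finset.sum_nonneg fun u _ => hg u)

lemma postInfo_sum_one (ν : S → ℝ) (a : A) (z : Z) (hz : M.obsProb ν a z ≠ 0) :
    ∑ t, M.postInfo ν a z t = 1 := by
  have e : ∀ t, M.postInfo ν a z t
      = (if M.obs t = z then ∑ v, ν v * M.δ v a t else 0) / M.obsProb ν a z :=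
    postInfo_apply M ν a z
  rw [Finset.sum_congr rfl (fun t _ => e t), ← Finset.sum_div, ← obsProb_apply,
    div_self hz]

lemma postInfo_obs (ν : S → ℝ) (a : A) (z : Z) {t : S}
    (h : M.postInfo ν a z t ≠ 0) : M.obs t = z := by
  by_contra hno
  apply h
  rw [postInfo_apply, if_neg hno, zero_div]

lemma suppF_postInfo (ν : S → ℝ) (hν0 : ∀ s, 0 ≤ ν s) (a : A) (z : Z) :
    suppF (M.postInfo ν a z) = M.updateF (suppF ν) z a := by
  ext t
  simp only [suppF, Finset.mem_filter, Finset.mem_univ, true_and]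
  rw [mem_updateF]
  constructor
  · intro hne
    rw [postInfo_apply] at hne
    have hgz : (if M.obs t = z then ∑ v, ν v * M.δ v a t else 0) ≠ 0 := by
      intro h0
      rw [h0, zero_div] at hne
      exact hne rfl
    have hobz : M.obs t = z := by
      by_contra hno
      exact hgz (if_neg hno)
    rw [if_pos hobz] at hgz
    have hex : ∃ u, ν u * M.δ u a t ≠ 0 := by
      by_contra hall
      push_neg at hall
      exact hgz (Finset.sum_eq_zero fun u _ => hall u)
    obtain ⟨u, hu⟩ := hex
    have hνu : ν u ≠ 0 := fun h => hu (by rw [h, zero_mul])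
    have hδu : 0 < M.δ u a t :=
      lt_of_le_of_ne (M.δ_nonneg u a t) (fun h => hu (by rw [← h, mul_zero]))
    exact ⟨hobz, u, by simp [suppF, hνu], hδu⟩
  · rintro ⟨hobz, u, huF, hδu⟩
    have hνu : 0 < ν u := (suppF_pos hν0).mp huF
    have hterm : 0 < ∑ v, ν v * M.δ v a t :=
      Finset.sum_pos' (fun v _ => mul_nonneg (hν0 v) (M.δ_nonneg v a t))
        ⟨u, Finset.mem_univ u, mul_pos hνu hδu⟩
    have hgz : ∀ u', 0 ≤ (if M.obs u' = z then ∑ v, ν v * M.δ v a u' else 0) := by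
      intro u'
      split_ifs
      · exact Finset.sum_nonneg fun v _ => mul_nonneg (hν0 v) (M.δ_nonneg v a u')
      · exact le_refl 0
    have hSig : 0 < ∑ u', (if M.obs u' = z then ∑ v, ν v * M.δ v a u' else 0) :=
      Finset.sum_pos' (fun u' _ => hgz u')
        ⟨t, Finset.mem_univ t, by rw [if_pos hobz]; exact hterm⟩
    rw [postInfo_apply, if_pos hobz, obsProb_apply]
    exact ne_of_gt (div_pos hterm hSig)

lemma win_post (habs : M.Absorbing T) (σ : Strategy S A Z M.obs) (ν : S → ℝ)
    (hν0 : ∀ s, 0 ≤ ν s) (hν1 : ∑ s, ν s = 1)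
    (hso : ∀ s s', ν s ≠ 0 → ν s' ≠ 0 → M.obs s = M.obs s')
    (hwin : ⨆ n, PRf M T ν σ.act n = 1)
    {s0 : S} (hs0 : 0 < ν s0) {a : A} (ha : 0 < σ.act (s0, []) a)
    (z : Z) (hz : M.obsProb ν a z ≠ 0) :
    ⨆ n, PRf M T (M.postInfo ν a z) (shiftAct σ.act a s0) n = 1 := by
  refine win_mix M T _ (σ.isAct.shift a s0) _ (postInfo_nonneg M ν hν0 a z)
    (postInfo_sum_one M ν a z hz) ?_
  intro t htpos
  have htF : t ∈ M.updateF (suppF ν) z a := by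
    rw [← suppF_postInfo M ν hν0 a z]
    exact (suppF_pos (postInfo_nonneg M ν hν0 a z)).mpr htpos
  exact win_dirac_update M T habs σ ν hν0 hν1 hso hwin hs0 ha htF

/-- the information state process with general initial distribution -/
def myInfo (ν : S → ℝ) : S → List (A × S) → S → ℝ
  | s, [] => normalize (fun t => if M.obs t = M.obs s then ν t else 0)
  | s, (a, s') :: r => M.postInfo (myInfo ν s' r) a (M.obs s)

lemma myInfo_nil (ν : S → ℝ) (s : S) :
    M.myInfo ν s [] = normalize (fun t => if M.obs t = M.obs s then ν t else 0) := rfl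

lemma myInfo_cons (ν : S → ℝ) (s : S) (a : A) (s' : S) (r : List (A × S)) :
    M.myInfo ν s ((a, s') :: r) = M.postInfo (M.myInfo ν s' r) a (M.obs s) := rfl

lemma infoOfAux_eq_myInfo : ∀ (l : List (A × S)) (s : S),
    M.infoOfAux s l = M.myInfo M.init s l := by
  intro l
  induction l with
  | nil => intro s; rfl
  | cons p r ih =>
    rcases p with ⟨a, s'⟩
    intro s
    rw [myInfo_cons, ← ih s']
    rfl

lemma myInfo_nil_eq (ν : S → ℝ) (hν1 : ∑ s, ν s = 1)
    (hso : ∀ s s', ν s ≠ 0 → ν s' ≠ 0 → M.obs s = M.obs s')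
    {s0 : S} (hs0 : ν s0 ≠ 0) : M.myInfo ν s0 [] = ν := by
  rw [myInfo_nil]
  have e : (fun t => if M.obs t = M.obs s0 then ν t else 0) = ν := funext fun t => by
    by_cases h : M.obs t = M.obs s0
    · rw [if_pos h]
    · rw [if_neg h]
      rcases eq_or_ne (ν t) 0 with h0 | h0
      · exact h0.symm
      · exact absurd (hso t s0 h0 hs0) h
  rw [e, normalize_of_sum_one hν1]

lemma myInfo_shift (ν : S → ℝ) (a : A) (s0 : S) (z : Z) :
    ∀ (l : List (A × S)) (t : S), M.obs (initSt t l) = z →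
      M.myInfo ν t (l ++ [(a, s0)])
        = M.myInfo (M.postInfo (M.myInfo ν s0 []) a z) t l := by
  intro l
  induction l with
  | nil =>
    intro t hobz
    simp only [initSt_nil] at hobz
    rw [List.nil_append, myInfo_cons, myInfo_nil (ν := M.postInfo (M.myInfo ν s0 []) a z),
      hobz]
    have e : (fun u => if M.obs u = z then M.postInfo (M.myInfo ν s0 []) a z u else 0)
        = M.postInfo (M.myInfo ν s0 []) a z := funext fun u => by
      by_cases h : M.obs u = z
      · rw [if_pos h]
      · rw [if_neg h]
        rcases eq_or_ne (M.postInfo (M.myInfo ν s0 []) a z u) 0 with h0 | h0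
        · exact h0.symm
        · exact absurd (postInfo_obs M _ a z h0) h
    rw [e]
    exact (normalize_idem
      (fun u => if M.obs u = z then ∑ v, (M.myInfo ν s0 []) v * M.δ v a u else 0)).symm
  | cons p r ih =>
    rcases p with ⟨b, u⟩
    intro t hobz
    rw [List.cons_append, myInfo_cons, myInfo_cons, ih u (by simpa using hobz)]

end MTc

end POMDP
namespace POMDP

variable {S A Z : Type} [Fintype S] [Fintype A] [Fintype Z]

section MTc

variable (M : POMDP S A Z) (T : Set S) (c : S → A → ℝ)

lemma obsProb_nonneg (ν : S → ℝ) (hν0 : ∀ s, 0 ≤ ν s) (a : A) (z : Z) :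
    0 ≤ M.obsProb ν a z := by
  rw [obsProb_apply]
  refine Finset.sum_nonneg fun u _ => ?_
  split_ifs
  · exact Finset.sum_nonneg fun v _ => mul_nonneg (hν0 v) (M.δ_nonneg v a u)
  · exact le_refl 0

lemma ETf_zero_meas (act : Hist S A → A → ℝ) (n : ℕ) :
    ETf M c (fun _ => 0) act n = 0 := by
  unfold ETf
  exact Finset.sum_eq_zero fun h _ => by ring

lemma Vstar_zero (b : S → ℝ) : M.Vstar T c 0 b = 0 := rfl

lemma Vstar_succ (n : ℕ) (b : S → ℝ) :
    M.Vstar T c (n+1) b = if h : (M.allowFin T (suppF b)).Nonempty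
      then (M.allowFin T (suppF b)).inf' h
        (fun a => cinfo c b a + ∑ z, M.obsProb b a z * M.Vstar T c n (M.postInfo b a z))
      else 0 := rfl

lemma exists_supp (ν : S → ℝ) (hν1 : ∑ s, ν s = 1) : ∃ s, ν s ≠ 0 := by
  by_contra hall
  push_neg at hall
  rw [Finset.sum_eq_zero (fun s _ => hall s)] at hν1
  norm_num at hν1

lemma Vstar_le_ETf (habs : M.Absorbing T) (hc : ∀ s a, 0 ≤ c s a) :
    ∀ (n : ℕ) (ν : S → ℝ) (σ : Strategy S A Z M.obs),
      (∀ s, 0 ≤ ν s) → (∑ s, ν s = 1) →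
      (∀ s s', ν s ≠ 0 → ν s' ≠ 0 → M.obs s = M.obs s') →
      (⨆ m, PRf M T ν σ.act m = 1) →
      M.Vstar T c n ν ≤ ETf M c ν σ.act n := by
  intro n
  induction n with
  | zero =>
    intro ν σ hν0 hν1 hso hwin
    rw [Vstar_zero]
    exact ETf_nonneg M c ν hν0 σ.act σ.isAct hc 0
  | succ n ih =>
    intro ν σ hν0 hν1 hso hwin
    obtain ⟨s0, hs0ne⟩ := exists_supp ν hν1
    have hs0 : 0 < ν s0 := lt_of_le_of_ne (hν0 s0) (Ne.symm hs0ne)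
    rw [ETf_succ M c ν σ.act σ.isAct n, Finset.sum_comm]
    have hbound : ∀ a, 0 < σ.act (s0, []) a →
        σ.act (s0, []) a * M.Vstar T c (n+1) ν
          ≤ ∑ s, ν s * σ.act (s, []) a *
            (c s a + ∑ t, M.δ s a t * ETf M c (dirac t) (shiftAct σ.act a s) n) := by
      intro a ha
      have e1 : ∀ s, ν s * σ.act (s, []) a *
            (c s a + ∑ t, M.δ s a t * ETf M c (dirac t) (shiftAct σ.act a s) n)
          = σ.act (s0, []) a * (ν s *
            (c s a + ∑ t, M.δ s a t * ETf M c (dirac t) (shiftAct σ.act a s0) n)) := by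
        intro s
        rcases eq_or_ne (ν s) 0 with h0 | h0
        · rw [h0]; ring
        · have hobs := hso s s0 h0 hs0ne
          rw [show σ.act (s, []) = σ.act (s0, []) from act_empty_eq M σ hobs,
            shiftAct_obs_eq M σ hobs a]
          ring
      rw [Finset.sum_congr rfl (fun s _ => e1 s), ← Finset.mul_sum]
      refine mul_le_mul_of_nonneg_left ?_ (le_of_lt ha)
      have esplit : ∑ s, ν s *
            (c s a + ∑ t, M.δ s a t * ETf M c (dirac t) (shiftAct σ.act a s0) n)
          = cinfo c ν a + ∑ t, (∑ s, ν s * M.δ s a t)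
              * ETf M c (dirac t) (shiftAct σ.act a s0) n := by
        have e2 : ∀ s, ν s *
              (c s a + ∑ t, M.δ s a t * ETf M c (dirac t) (shiftAct σ.act a s0) n)
            = ν s * c s a + ∑ t, ν s * M.δ s a t
                * ETf M c (dirac t) (shiftAct σ.act a s0) n := by
          intro s
          rw [mul_add, Finset.mul_sum]
          congr 1
          exact Finset.sum_congr rfl fun t _ => by ring
        rw [Finset.sum_congr rfl (fun s _ => e2 s), Finset.sum_add_distrib]
        congr 1
        rw [Finset.sum_comm]
        exact Finset.sum_congr rfl fun t _ => by rw [Finset.sum_mul]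
      have egroup : ∑ t, (∑ s, ν s * M.δ s a t)
            * ETf M c (dirac t) (shiftAct σ.act a s0) n
          = ∑ z, ∑ t, (if M.obs t = z then (∑ s, ν s * M.δ s a t)
              * ETf M c (dirac t) (shiftAct σ.act a s0) n else 0) := by
        rw [Finset.sum_comm]
        refine Finset.sum_congr rfl fun t _ => ?_
        rw [Finset.sum_ite_eq]
        simp
      have einner : ∀ z, ∑ t, (if M.obs t = z then (∑ s, ν s * M.δ s a t)
              * ETf M c (dirac t) (shiftAct σ.act a s0) n else 0)
          = ETf M c (fun t => if M.obs t = z then ∑ s, ν s * M.δ s a t else 0)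
              (shiftAct σ.act a s0) n := by
        intro z
        rw [ETf_linear M c _ _ n]
        refine Finset.sum_congr rfl fun t _ => ?_
        split_ifs with h
        · rfl
        · rw [zero_mul]
      have ege : ∀ z, M.obsProb ν a z * M.Vstar T c n (M.postInfo ν a z)
          ≤ ETf M c (fun t => if M.obs t = z then ∑ s, ν s * M.δ s a t else 0)
              (shiftAct σ.act a s0) n := by
        intro z
        rcases eq_or_ne (M.obsProb ν a z) 0 with hz | hz
        · have hgz0 : (fun t => if M.obs t = z then ∑ s, ν s * M.δ s a t else 0)
              = fun _ => (0:ℝ) := by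
            funext t
            have hnn : ∀ u ∈ Finset.univ,
                0 ≤ (if M.obs u = z then ∑ v, ν v * M.δ v a u else 0) := by
              intro u _
              split_ifs
              · exact Finset.sum_nonneg fun v _ => mul_nonneg (hν0 v) (M.δ_nonneg v a u)
              · exact le_refl 0
            have := (Finset.sum_eq_zero_iff_of_nonneg hnn).mp
              (by rw [← obsProb_apply]; exact hz) t (Finset.mem_univ t)
            exact this
          rw [hgz0, ETf_zero_meas, hz, zero_mul]
        · have hgz_eq : (fun t => if M.obs t = z then ∑ s, ν s * M.δ s a t else 0)
              = fun t => M.obsProb ν a z * M.postInfo ν a z t := by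
            funext t
            rw [postInfo_apply]
            by_cases h : M.obs t = z
            · rw [if_pos h, mul_comm, div_mul_cancel₀ _ hz]
            · rw [if_neg h, zero_div, mul_zero]
          rw [hgz_eq, ETf_smul]
          refine mul_le_mul_of_nonneg_left ?_ (obsProb_nonneg M ν hν0 a z)
          exact ih (M.postInfo ν a z) (M.shiftStrat σ a s0)
            (postInfo_nonneg M ν hν0 a z) (postInfo_sum_one M ν a z hz)
            (fun s s' h h' => by
              rw [postInfo_obs M ν a z h, postInfo_obs M ν a z h'])
            (win_post M T habs σ ν hν0 hν1 hso hwin hs0 ha z hz)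
      have hallow : a ∈ M.allowFin T (suppF ν) := Finset.mem_filter.mpr
        ⟨Finset.mem_univ a, allow_of_win M T habs σ ν hν0 hν1 hso hwin hs0 ha⟩
      have hVle : M.Vstar T c (n+1) ν ≤ cinfo c ν a
          + ∑ z, M.obsProb ν a z * M.Vstar T c n (M.postInfo ν a z) := by
        rw [Vstar_succ, dif_pos ⟨a, hallow⟩]
        exact Finset.inf'_le _ hallow
      calc M.Vstar T c (n+1) ν
          ≤ cinfo c ν a + ∑ z, M.obsProb ν a z * M.Vstar T c n (M.postInfo ν a z) :=
            hVle
        _ ≤ cinfo c ν a + ∑ z, ETf M c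
              (fun t => if M.obs t = z then ∑ s, ν s * M.δ s a t else 0)
              (shiftAct σ.act a s0) n :=
            add_le_add le_rfl (Finset.sum_le_sum fun z _ => ege z)
        _ = ∑ s, ν s *
              (c s a + ∑ t, M.δ s a t * ETf M c (dirac t) (shiftAct σ.act a s0) n) := by
            rw [esplit, egroup, Finset.sum_congr rfl (fun z _ => einner z)]
    have houter : ∀ a, σ.act (s0, []) a * M.Vstar T c (n+1) ν
        ≤ ∑ s, ν s * σ.act (s, []) a *
          (c s a + ∑ t, M.δ s a t * ETf M c (dirac t) (shiftAct σ.act a s) n) := by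
      intro a
      rcases (σ.act_nonneg (s0, []) a).lt_or_eq with ha | ha
      · exact hbound a ha
      · rw [← ha, zero_mul]
        refine Finset.sum_nonneg fun s _ => ?_
        refine mul_nonneg (mul_nonneg (hν0 s) (σ.act_nonneg _ _)) ?_
        refine add_nonneg (hc s a) (Finset.sum_nonneg fun t _ => ?_)
        exact mul_nonneg (M.δ_nonneg s a t)
          (ETf_nonneg M c (dirac t) (dirac_nonneg t) _ (σ.isAct.shift a s) hc n)
    calc M.Vstar T c (n+1) ν
        = ∑ a, σ.act (s0, []) a * M.Vstar T c (n+1) ν := by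
          rw [← Finset.sum_mul, σ.act_sum, one_mul]
      _ ≤ ∑ a, ∑ s, ν s * σ.act (s, []) a *
            (c s a + ∑ t, M.δ s a t * ETf M c (dirac t) (shiftAct σ.act a s) n) :=
          Finset.sum_le_sum fun a _ => houter a

end MTc

end POMDP
namespace POMDP

variable {S A Z : Type} [Fintype S] [Fintype A] [Fintype Z]

section MTc

variable (M : POMDP S A Z) (T : Set S) (c : S → A → ℝ)

lemma ETf_horizon_zero (ν : S → ℝ) (act : Hist S A → A → ℝ) :
    ETf M c ν act 0 = 0 := by
  unfold ETf
  rw [sum_Hset_zero]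
  refine Finset.sum_eq_zero fun s _ => ?_
  show ν _ * _ * totalCostH c (s, []) = 0
  rw [show totalCostH c ((s, []) : Hist S A) = 0 from rfl]
  ring

lemma ETf_congOn (t : S) (act₁ act₂ : Hist S A → A → ℝ)
    (hagree : ∀ h : Hist S A, initSt h.1 h.2 = t → act₁ h = act₂ h) (n : ℕ) :
    ETf M c (dirac t) act₁ n = ETf M c (dirac t) act₂ n := by
  unfold ETf
  refine Finset.sum_congr rfl fun h _ => ?_
  rcases eq_or_ne (initSt h.1 h.2) t with he | he
  · rw [kern_congOn M.δ act₁ act₂ t hagree n h.1 h.2 he]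
  · rw [show dirac t (initSt h.1 h.2) = 0 from by unfold dirac; rw [if_neg he]]
    ring

variable [Nonempty A]

/-- the action kernel of the finite-horizon optimal strategy, tracking
information states from the initial distribution `ν` -/
def stAct (ν : S → ℝ) (n : ℕ) : Hist S A → A → ℝ :=
  fun h b => if b = M.foAct T c (n - h.2.length) (M.myInfo ν h.1 h.2) then 1 else 0

lemma stAct_isAct (ν : S → ℝ) (n : ℕ) : IsAct (stAct M T c ν n) := by
  constructor
  · intro h b
    unfold stAct
    split_ifs <;> norm_num
  · intro h
    unfold stAct
    rw [Finset.sum_ite_eq']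
    simp

lemma foAct_succ (n : ℕ) (b : S → ℝ) :
    M.foAct T c (n+1) b = if h : (M.allowFin T (suppF b)).Nonempty
      then Classical.choose (Finset.exists_mem_eq_inf' h
        (fun a => cinfo c b a + ∑ z, M.obsProb b a z * M.Vstar T c n (M.postInfo b a z)))
      else Classical.arbitrary A := rfl

lemma ETf_stAct_le_Vstar (habs : M.Absorbing T) (hc : ∀ s a, 0 ≤ c s a) :
    ∀ (n : ℕ) (ν : S → ℝ),
      (∀ s, 0 ≤ ν s) → (∑ s, ν s = 1) →
      (∀ s s', ν s ≠ 0 → ν s' ≠ 0 → M.obs s = M.obs s') →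
      suppF ν ∈ M.BeliefWin T →
      ETf M c ν (stAct M T c ν n) n ≤ M.Vstar T c n ν := by
  intro n
  induction n with
  | zero =>
    intro ν σ hν0 hν1 hso
    rw [ETf_horizon_zero, Vstar_zero]
  | succ n ih =>
    intro ν hν0 hν1 hso hWin
    have hne : (M.allowFin T (suppF ν)).Nonempty := allowFin_nonempty M T habs hWin
    set aStar := M.foAct T c (n+1) ν with haS
    have hspec := Classical.choose_spec (Finset.exists_mem_eq_inf' hne
      (fun a => cinfo c ν a + ∑ z, M.obsProb ν a z * M.Vstar T c n (M.postInfo ν a z)))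
    have haS_eq : aStar = Classical.choose (Finset.exists_mem_eq_inf' hne
        (fun a => cinfo c ν a + ∑ z, M.obsProb ν a z
          * M.Vstar T c n (M.postInfo ν a z))) := by
      rw [haS, foAct_succ, dif_pos hne]
    have haS_mem : aStar ∈ M.allowFin T (suppF ν) := by rw [haS_eq]; exact hspec.1
    have hAllow : aStar ∈ M.AllowSet T (suppF ν) := (Finset.mem_filter.mp haS_mem).2
    have hval : M.Vstar T c (n+1) ν = cinfo c ν aStar
        + ∑ z, M.obsProb ν aStar z * M.Vstar T c n (M.postInfo ν aStar z) := by
      rw [Vstar_succ, dif_pos hne, haS_eq]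
      exact hspec.2
    rw [ETf_succ M c ν (stAct M T c ν (n+1)) (stAct_isAct M T c ν (n+1)) n]
    have e1 : ∀ s, ∑ a, ν s * stAct M T c ν (n+1) (s, []) a *
          (c s a + ∑ t, M.δ s a t
            * ETf M c (dirac t) (shiftAct (stAct M T c ν (n+1)) a s) n)
        = ν s * (c s aStar + ∑ t, M.δ s aStar t
            * ETf M c (dirac t) (shiftAct (stAct M T c ν (n+1)) aStar s) n) := by
      intro s
      rcases eq_or_ne (ν s) 0 with h0 | h0
      · rw [h0]
        simp
      · have hact_s : ∀ a, stAct M T c ν (n+1) (s, []) a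
            = if a = aStar then 1 else 0 := by
          intro a
          unfold stAct
          rw [show ((s, []) : Hist S A).2.length = 0 from rfl, Nat.sub_zero,
            myInfo_nil_eq M ν hν1 hso h0]
        have e2 : ∀ a, ν s * stAct M T c ν (n+1) (s, []) a *
              (c s a + ∑ t, M.δ s a t
                * ETf M c (dirac t) (shiftAct (stAct M T c ν (n+1)) a s) n)
            = if a = aStar then ν s * (c s a + ∑ t, M.δ s a t
                * ETf M c (dirac t) (shiftAct (stAct M T c ν (n+1)) a s) n) else 0 := by
          intro a
          rw [hact_s a]
          split_ifs <;> ring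
        rw [Finset.sum_congr rfl (fun a _ => e2 a), Finset.sum_ite_eq']
        simp
    rw [Finset.sum_congr rfl (fun s _ => e1 s)]
    have eShift : ∀ s, ν s ≠ 0 → ∀ t : S,
        ETf M c (dirac t) (shiftAct (stAct M T c ν (n+1)) aStar s) n
          = ETf M c (dirac t) (stAct M T c (M.postInfo ν aStar (M.obs t)) n) n := by
      intro s hs t
      refine ETf_congOn M c t _ _ ?_ n
      intro h hin
      funext b
      show stAct M T c ν (n+1) (h.1, h.2 ++ [(aStar, s)]) b = _
      unfold stAct
      have hlen : (n+1) - (h.2 ++ [(aStar, s)]).length = n - h.2.length := by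
        simp only [List.length_append, List.length_singleton]
        omega
      have hinfo : M.myInfo ν h.1 (h.2 ++ [(aStar, s)])
          = M.myInfo (M.postInfo ν aStar (M.obs t)) h.1 h.2 := by
        have hsh := myInfo_shift M ν aStar s (M.obs t) h.2 h.1 (by rw [hin])
        rw [myInfo_nil_eq M ν hν1 hso hs] at hsh
        exact hsh
      rw [hlen, hinfo]
    have e3 : ∀ s, ν s * (c s aStar + ∑ t, M.δ s aStar t
          * ETf M c (dirac t) (shiftAct (stAct M T c ν (n+1)) aStar s) n)
        = ν s * (c s aStar + ∑ t, M.δ s aStar t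
          * ETf M c (dirac t) (stAct M T c (M.postInfo ν aStar (M.obs t)) n) n) := by
      intro s
      rcases eq_or_ne (ν s) 0 with h0 | h0
      · rw [h0, zero_mul, zero_mul]
      · rw [Finset.sum_congr rfl (fun t _ => by rw [eShift s h0 t])]
    rw [Finset.sum_congr rfl (fun s _ => e3 s)]
    have esplit : ∑ s, ν s * (c s aStar + ∑ t, M.δ s aStar t
          * ETf M c (dirac t) (stAct M T c (M.postInfo ν aStar (M.obs t)) n) n)
        = cinfo c ν aStar + ∑ t, (∑ s, ν s * M.δ s aStar t)
            * ETf M c (dirac t) (stAct M T c (M.postInfo ν aStar (M.obs t)) n) n := by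
      have e2 : ∀ s, ν s * (c s aStar + ∑ t, M.δ s aStar t
            * ETf M c (dirac t) (stAct M T c (M.postInfo ν aStar (M.obs t)) n) n)
          = ν s * c s aStar + ∑ t, ν s * M.δ s aStar t
              * ETf M c (dirac t) (stAct M T c (M.postInfo ν aStar (M.obs t)) n) n := by
        intro s
        rw [mul_add, Finset.mul_sum]
        congr 1
        exact Finset.sum_congr rfl fun t _ => by ring
      rw [Finset.sum_congr rfl (fun s _ => e2 s), Finset.sum_add_distrib]
      congr 1
      rw [Finset.sum_comm]
      exact Finset.sum_congr rfl fun t _ => by rw [Finset.sum_mul]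
    rw [esplit]
    have egroup : ∑ t, (∑ s, ν s * M.δ s aStar t)
          * ETf M c (dirac t) (stAct M T c (M.postInfo ν aStar (M.obs t)) n) n
        = ∑ z, ∑ t, (if M.obs t = z then (∑ s, ν s * M.δ s aStar t)
            * ETf M c (dirac t) (stAct M T c (M.postInfo ν aStar z) n) n else 0) := by
      rw [Finset.sum_comm]
      refine Finset.sum_congr rfl fun t _ => ?_
      have e4 : ∀ z, (if M.obs t = z then (∑ s, ν s * M.δ s aStar t)
            * ETf M c (dirac t) (stAct M T c (M.postInfo ν aStar z) n) n else 0)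
          = (if M.obs t = z then (∑ s, ν s * M.δ s aStar t)
            * ETf M c (dirac t) (stAct M T c (M.postInfo ν aStar (M.obs t)) n) n
            else 0) := by
        intro z
        by_cases h : M.obs t = z
        · rw [if_pos h, if_pos h, h]
        · rw [if_neg h, if_neg h]
      rw [Finset.sum_congr rfl (fun z _ => e4 z), Finset.sum_ite_eq]
      simp
    rw [egroup]
    have einner : ∀ z, ∑ t, (if M.obs t = z then (∑ s, ν s * M.δ s aStar t)
          * ETf M c (dirac t) (stAct M T c (M.postInfo ν aStar z) n) n else 0)
        = ETf M c (fun t => if M.obs t = z then ∑ s, ν s * M.δ s aStar t else 0)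
            (stAct M T c (M.postInfo ν aStar z) n) n := by
      intro z
      rw [ETf_linear M c _ _ n]
      refine Finset.sum_congr rfl fun t _ => ?_
      split_ifs with h
      · rfl
      · rw [zero_mul]
    rw [Finset.sum_congr rfl (fun z _ => einner z), hval]
    refine add_le_add le_rfl (Finset.sum_le_sum fun z _ => ?_)
    rcases eq_or_ne (M.obsProb ν aStar z) 0 with hz | hz
    · have hgz0 : (fun t => if M.obs t = z then ∑ s, ν s * M.δ s aStar t else 0)
          = fun _ => (0:ℝ) := by
        funext t
        have hnn : ∀ u ∈ Finset.univ,
            0 ≤ (if M.obs u = z then ∑ v, ν v * M.δ v aStar u else 0) := by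
          intro u _
          split_ifs
          · exact Finset.sum_nonneg fun v _ => mul_nonneg (hν0 v) (M.δ_nonneg v aStar u)
          · exact le_refl 0
        exact (Finset.sum_eq_zero_iff_of_nonneg hnn).mp
          (by rw [← obsProb_apply]; exact hz) t (Finset.mem_univ t)
      rw [hgz0, ETf_zero_meas, hz, zero_mul]
    · have hgz_eq : (fun t => if M.obs t = z then ∑ s, ν s * M.δ s aStar t else 0)
          = fun t => M.obsProb ν aStar z * M.postInfo ν aStar z t := by
        funext t
        rw [postInfo_apply]
        by_cases h : M.obs t = z
        · rw [if_pos h, mul_comm, div_mul_cancel₀ _ hz]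
        · rw [if_neg h, zero_div, mul_zero]
      rw [hgz_eq, ETf_smul]
      refine mul_le_mul_of_nonneg_left ?_ (obsProb_nonneg M ν hν0 aStar z)
      -- IH: need supp of postInfo winning
      have hsupp : suppF (M.postInfo ν aStar z) ∈ M.BeliefWin T := by
        rw [suppF_postInfo M ν hν0 aStar z]
        refine hAllow z ?_
        obtain ⟨t0, ht0⟩ := exists_supp (M.postInfo ν aStar z)
          (postInfo_sum_one M ν aStar z hz)
        rw [← suppF_postInfo M ν hν0 aStar z]
        exact ⟨t0, by simp [suppF, ht0]⟩
      exact ih (M.postInfo ν aStar z) (postInfo_nonneg M ν hν0 aStar z)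
        (postInfo_sum_one M ν aStar z hz)
        (fun s s' h h' => by rw [postInfo_obs M ν aStar z h, postInfo_obs M ν aStar z h'])
        hsupp

end MTc

end POMDP
namespace POMDP

variable {S A Z : Type} [Fintype S] [Fintype A] [Fintype Z]

section MTc

variable (M : POMDP S A Z) (T : Set S) (c : S → A → ℝ)

lemma PRf_congLt (ν : S → ℝ) (act₁ act₂ : Hist S A → A → ℝ) (n : ℕ)
    (hag : ∀ h : Hist S A, h.2.length < n → act₁ h = act₂ h) :
    PRf M T ν act₁ n = PRf M T ν act₂ n := by
  unfold PRf
  refine Finset.sum_congr rfl fun h _ => ?_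
  rw [kern_congLt M.δ act₁ act₂ n hag n (le_refl n) h.1 h.2]

lemma ETf_congLt (ν : S → ℝ) (act₁ act₂ : Hist S A → A → ℝ) (n : ℕ)
    (hag : ∀ h : Hist S A, h.2.length < n → act₁ h = act₂ h) :
    ETf M c ν act₁ n = ETf M c ν act₂ n := by
  unfold ETf
  refine Finset.sum_congr rfl fun h _ => ?_
  rw [kern_congLt M.δ act₁ act₂ n hag n (le_refl n) h.1 h.2]

variable [Nonempty A]

lemma stratStar_act_eq (k : ℕ) : ∀ h : Hist S A, h.2.length < k →
    (M.stratStar T c k).act h = stAct M T c M.init k h := by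
  intro h hlen
  show (if h.2.length < k then M.actFO T c k h else M.actAllowFrom T M.suppInitF h) = _
  rw [if_pos hlen]
  funext b
  show (if b = M.foAct T c (k - h.2.length) (M.infoOf h) then (1:ℝ) else 0) = _
  unfold stAct
  rw [show M.infoOf h = M.myInfo M.init h.1 h.2 from infoOfAux_eq_myInfo M h.2 h.1]

end MTc

end POMDP
/-- For `k ≥ 1`, `α_k ≤ optCost / k`. -/
theorem alphaK_le_optCost_div
    {S A Z : Type} [Fintype S] [Fintype A] [Fintype Z] [Nonempty A]
    (M : POMDP S A Z) (T : Set S) (c : S → A → ℝ)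
    (habs : M.Absorbing T)
    (hc0 : ∀ t ∈ T, ∀ a, c t a = 0)
    (hc1 : ∀ s ∉ T, ∀ a, 1 ≤ c s a)
    (hinit : M.suppInitF ∈ M.BeliefWin T)
    (k : ℕ) (hk : 1 ≤ k) :
    ((M.alphaK T c k : ℝ) : EReal) ≤ M.optCost T c / ((k : ℕ) : EReal) := by
  classical
  have hc : ∀ s a, 0 ≤ c s a := by
    intro s a
    by_cases hs : s ∈ T
    · rw [hc0 s hs a]
    · linarith [hc1 s hs a]
  have hν0 : ∀ s, 0 ≤ M.init s := M.init_nonneg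
  have hν1 : ∑ s, M.init s = 1 := M.init_sum
  have hso : ∀ s s', M.init s ≠ 0 → M.init s' ≠ 0 → M.obs s = M.obs s' := fun s s' h h' =>
    M.init_obs s s' (lt_of_le_of_ne (hν0 s) (Ne.symm h))
      (lt_of_le_of_ne (hν0 s') (Ne.symm h'))
  have hsupp_eq : POMDP.suppF M.init = M.suppInitF := by
    ext s
    simp only [POMDP.suppF, POMDP.suppInitF, Finset.mem_filter, Finset.mem_univ, true_and]
    exact ⟨fun h => lt_of_le_of_ne (hν0 s) (Ne.symm h), fun h => ne_of_gt h⟩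
  have hWin : POMDP.suppF M.init ∈ M.BeliefWin T := by rw [hsupp_eq]; exact hinit
  have halpha : M.alphaK T c k
      = 1 - POMDP.PRf M T M.init (M.stratStar T c k).act k := by
    unfold POMDP.alphaK
    rw [POMDP.probReachBy_eq_PRf M T M rfl (M.stratStar T c k) k]
  have h1 : (k : ℝ) * M.alphaK T c k
      ≤ POMDP.ETf M c M.init (M.stratStar T c k).act k := by
    rw [halpha]
    exact POMDP.ETf_ge_n_mul M T c M.init hν0 hν1 _ (M.stratStar T c k).isAct hc hc1 k
  have h2 : POMDP.ETf M c M.init (M.stratStar T c k).act k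
      = POMDP.ETf M c M.init (POMDP.stAct M T c M.init k) k :=
    POMDP.ETf_congLt M c M.init _ _ k (POMDP.stratStar_act_eq M T c k)
  have h3 : POMDP.ETf M c M.init (POMDP.stAct M T c M.init k) k ≤ M.Vstar T c k M.init :=
    POMDP.ETf_stAct_le_Vstar M T c habs hc k M.init hν0 hν1 hso hWin
  have hmain : ∀ σ : {σ : Strategy S A Z M.obs // M.AlmostSure T σ},
      (((k : ℝ) * M.alphaK T c k : ℝ) : EReal) ≤ M.Val c σ.1 := by
    rintro ⟨σ, hAS⟩
    have hwin : ⨆ n, POMDP.PRf M T M.init σ.act n = 1 := by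
      have hAS' := hAS
      unfold POMDP.AlmostSure at hAS'
      rw [POMDP.probReach_eq_iSup_PRf M T M rfl σ] at hAS'
      exact hAS'
    have h4 : M.Vstar T c k M.init ≤ POMDP.ETf M c M.init σ.act k :=
      POMDP.Vstar_le_ETf M T c habs hc k M.init σ hν0 hν1 hso hwin
    have h5 : ∀ n, k ≤ n →
        POMDP.ETf M c M.init σ.act k ≤ POMDP.ETf M c M.init σ.act n := by
      intro n hkn
      obtain ⟨m, rfl⟩ := Nat.exists_eq_add_of_le hkn
      clear hkn
      induction m with
      | zero => exact le_refl _
      | succ m ihm =>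
        exact le_trans ihm (POMDP.ETf_mono M c M.init hν0 σ.act σ.isAct hc (k + m))
    have h6 : ((POMDP.ETf M c M.init σ.act k : ℝ) : EReal) ≤ M.Val c σ := by
      unfold POMDP.Val
      refine Filter.le_limsup_of_frequently_le' ?_
      have hev : ∀ᶠ n in Filter.atTop, ((POMDP.ETf M c M.init σ.act k : ℝ) : EReal)
          ≤ ((M.expTotalSteps c σ n : ℝ) : EReal) := by
        refine Filter.eventually_atTop.mpr ⟨k, fun n hn => ?_⟩
        rw [POMDP.expTotalSteps_eq_ETf M c M rfl σ n]
        exact EReal.coe_le_coe_iff.mpr (h5 n hn)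
      exact hev.frequently
    refine le_trans ?_ h6
    refine EReal.coe_le_coe_iff.mpr ?_
    rw [h2] at h1
    linarith [h1, h3, h4]
  have h7 : (((k : ℝ) * M.alphaK T c k : ℝ) : EReal) ≤ M.optCost T c := le_iInf hmain
  have hcast : ((k : ℕ) : EReal) = (((k : ℝ)) : EReal) := by norm_cast
  have hkpos : (0 : EReal) < ((k : ℕ) : EReal) := by
    rw [hcast]
    exact_mod_cast (by exact_mod_cast hk : (0:ℝ) < (k:ℝ))
  have hktop : ((k : ℕ) : EReal) ≠ ⊤ := by
    rw [hcast]
    exact EReal.coe_ne_top _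
  rw [EReal.le_div_iff_mul_le hkpos hktop]
  calc ((M.alphaK T c k : ℝ) : EReal) * ((k : ℕ) : EReal)
      = (((k : ℝ) * M.alphaK T c k : ℝ) : EReal) := by
        rw [hcast, ← EReal.coe_mul, mul_comm]
    _ ≤ M.optCost T c := h7
end
end
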